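/- arXiv:0906.5052 — 15 statements merged into one kernel-verified Lean document; each statement's English description precedes it below -/
import Mathlib

section
/- Every Kähler-type curvature-like tensor on an almost hypercomplex NH vector space is identically zero. That is, if R is a curvature-like tensor on V satisfying R(x,y,z,w) = ε_α·R(x,y,J_α z, J_α w) = ε_α·R(J_α x, J_α y, z, w) for all x,y,z,w ∈ V and each α ∈ {1,2,3}, then R = 0. -/
/-- Auxiliary: for an anti-Hermitian-type structure `J` (ε = -1), a Kähler-type
curvature tensor satisfies `R (J x) y (J z) w = - R x y z w`. -/
lemma aux_key {V : Type} [AddCommGroup V] [Module ℝ V]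
    (R : V →ₗ[ℝ] V →ₗ[ℝ] V →ₗ[ℝ] V →ₗ[ℝ] ℝ)
    (hRbianchi : ∀ x y z w, R x y z w + R y z x w + R z x y w = 0)
    (J : V →ₗ[ℝ] V) (hJ : ∀ x, J (J x) = -x)
    (hz : ∀ x y z w, R x y z w = -R x y (J z) (J w))
    (hx : ∀ x y z w, R x y z w = -R (J x) (J y) z w) :
    ∀ x y z w, R (J x) y (J z) w = -R x y z w := by
  -- move J between the first two slots
  have f1 : ∀ a b z w, R (J a) b z w = R a (J b) z w := by
    intro a b z w
    have h := hx a (J b) z w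
    rw [hJ b] at h
    simp only [map_neg, LinearMap.neg_apply] at h
    linarith
  -- the key cyclic relation
  have I : ∀ x y z w,
      R (J x) y (J z) w + R (J y) z (J x) w + R x y z w + R y z x w = 0 := by
    intro x y z w
    have hb := hRbianchi (J x) y (J z) w
    have e2 : R (J y) z (J x) w = R y (J z) (J x) w := f1 y z (J x) w
    have e3 : R (J z) (J x) y w = -R z x y w := by
      have := hx z x y w; linarith
    have hb2 := hRbianchi x y z w
    linarith
  intro x y z w
  have I1 := I x y z w
  have I2 := I y z x w
  have I3 := I z x y w
  have hb := hRbianchi x y z w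
  linarith

theorem stmt0
    (n : ℕ) (hn : 1 ≤ n)
    (V : Type) [AddCommGroup V] [Module ℝ V] [FiniteDimensional ℝ V]
    (hdim : Module.finrank ℝ V = 4 * n)
    (J1 J2 J3 : V →ₗ[ℝ] V)
    (hJ1 : ∀ x, J1 (J1 x) = -x) (hJ2 : ∀ x, J2 (J2 x) = -x) (hJ3 : ∀ x, J3 (J3 x) = -x)
    (h123 : ∀ x, J1 x = J2 (J3 x)) (h132 : ∀ x, J1 x = -J3 (J2 x))
    (h231 : ∀ x, J2 x = J3 (J1 x)) (h213 : ∀ x, J2 x = -J1 (J3 x))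
    (h312 : ∀ x, J3 x = J1 (J2 x)) (h321 : ∀ x, J3 x = -J2 (J1 x))
    (g : V →ₗ[ℝ] V →ₗ[ℝ] ℝ)
    (hgsymm : ∀ x y, g x y = g y x)
    (hgnd : ∀ x, (∀ y, g x y = 0) → x = 0)
    (hgJ1 : ∀ x y, g (J1 x) (J1 y) = g x y)
    (hgJ2 : ∀ x y, g (J2 x) (J2 y) = -g x y)
    (hgJ3 : ∀ x y, g (J3 x) (J3 y) = -g x y)
    (R : V →ₗ[ℝ] V →ₗ[ℝ] V →ₗ[ℝ] V →ₗ[ℝ] ℝ)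
    (hRa : ∀ x y z w, R x y z w = -R y x z w)
    (hRb : ∀ x y z w, R x y z w = -R x y w z)
    (hRp : ∀ x y z w, R x y z w = R z w x y)
    (hRbianchi : ∀ x y z w, R x y z w + R y z x w + R z x y w = 0)
    (hK1z : ∀ x y z w, R x y z w = R x y (J1 z) (J1 w))
    (hK1x : ∀ x y z w, R x y z w = R (J1 x) (J1 y) z w)
    (hK2z : ∀ x y z w, R x y z w = -R x y (J2 z) (J2 w))
    (hK2x : ∀ x y z w, R x y z w = -R (J2 x) (J2 y) z w)
    (hK3z : ∀ x y z w, R x y z w = -R x y (J3 z) (J3 w))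
    (hK3x : ∀ x y z w, R x y z w = -R (J3 x) (J3 y) z w) :
    ∀ x y z w, R x y z w = 0 := by
  have key2 := aux_key R hRbianchi J2 hJ2 hK2z hK2x
  have key3 := aux_key R hRbianchi J3 hJ3 hK3z hK3x
  -- R (J1 x) y (J1 z) w = R x y z w
  have star1 : ∀ x y z w, R (J1 x) y (J1 z) w = R x y z w := by
    intro x y z w
    rw [h132 x, h132 z]
    simp only [map_neg, LinearMap.neg_apply, neg_neg]
    have h3 := key3 (J2 x) y (J2 z) w
    have h2 := key2 x y z w
    have h4 : R (-J3 (J2 x)) y (J3 (J2 z)) w = -R (J3 (J2 x)) y (J3 (J2 z)) w := by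
      have h5 := map_add R (-J3 (J2 x)) (J3 (J2 x))
      rw [neg_add_cancel, map_zero] at h5
      have h6 := congrArg (fun f => f y (J3 (J2 z)) w) h5
      simp only [LinearMap.add_apply, LinearMap.zero_apply] at h6
      linarith
    linarith
  -- move J1 between the first two slots (with a sign)
  have f1 : ∀ a b z w, R (J1 a) b z w = -R a (J1 b) z w := by
    intro a b z w
    have h := hK1x a (J1 b) z w
    rw [hJ1 b] at h
    simp only [map_neg, LinearMap.neg_apply] at h
    linarith
  have main : ∀ x y z w, R y z x w = 0 := by
    intro x y z w
    have hb := hRbianchi (J1 x) y (J1 z) w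
    have e1 := star1 x y z w
    have e2 : R y (J1 z) (J1 x) w = -R y z x w := by
      have h := f1 y z (J1 x) w
      have h2 := star1 y z x w
      linarith
    have e3 : R (J1 z) (J1 x) y w = R z x y w := (hK1x z x y w).symm
    have hb2 := hRbianchi x y z w
    linarith
  intro x y z w
  exact main z x y w
end

section
/- Suppose R : V×V×V×V → ℝ is multilinear and antisymmetric in its last two arguments, and η₁, η₂, η₃ are bilinear forms on V such that for each cyclic permutation (α,β,γ) of (1,2,3) and all x,y,z,w ∈ V: R(x,y,z,w) − ε_α·R(x,y,J_α z, J_α w) = η_β(x,y)·g(J_β z, w) + η_γ(x,y)·g(J_γ z, w). Then η₂ = 0 and η₃ = 0. -/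
theorem stmt1
    (n : ℕ) (hn : 1 ≤ n)
    (V : Type) [AddCommGroup V] [Module ℝ V] [FiniteDimensional ℝ V]
    (hdim : Module.finrank ℝ V = 4 * n)
    (J1 J2 J3 : V →ₗ[ℝ] V)
    (hJ1 : ∀ x, J1 (J1 x) = -x) (hJ2 : ∀ x, J2 (J2 x) = -x) (hJ3 : ∀ x, J3 (J3 x) = -x)
    (h123 : ∀ x, J1 x = J2 (J3 x)) (h132 : ∀ x, J1 x = -J3 (J2 x))
    (h231 : ∀ x, J2 x = J3 (J1 x)) (h213 : ∀ x, J2 x = -J1 (J3 x))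
    (h312 : ∀ x, J3 x = J1 (J2 x)) (h321 : ∀ x, J3 x = -J2 (J1 x))
    (g : V →ₗ[ℝ] V →ₗ[ℝ] ℝ)
    (hgsymm : ∀ x y, g x y = g y x)
    (hgnd : ∀ x, (∀ y, g x y = 0) → x = 0)
    (hgJ1 : ∀ x y, g (J1 x) (J1 y) = g x y)
    (hgJ2 : ∀ x y, g (J2 x) (J2 y) = -g x y)
    (hgJ3 : ∀ x y, g (J3 x) (J3 y) = -g x y)
    (R : V →ₗ[ℝ] V →ₗ[ℝ] V →ₗ[ℝ] V →ₗ[ℝ] ℝ)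
    (hRb : ∀ x y z w, R x y z w = -R x y w z)
    (η1 η2 η3 : V →ₗ[ℝ] V →ₗ[ℝ] ℝ)
    (hc1 : ∀ x y z w, R x y z w - R x y (J1 z) (J1 w) = η2 x y * g (J2 z) w + η3 x y * g (J3 z) w)
    (hc2 : ∀ x y z w, R x y z w + R x y (J2 z) (J2 w) = η3 x y * g (J3 z) w + η1 x y * g (J1 z) w)
    (hc3 : ∀ x y z w, R x y z w + R x y (J3 z) (J3 w) = η1 x y * g (J1 z) w + η2 x y * g (J2 z) w) :
    (∀ x y, η2 x y = 0) ∧ (∀ x y, η3 x y = 0) := by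
  -- symmetry of g(J2 ·, ·) and g(J3 ·, ·), antisymmetry of g(J1 ·, ·)
  have gJ2sym : ∀ z w, g (J2 z) w = g (J2 w) z := by
    intro z w
    have h := hgJ2 z (J2 w)
    rw [hJ2 w, map_neg, hgsymm z (J2 w)] at h
    linarith
  have gJ3sym : ∀ z w, g (J3 z) w = g (J3 w) z := by
    intro z w
    have h := hgJ3 z (J3 w)
    rw [hJ3 w, map_neg, hgsymm z (J3 w)] at h
    linarith
  have gJ1skew : ∀ z w, g (J1 z) w = - g (J1 w) z := by
    intro z w
    have h := hgJ1 z (J1 w)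
    rw [hJ1 w, map_neg, hgsymm z (J1 w)] at h
    linarith
  -- a nonzero vector exists
  have hnt : Nontrivial V := by
    have : 0 < Module.finrank ℝ V := by rw [hdim]; omega
    exact Module.nontrivial_of_finrank_pos this
  obtain ⟨v, hv⟩ := exists_ne (0 : V)
  have hgv : ∀ u : V, u ≠ 0 → ∃ w, g u w ≠ 0 := by
    intro u hu
    by_contra h
    push_neg at h
    exact hu (hgnd u h)
  have main : ∀ x y, η2 x y = 0 ∧ η3 x y = 0 := by
    intro x y
    have key : ∀ z w, η2 x y * g (J2 z) w + η3 x y * g (J3 z) w = 0 := by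
      intro z w
      have h1 := hc1 x y z w
      have h2 := hc1 x y w z
      rw [hRb x y w z, hRb x y (J1 w) (J1 z), gJ2sym w z, gJ3sym w z] at h2
      linarith
    have key2 : ∀ z w, η2 x y * g z w + η3 x y * g (J1 z) w = 0 := by
      intro z w
      have h := key (J2 z) w
      have hJ32 : J3 (J2 z) = -J1 z := by rw [h132 z, neg_neg]
      rw [hJ2 z, hJ32] at h
      simp only [map_neg, LinearMap.neg_apply] at h
      linarith
    have key3 : ∀ z w, η2 x y * g z w = 0 := by
      intro z w
      have ha := key2 z w
      have hb := key2 w z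
      rw [hgsymm w z] at hb
      have hc : η3 x y * g (J1 z) w = -(η3 x y * g (J1 w) z) := by
        rw [gJ1skew z w]; ring
      linarith
    obtain ⟨w0, hw0⟩ := hgv v hv
    have h2z : η2 x y = 0 := by
      have := key3 v w0
      rcases mul_eq_zero.mp this with h | h
      · exact h
      · exact absurd h hw0
    have hJ3v : J3 v ≠ 0 := by
      intro h
      apply hv
      have : -v = 0 := by rw [← hJ3 v, h, map_zero]
      exact neg_eq_zero.mp this
    obtain ⟨w1, hw1⟩ := hgv (J3 v) hJ3v
    have h3z : η3 x y = 0 := by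
      have := key v w1
      rw [h2z, zero_mul, zero_add] at this
      rcases mul_eq_zero.mp this with h | h
      · exact h
      · exact absurd h hw1
    exact ⟨h2z, h3z⟩
  exact ⟨fun x y => (main x y).1, fun x y => (main x y).2⟩
end

section
/- Let R be a curvature-like tensor on V satisfying the quaternionic Kähler curvature relations with associated alternating bilinear form η₁. Then R is of Kähler type, i.e. R(x,y,z,w) = ε_α·R(x,y,J_α z, J_α w) = ε_α·R(J_α x, J_α y, z, w) holds for all x,y,z,w and all α ∈ {1,2,3}, if and only if η₁ = 0. -/
theorem stmt2
    (n : ℕ) (hn : 1 ≤ n)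
    (V : Type) [AddCommGroup V] [Module ℝ V] [FiniteDimensional ℝ V]
    (hdim : Module.finrank ℝ V = 4 * n)
    (J1 J2 J3 : V →ₗ[ℝ] V)
    (hJ1 : ∀ x, J1 (J1 x) = -x) (hJ2 : ∀ x, J2 (J2 x) = -x) (hJ3 : ∀ x, J3 (J3 x) = -x)
    (h123 : ∀ x, J1 x = J2 (J3 x)) (h132 : ∀ x, J1 x = -J3 (J2 x))
    (h231 : ∀ x, J2 x = J3 (J1 x)) (h213 : ∀ x, J2 x = -J1 (J3 x))
    (h312 : ∀ x, J3 x = J1 (J2 x)) (h321 : ∀ x, J3 x = -J2 (J1 x))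
    (g : V →ₗ[ℝ] V →ₗ[ℝ] ℝ)
    (hgsymm : ∀ x y, g x y = g y x)
    (hgnd : ∀ x, (∀ y, g x y = 0) → x = 0)
    (hgJ1 : ∀ x y, g (J1 x) (J1 y) = g x y)
    (hgJ2 : ∀ x y, g (J2 x) (J2 y) = -g x y)
    (hgJ3 : ∀ x y, g (J3 x) (J3 y) = -g x y)
    (R : V →ₗ[ℝ] V →ₗ[ℝ] V →ₗ[ℝ] V →ₗ[ℝ] ℝ)
    (hRa : ∀ x y z w, R x y z w = -R y x z w)
    (hRb : ∀ x y z w, R x y z w = -R x y w z)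
    (hRp : ∀ x y z w, R x y z w = R z w x y)
    (hRbianchi : ∀ x y z w, R x y z w + R y z x w + R z x y w = 0)
    (η : V →ₗ[ℝ] V →ₗ[ℝ] ℝ)
    (hηalt : ∀ x y, η x y = -η y x)
    (hQK1 : ∀ x y z w, R x y (J1 z) (J1 w) = R x y z w)
    (hQK2 : ∀ x y z w, R x y (J2 z) (J2 w) = -R x y z w + η x y * g (J1 z) w)
    (hQK3 : ∀ x y z w, R x y (J3 z) (J3 w) = -R x y z w + η x y * g (J1 z) w)
    :
    ((∀ x y z w, R x y z w = R x y (J1 z) (J1 w)) ∧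
     (∀ x y z w, R x y z w = R (J1 x) (J1 y) z w) ∧
     (∀ x y z w, R x y z w = -R x y (J2 z) (J2 w)) ∧
     (∀ x y z w, R x y z w = -R (J2 x) (J2 y) z w) ∧
     (∀ x y z w, R x y z w = -R x y (J3 z) (J3 w)) ∧
     (∀ x y z w, R x y z w = -R (J3 x) (J3 y) z w)) ↔
    (∀ x y, η x y = 0) := by
  constructor
  · rintro ⟨-, -, hK2, -, -, -⟩ x y
    -- find v, w with g v w ≠ 0
    have : (0:ℕ) < Module.finrank ℝ V := by omega
    have hnt : Nontrivial V := Module.nontrivial_of_finrank_pos this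
    obtain ⟨v, hv⟩ := exists_ne (0 : V)
    have : ¬ (∀ w, g v w = 0) := fun h => hv (hgnd v h)
    push_neg at this
    obtain ⟨w, hw⟩ := this
    have h1 := hQK2 x y (-(J1 v)) w
    have h2 := hK2 x y (-(J1 v)) w
    have hJ : J1 (-(J1 v)) = v := by rw [map_neg, hJ1]; simp
    rw [hJ] at h1
    have : η x y * g v w = 0 := by linarith [h1, h2]
    exact (mul_eq_zero.mp this).resolve_right hw
  · intro hη
    refine ⟨fun x y z w => (hQK1 x y z w).symm,
      fun x y z w => ?_, fun x y z w => ?_, fun x y z w => ?_,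
      fun x y z w => ?_, fun x y z w => ?_⟩
    · rw [hRp, ← hQK1 z w x y, hRp]
    · rw [hQK2, hη]; ring
    · rw [hRp (J2 x), hQK2, hη, hRp]; ring
    · rw [hQK3, hη]; ring
    · rw [hRp (J3 x), hQK3, hη, hRp]; ring
end

section
/- Let R be a curvature-like tensor on V satisfying the quaternionic Kähler curvature relations with associated alternating bilinear form η₁. Then R = 0 if and only if η₁ = 0. -/
set_option maxHeartbeats 2000000 in
theorem stmt3
    (n : ℕ) (hn : 1 ≤ n)
    (V : Type) [AddCommGroup V] [Module ℝ V] [FiniteDimensional ℝ V]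
    (hdim : Module.finrank ℝ V = 4 * n)
    (J1 J2 J3 : V →ₗ[ℝ] V)
    (hJ1 : ∀ x, J1 (J1 x) = -x) (hJ2 : ∀ x, J2 (J2 x) = -x) (hJ3 : ∀ x, J3 (J3 x) = -x)
    (h123 : ∀ x, J1 x = J2 (J3 x)) (h132 : ∀ x, J1 x = -J3 (J2 x))
    (h231 : ∀ x, J2 x = J3 (J1 x)) (h213 : ∀ x, J2 x = -J1 (J3 x))
    (h312 : ∀ x, J3 x = J1 (J2 x)) (h321 : ∀ x, J3 x = -J2 (J1 x))
    (g : V →ₗ[ℝ] V →ₗ[ℝ] ℝ)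
    (hgsymm : ∀ x y, g x y = g y x)
    (hgnd : ∀ x, (∀ y, g x y = 0) → x = 0)
    (hgJ1 : ∀ x y, g (J1 x) (J1 y) = g x y)
    (hgJ2 : ∀ x y, g (J2 x) (J2 y) = -g x y)
    (hgJ3 : ∀ x y, g (J3 x) (J3 y) = -g x y)
    (R : V →ₗ[ℝ] V →ₗ[ℝ] V →ₗ[ℝ] V →ₗ[ℝ] ℝ)
    (hRa : ∀ x y z w, R x y z w = -R y x z w)
    (hRb : ∀ x y z w, R x y z w = -R x y w z)
    (hRp : ∀ x y z w, R x y z w = R z w x y)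
    (hRbianchi : ∀ x y z w, R x y z w + R y z x w + R z x y w = 0)
    (η : V →ₗ[ℝ] V →ₗ[ℝ] ℝ)
    (hηalt : ∀ x y, η x y = -η y x)
    (hQK1 : ∀ x y z w, R x y (J1 z) (J1 w) = R x y z w)
    (hQK2 : ∀ x y z w, R x y (J2 z) (J2 w) = -R x y z w + η x y * g (J1 z) w)
    (hQK3 : ∀ x y z w, R x y (J3 z) (J3 w) = -R x y z w + η x y * g (J1 z) w)
    :
    (∀ x y z w, R x y z w = 0) ↔ (∀ x y, η x y = 0) := by
  constructor
  · intro hR x y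
    have hpos : 0 < Module.finrank ℝ V := by omega
    have : Nontrivial V := Module.nontrivial_of_finrank_pos hpos
    obtain ⟨v, hv⟩ := exists_ne (0 : V)
    by_contra hne
    have hv0 : v = 0 := by
      apply hgnd
      intro w
      have h := hQK2 x y (J1 v) w
      simp only [hR, hJ1, map_neg, LinearMap.neg_apply, neg_zero, zero_add] at h
      have hprod : η x y * g v w = 0 := by linear_combination h
      exact (mul_eq_zero.mp hprod).resolve_left hne
    exact hv hv0
  · intro hη x y z w
    have c12 : ∀ x, J1 (J2 x) = J3 x := fun x => (h312 x).symm
    have c23 : ∀ x, J2 (J3 x) = J1 x := fun x => (h123 x).symm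
    have c31 : ∀ x, J3 (J1 x) = J2 x := fun x => (h231 x).symm
    have c21 : ∀ x, J2 (J1 x) = -J3 x := fun x => by rw [h321 x, neg_neg]
    have c13 : ∀ x, J1 (J3 x) = -J2 x := fun x => by rw [h213 x, neg_neg]
    have c32 : ∀ x, J3 (J2 x) = -J1 x := fun x => by rw [h132 x, neg_neg]
    have e0 : R x w (J2 y) (J2 z) + R x w y z = 0 := by
      have h := hQK2 x w y z
      try simp only [hη, c12, c21, c13, c31, c23, c32, hJ1, hJ2, hJ3, map_neg, LinearMap.neg_apply, neg_neg, zero_mul, mul_zero, add_zero, zero_add, neg_zero] at h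
      linarith
    have e1 : R x (J2 y) (J2 z) w + R (J2 y) (J2 z) x w + R (J2 z) x (J2 y) w = 0 := by
      have h := hRbianchi x (J2 y) (J2 z) w
      try simp only [hη, c12, c21, c13, c31, c23, c32, hJ1, hJ2, hJ3, map_neg, LinearMap.neg_apply, neg_neg, zero_mul, mul_zero, add_zero, zero_add, neg_zero] at h
      linarith
    have e2 : -R x (J2 y) (J2 z) w + R x (J2 y) z (J2 w) = 0 := by
      have h := hQK2 x (J2 y) z (J2 w)
      try simp only [hη, c12, c21, c13, c31, c23, c32, hJ1, hJ2, hJ3, map_neg, LinearMap.neg_apply, neg_neg, zero_mul, mul_zero, add_zero, zero_add, neg_zero] at h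
      linarith
    have e3 : -R x (J2 z) (J2 y) w + R x (J2 z) y (J2 w) = 0 := by
      have h := hQK2 x (J2 z) y (J2 w)
      try simp only [hη, c12, c21, c13, c31, c23, c32, hJ1, hJ2, hJ3, map_neg, LinearMap.neg_apply, neg_neg, zero_mul, mul_zero, add_zero, zero_add, neg_zero] at h
      linarith
    have e4 : R x (J2 y) (J1 z) (J3 w) - R x (J2 y) z (J2 w) = 0 := by
      have h := hQK1 x (J2 y) z (J2 w)
      try simp only [hη, c12, c21, c13, c31, c23, c32, hJ1, hJ2, hJ3, map_neg, LinearMap.neg_apply, neg_neg, zero_mul, mul_zero, add_zero, zero_add, neg_zero] at h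
      linarith
    have e5 : R x y (J2 z) (J2 w) + R y (J2 z) x (J2 w) + R (J2 z) x y (J2 w) = 0 := by
      have h := hRbianchi x y (J2 z) (J2 w)
      try simp only [hη, c12, c21, c13, c31, c23, c32, hJ1, hJ2, hJ3, map_neg, LinearMap.neg_apply, neg_neg, zero_mul, mul_zero, add_zero, zero_add, neg_zero] at h
      linarith
    have e6 : R x y (J2 z) (J2 w) + R x y z w = 0 := by
      have h := hQK2 x y z w
      try simp only [hη, c12, c21, c13, c31, c23, c32, hJ1, hJ2, hJ3, map_neg, LinearMap.neg_apply, neg_neg, zero_mul, mul_zero, add_zero, zero_add, neg_zero] at h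
      linarith
    have e7 : R x y z w + R y z x w + R z x y w = 0 := by
      have h := hRbianchi x y z w
      try simp only [hη, c12, c21, c13, c31, c23, c32, hJ1, hJ2, hJ3, map_neg, LinearMap.neg_apply, neg_neg, zero_mul, mul_zero, add_zero, zero_add, neg_zero] at h
      linarith
    have e8 : -R x (J1 z) (J2 y) (J3 w) + R x (J1 z) y (J1 w) = 0 := by
      have h := hQK2 x (J1 z) y (J1 w)
      try simp only [hη, c12, c21, c13, c31, c23, c32, hJ1, hJ2, hJ3, map_neg, LinearMap.neg_apply, neg_neg, zero_mul, mul_zero, add_zero, zero_add, neg_zero] at h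
      linarith
    have e9 : R x (J2 y) (J1 z) (J3 w) + R (J2 y) (J1 z) x (J3 w) + R (J1 z) x (J2 y) (J3 w) = 0 := by
      have h := hRbianchi x (J2 y) (J1 z) (J3 w)
      try simp only [hη, c12, c21, c13, c31, c23, c32, hJ1, hJ2, hJ3, map_neg, LinearMap.neg_apply, neg_neg, zero_mul, mul_zero, add_zero, zero_add, neg_zero] at h
      linarith
    have e10 : R x z (J2 y) (J2 w) + R x z y w = 0 := by
      have h := hQK2 x z y w
      try simp only [hη, c12, c21, c13, c31, c23, c32, hJ1, hJ2, hJ3, map_neg, LinearMap.neg_apply, neg_neg, zero_mul, mul_zero, add_zero, zero_add, neg_zero] at h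
      linarith
    have e11 : R x (J2 y) z (J2 w) + R (J2 y) z x (J2 w) + R z x (J2 y) (J2 w) = 0 := by
      have h := hRbianchi x (J2 y) z (J2 w)
      try simp only [hη, c12, c21, c13, c31, c23, c32, hJ1, hJ2, hJ3, map_neg, LinearMap.neg_apply, neg_neg, zero_mul, mul_zero, add_zero, zero_add, neg_zero] at h
      linarith
    have e12 : -R x (J2 w) (J2 y) z + R x (J2 w) y (J2 z) = 0 := by
      have h := hQK2 x (J2 w) y (J2 z)
      try simp only [hη, c12, c21, c13, c31, c23, c32, hJ1, hJ2, hJ3, map_neg, LinearMap.neg_apply, neg_neg, zero_mul, mul_zero, add_zero, zero_add, neg_zero] at h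
      linarith
    have e13 : -R x (J2 y) (J3 z) (J1 w) + R x (J2 y) (J1 z) (J3 w) = 0 := by
      have h := hQK2 x (J2 y) (J1 z) (J3 w)
      try simp only [hη, c12, c21, c13, c31, c23, c32, hJ1, hJ2, hJ3, map_neg, LinearMap.neg_apply, neg_neg, zero_mul, mul_zero, add_zero, zero_add, neg_zero] at h
      linarith
    have e14 : -R x (J1 w) (J2 y) (J3 z) + R x (J1 w) y (J1 z) = 0 := by
      have h := hQK2 x (J1 w) y (J1 z)
      try simp only [hη, c12, c21, c13, c31, c23, c32, hJ1, hJ2, hJ3, map_neg, LinearMap.neg_apply, neg_neg, zero_mul, mul_zero, add_zero, zero_add, neg_zero] at h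
      linarith
    have e15 : R x (J2 y) (J3 z) (J1 w) + R (J2 y) (J3 z) x (J1 w) + R (J3 z) x (J2 y) (J1 w) = 0 := by
      have h := hRbianchi x (J2 y) (J3 z) (J1 w)
      try simp only [hη, c12, c21, c13, c31, c23, c32, hJ1, hJ2, hJ3, map_neg, LinearMap.neg_apply, neg_neg, zero_mul, mul_zero, add_zero, zero_add, neg_zero] at h
      linarith
    have e16 : R x y (J1 z) (J1 w) + R y (J1 z) x (J1 w) + R (J1 z) x y (J1 w) = 0 := by
      have h := hRbianchi x y (J1 z) (J1 w)
      try simp only [hη, c12, c21, c13, c31, c23, c32, hJ1, hJ2, hJ3, map_neg, LinearMap.neg_apply, neg_neg, zero_mul, mul_zero, add_zero, zero_add, neg_zero] at h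
      linarith
    have e17 : R x y (J1 z) (J1 w) - R x y z w = 0 := by
      have h := hQK1 x y z w
      try simp only [hη, c12, c21, c13, c31, c23, c32, hJ1, hJ2, hJ3, map_neg, LinearMap.neg_apply, neg_neg, zero_mul, mul_zero, add_zero, zero_add, neg_zero] at h
      linarith
    have e18 : R x (J3 z) (J2 y) (J1 w) + R x (J3 z) y (J3 w) = 0 := by
      have h := hQK2 x (J3 z) y (J3 w)
      try simp only [hη, c12, c21, c13, c31, c23, c32, hJ1, hJ2, hJ3, map_neg, LinearMap.neg_apply, neg_neg, zero_mul, mul_zero, add_zero, zero_add, neg_zero] at h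
      linarith
    have e19 : R x (J3 w) (J2 y) (J1 z) + R x (J3 w) y (J3 z) = 0 := by
      have h := hQK2 x (J3 w) y (J3 z)
      try simp only [hη, c12, c21, c13, c31, c23, c32, hJ1, hJ2, hJ3, map_neg, LinearMap.neg_apply, neg_neg, zero_mul, mul_zero, add_zero, zero_add, neg_zero] at h
      linarith
    have e20 : R x y (J3 z) (J3 w) + R y (J3 z) x (J3 w) + R (J3 z) x y (J3 w) = 0 := by
      have h := hRbianchi x y (J3 z) (J3 w)
      try simp only [hη, c12, c21, c13, c31, c23, c32, hJ1, hJ2, hJ3, map_neg, LinearMap.neg_apply, neg_neg, zero_mul, mul_zero, add_zero, zero_add, neg_zero] at h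
      linarith
    have e21 : R x y (J3 z) (J3 w) + R x y (J1 z) (J1 w) = 0 := by
      have h := hQK2 x y (J1 z) (J1 w)
      try simp only [hη, c12, c21, c13, c31, c23, c32, hJ1, hJ2, hJ3, map_neg, LinearMap.neg_apply, neg_neg, zero_mul, mul_zero, add_zero, zero_add, neg_zero] at h
      linarith
    linear_combination (1/4 : ℝ) * e21 + (-1/2 : ℝ) * e17 + (1/4 : ℝ) * e10 + (-1/4 : ℝ) * e0 + (1/4 : ℝ) * e7 + (1/2 : ℝ) * e4 + (1/4 : ℝ) * e2 + (1/4 : ℝ) * e1 + (-1/4 : ℝ) * e3 + (1/4 : ℝ) * e12 + (1/4 : ℝ) * e11 + (1/4 : ℝ) * e6 + (-1/4 : ℝ) * e5 + (-1/4 : ℝ) * e20 + (1/4 : ℝ) * e19 + (-1/4 : ℝ) * e18 + (-1/4 : ℝ) * e15 + (-1/4 : ℝ) * e13 + (1/4 : ℝ) * e16 + (1/4 : ℝ) * e8 + (-1/4 : ℝ) * e14 + (-1/4 : ℝ) * e9 + (1/4 : ℝ) * (hRp y w x z) + (-1/4 : ℝ) * (hRb y w z x) + (1/4 : ℝ) *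 (hRp x w y z) + (1/4 : ℝ) * (hRp y w z x) + (-1/4 : ℝ) * (hRa x z (J2 y) (J2 w)) + (1/4 : ℝ) * (hRp x w (J2 y) (J2 z)) + (-1/4 : ℝ) * (hRa (J2 z) x (J2 y) w) + (-1/4 : ℝ) * (hRp y (J2 w) x (J2 z)) + (1/4 : ℝ) * (hRa y (J2 w) x (J2 z)) + (-1/4 : ℝ) * (hRb (J2 w) y (J2 z) x) + (1/4 : ℝ) * (hRp x (J2 w) (J2 y) z) + (-1/4 : ℝ) * (hRp x (J2 w) y (J2 z)) + (1/4 : ℝ) * (hRb (J2 z) x (J2 w) y) + (-1/4 : ℝ) * (hRp (J2 z) x (J2 w) y) + (-1/4 : ℝ) * (hRa (J3 w) x y (J3 z)) + (-1/4 : ℝ) * (hRp y (J3 w) (J3 z) x) + (1/4 : ℝ) * (hRa y (J3 w) (J3 z) x) + (1/4 : ℝ) * (hRa (J3 z) y x (J3 w)) + (-1/4 : ℝ) * (hRb (J3 z) y x (J3 w)) + (-1/4 : ℝ) * (hRp y (J3 z) (J3 w) x) + (1/4 : ℝ) * (hRa y (J3 z) (J3 w) x) + (-1/4 : ℝ) *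 (hRp y (J3 w) x (J3 z)) + (1/4 : ℝ) * (hRa (J3 w) y x (J3 z)) + (-1/4 : ℝ) * (hRb (J3 w) y x (J3 z)) + (1/4 : ℝ) * (hRa (J3 z) x (J2 y) (J1 w)) + (-1/4 : ℝ) * (hRb (J1 z) x (J1 w) y) + (-1/4 : ℝ) * (hRa (J1 z) y x (J1 w)) + (-1/4 : ℝ) * (hRb x (J1 z) (J1 w) y) + (1/4 : ℝ) * (hRa x (J1 z) (J1 w) y) + (1/4 : ℝ) * (hRa x (J1 z) (J2 y) (J3 w)) + (1/4 : ℝ) * (hRp (J1 z) y x (J1 w)) + (1/4 : ℝ) * (hRb x (J1 w) (J1 z) y) + (1/4 : ℝ) * (hRp (J2 y) (J3 z) x (J1 w)) + (-1/4 : ℝ) * (hRp x (J3 w) (J2 y) (J1 z))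
end

section
/- Let R be a curvature-like tensor on V satisfying the quaternionic Kähler curvature relations with associated alternating bilinear form η₁. Then for every basis (e₁,…,e_{4n}) of V with g-dual basis (ẽ₁,…,ẽ_{4n}) and all x,y ∈ V: Σᵢ R(x, y, ẽᵢ, J₁eᵢ) = 2n·η₁(x,y). -/
lemma trace_indep {ι : Type*} [Fintype ι] [DecidableEq ι]
    {V : Type} [AddCommGroup V] [Module ℝ V]
    (g : V →ₗ[ℝ] V →ₗ[ℝ] ℝ)
    (hgsymm : ∀ x y, g x y = g y x)
    (hgnd : ∀ x, (∀ y, g x y = 0) → x = 0)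
    (e : Module.Basis ι ℝ V) (f : ι → V) (e' : ι → V) (f' : Module.Basis ι ℝ V)
    (hd : ∀ i j, g (f i) (e j) = if i = j then 1 else 0)
    (hd' : ∀ i j, g (f' i) (e' j) = if i = j then 1 else 0)
    (B : V →ₗ[ℝ] V →ₗ[ℝ] ℝ) :
    ∑ i, B (f i) (e i) = ∑ j, B (f' j) (e' j) := by
  have hext1 : ∀ u v : V, (∀ k, g u (e k) = g v (e k)) → u = v := by
    intro u v h
    have h0 : g (u - v) = 0 := by
      apply e.ext
      intro k
      simp [h k]
    exact sub_eq_zero.mp (hgnd (u - v) (fun y => by rw [h0]; simp))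
  have hext2 : ∀ u v : V, (∀ k, g (f' k) u = g (f' k) v) → u = v := by
    intro u v h
    have h0 : g (u - v) = 0 := by
      apply f'.ext
      intro k
      simp only [LinearMap.sub_apply, LinearMap.zero_apply, map_sub]
      rw [hgsymm u (f' k), hgsymm v (f' k), h k, sub_self]
    exact sub_eq_zero.mp (hgnd (u - v) (fun y => by rw [h0]; simp))
  have hexpand_e : ∀ i, e i = ∑ j, g (f' j) (e i) • e' j := by
    intro i
    apply hext2
    intro k
    rw [map_sum]
    simp only [map_smul, smul_eq_mul, hd']
    simp
  have hexpand_f : ∀ j, f' j = ∑ i, g (f' j) (e i) • f i := by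
    intro j
    apply hext1
    intro k
    rw [map_sum]
    simp only [map_smul, LinearMap.sum_apply, LinearMap.smul_apply, smul_eq_mul]
    rw [Finset.sum_congr rfl fun x _ => by rw [hd x k]]
    simp
  calc ∑ i, B (f i) (e i)
      = ∑ i, ∑ j, g (f' j) (e i) * B (f i) (e' j) := by
        refine Finset.sum_congr rfl (fun i _ => ?_)
        conv_lhs => rw [hexpand_e i]
        simp [map_sum, smul_eq_mul]
    _ = ∑ j, ∑ i, g (f' j) (e i) * B (f i) (e' j) := Finset.sum_comm
    _ = ∑ j, B (f' j) (e' j) := by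
        refine Finset.sum_congr rfl (fun j _ => ?_)
        conv_rhs => rw [hexpand_f j]
        simp [smul_eq_mul]

theorem stmt4
    (n : ℕ) (hn : 1 ≤ n)
    (V : Type) [AddCommGroup V] [Module ℝ V] [FiniteDimensional ℝ V]
    (hdim : Module.finrank ℝ V = 4 * n)
    (J1 J2 J3 : V →ₗ[ℝ] V)
    (hJ1 : ∀ x, J1 (J1 x) = -x) (hJ2 : ∀ x, J2 (J2 x) = -x) (hJ3 : ∀ x, J3 (J3 x) = -x)
    (h123 : ∀ x, J1 x = J2 (J3 x)) (h132 : ∀ x, J1 x = -J3 (J2 x))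
    (h231 : ∀ x, J2 x = J3 (J1 x)) (h213 : ∀ x, J2 x = -J1 (J3 x))
    (h312 : ∀ x, J3 x = J1 (J2 x)) (h321 : ∀ x, J3 x = -J2 (J1 x))
    (g : V →ₗ[ℝ] V →ₗ[ℝ] ℝ)
    (hgsymm : ∀ x y, g x y = g y x)
    (hgnd : ∀ x, (∀ y, g x y = 0) → x = 0)
    (hgJ1 : ∀ x y, g (J1 x) (J1 y) = g x y)
    (hgJ2 : ∀ x y, g (J2 x) (J2 y) = -g x y)
    (hgJ3 : ∀ x y, g (J3 x) (J3 y) = -g x y)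
    (R : V →ₗ[ℝ] V →ₗ[ℝ] V →ₗ[ℝ] V →ₗ[ℝ] ℝ)
    (hRa : ∀ x y z w, R x y z w = -R y x z w)
    (hRb : ∀ x y z w, R x y z w = -R x y w z)
    (hRp : ∀ x y z w, R x y z w = R z w x y)
    (hRbianchi : ∀ x y z w, R x y z w + R y z x w + R z x y w = 0)
    (η : V →ₗ[ℝ] V →ₗ[ℝ] ℝ)
    (hηalt : ∀ x y, η x y = -η y x)
    (hQK1 : ∀ x y z w, R x y (J1 z) (J1 w) = R x y z w)
    (hQK2 : ∀ x y z w, R x y (J2 z) (J2 w) = -R x y z w + η x y * g (J1 z) w)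
    (hQK3 : ∀ x y z w, R x y (J3 z) (J3 w) = -R x y z w + η x y * g (J1 z) w)
    :
    ∀ (e f : Module.Basis (Fin (4 * n)) ℝ V),
      (∀ i j, g (f i) (e j) = if i = j then 1 else 0) →
      ∀ x y, (∑ i, R x y (f i) (J1 (e i))) = 2 * (n : ℝ) * η x y := by
  intro e f hd x y
  -- J2 as a linear equivalence
  have hco1 : J2 ∘ₗ (-J2) = LinearMap.id := by
    apply LinearMap.ext; intro v; simp [hJ2 v]
  have hco2 : (-J2) ∘ₗ J2 = LinearMap.id := by
    apply LinearMap.ext; intro v; simp [hJ2 v]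
  let E2 : V ≃ₗ[ℝ] V := LinearEquiv.ofLinear J2 (-J2) hco1 hco2
  have hE2 : ∀ v, E2 v = J2 v := fun v => rfl
  let e' : Fin (4 * n) → V := fun i => J2 (e i)
  let f' : Module.Basis (Fin (4 * n)) ℝ V := f.map (E2.trans (LinearEquiv.neg ℝ))
  have hf' : ∀ i, f' i = -(J2 (f i)) := fun i => rfl
  have hd' : ∀ i j, g (f' i) (e' j) = if i = j then 1 else 0 := by
    intro i j
    show g (-(J2 (f i))) (J2 (e j)) = _
    rw [map_neg, LinearMap.neg_apply, hgJ2, neg_neg, hd]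
  -- the bilinear form B z w = R x y z (J1 w)
  let B : V →ₗ[ℝ] V →ₗ[ℝ] ℝ := (R x y).compl₂ J1
  have hB : ∀ z w, B z w = R x y z (J1 w) := fun z w => rfl
  have key := trace_indep g hgsymm hgnd e (f : Fin (4*n) → V) e' f' hd hd' B
  -- rewrite the right-hand side of key
  have hkey : ∑ i, R x y (f i) (J1 (e i)) = -∑ i, R x y (J2 (f i)) (J3 (e i)) := by
    rw [show (∑ i, R x y (f i) (J1 (e i))) = ∑ i, B (f i) (e i) from rfl, key,
      ← Finset.sum_neg_distrib]
    refine Finset.sum_congr rfl (fun j _ => ?_)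
    rw [hB, hf']
    simp only [map_neg, LinearMap.neg_apply]
    rw [h312 (e j)]
  -- QK2 computation
  have hsum : ∑ i, R x y (J2 (f i)) (J2 (J1 (e i)))
      = -(∑ i, R x y (f i) (J1 (e i))) + (4 * n : ℝ) * η x y := by
    have : ∀ i, R x y (J2 (f i)) (J2 (J1 (e i)))
        = -R x y (f i) (J1 (e i)) + η x y * g (f i) (e i) := by
      intro i
      rw [hQK2, hgJ1]
    rw [Finset.sum_congr rfl (fun i _ => this i), Finset.sum_add_distrib,
      ← Finset.sum_neg_distrib]
    congr 1
    rw [← Finset.mul_sum]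
    have : ∑ i, g (f i) (e i) = (4 * n : ℝ) := by
      rw [Finset.sum_congr rfl (fun i _ => hd i i)]
      simp
    rw [this]; ring
  have hJ2J1 : ∀ v, J2 (J1 v) = -(J3 v) := by
    intro v; rw [h321 v, neg_neg]
  have hleft : ∑ i, R x y (J2 (f i)) (J2 (J1 (e i)))
      = -∑ i, R x y (J2 (f i)) (J3 (e i)) := by
    rw [← Finset.sum_neg_distrib]
    refine Finset.sum_congr rfl (fun i _ => ?_)
    rw [hJ2J1]
    simp
  rw [hleft, ← hkey] at hsum
  linear_combination (1/2 : ℝ) * hsum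
end

section
/- Let R be a curvature-like tensor on V satisfying the quaternionic Kähler curvature relations with associated alternating bilinear form η₁, and let ρ be its Ricci tensor. Then ρ(x,y) = n·η₁(J₁x, y) for all x,y ∈ V. -/
set_option maxHeartbeats 1000000 in
theorem stmt5
    (n : ℕ) (hn : 1 ≤ n)
    (V : Type) [AddCommGroup V] [Module ℝ V] [FiniteDimensional ℝ V]
    (hdim : Module.finrank ℝ V = 4 * n)
    (J1 J2 J3 : V →ₗ[ℝ] V)
    (hJ1 : ∀ x, J1 (J1 x) = -x) (hJ2 : ∀ x, J2 (J2 x) = -x) (hJ3 : ∀ x, J3 (J3 x) = -x)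
    (h123 : ∀ x, J1 x = J2 (J3 x)) (h132 : ∀ x, J1 x = -J3 (J2 x))
    (h231 : ∀ x, J2 x = J3 (J1 x)) (h213 : ∀ x, J2 x = -J1 (J3 x))
    (h312 : ∀ x, J3 x = J1 (J2 x)) (h321 : ∀ x, J3 x = -J2 (J1 x))
    (g : V →ₗ[ℝ] V →ₗ[ℝ] ℝ)
    (hgsymm : ∀ x y, g x y = g y x)
    (hgnd : ∀ x, (∀ y, g x y = 0) → x = 0)
    (hgJ1 : ∀ x y, g (J1 x) (J1 y) = g x y)
    (hgJ2 : ∀ x y, g (J2 x) (J2 y) = -g x y)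
    (hgJ3 : ∀ x y, g (J3 x) (J3 y) = -g x y)
    (R : V →ₗ[ℝ] V →ₗ[ℝ] V →ₗ[ℝ] V →ₗ[ℝ] ℝ)
    (hRa : ∀ x y z w, R x y z w = -R y x z w)
    (hRb : ∀ x y z w, R x y z w = -R x y w z)
    (hRp : ∀ x y z w, R x y z w = R z w x y)
    (hRbianchi : ∀ x y z w, R x y z w + R y z x w + R z x y w = 0)
    (η : V →ₗ[ℝ] V →ₗ[ℝ] ℝ)
    (hηalt : ∀ x y, η x y = -η y x)
    (hQK1 : ∀ x y z w, R x y (J1 z) (J1 w) = R x y z w)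
    (hQK2 : ∀ x y z w, R x y (J2 z) (J2 w) = -R x y z w + η x y * g (J1 z) w)
    (hQK3 : ∀ x y z w, R x y (J3 z) (J3 w) = -R x y z w + η x y * g (J1 z) w)
    (ρ : V → V → ℝ)
    (hρ : ∀ x y, ∀ A : Module.End ℝ V, (∀ z w, g (A z) w = R z x y w) → ρ x y = LinearMap.trace ℝ V A)
    :
    ∀ x y, ρ x y = (n : ℝ) * η (J1 x) y := by
  -- J composition lemmas
  have j2j3 : ∀ a, J2 (J3 a) = J1 a := fun a => (h123 a).symm
  have j3j2 : ∀ a, J3 (J2 a) = -J1 a := by intro a; have h := h132 a; rw [h]; simp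
  have j3j1 : ∀ a, J3 (J1 a) = J2 a := fun a => (h231 a).symm
  have j1j3 : ∀ a, J1 (J3 a) = -J2 a := by intro a; have h := h213 a; rw [h]; simp
  have j1j2 : ∀ a, J1 (J2 a) = J3 a := fun a => (h312 a).symm
  have j2j1 : ∀ a, J2 (J1 a) = -J3 a := by intro a; have h := h321 a; rw [h]; simp
  -- g move lemmas
  have gJ1 : ∀ a b, g (J1 a) b = -g a (J1 b) := by
    intro a b
    have h := hgJ1 a (J1 b)
    rw [hJ1 b, map_neg] at h
    linarith
  have gJ2 : ∀ a b, g (J2 a) b = g a (J2 b) := by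
    intro a b
    have h := hgJ2 a (J2 b)
    rw [hJ2 b, map_neg] at h
    linarith
  have gJ3 : ∀ a b, g (J3 a) b = g a (J3 b) := by
    intro a b
    have h := hgJ3 a (J3 b)
    rw [hJ3 b, map_neg] at h
    linarith
  -- move rules
  have r1 : ∀ a b u v, R a b (J1 u) v = -R a b u (J1 v) := by
    intro a b u v
    have h := hQK1 a b u (-(J1 v))
    simp only [map_neg, LinearMap.neg_apply, hJ1, neg_neg] at h
    linarith
  have fpJ1 : ∀ a b u v, R (J1 a) (J1 b) u v = R a b u v := by
    intro a b u v
    rw [hRp, hQK1, ← hRp]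
  have r2 : ∀ a b u v, R (J1 a) b u v = -R a (J1 b) u v := by
    intro a b u v
    rw [hRp, r1 u v a b, ← hRp]
  have r3 : ∀ a b u v, R a b (J2 u) v = R a b u (J2 v) + η a b * g (J3 u) v := by
    intro a b u v
    have h := hQK2 a b u (-(J2 v))
    simp only [map_neg, LinearMap.neg_apply, hJ2, neg_neg, mul_neg] at h
    have h2 : g (J1 u) (J2 v) = -g (J3 u) v := by
      rw [← gJ2 (J1 u) v, j2j1]
      simp [map_neg, LinearMap.neg_apply]
    rw [h2] at h
    linarith
  have r4 : ∀ a b u v, R (J2 a) b u v = R a (J2 b) u v + η u v * g (J3 a) b := by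
    intro a b u v
    rw [hRp, r3 u v a b, ← hRp]
  have r5 : ∀ a b u v, R a b (J3 u) v = R a b u (J3 v) - η a b * g (J2 u) v := by
    intro a b u v
    have h := hQK3 a b u (-(J3 v))
    simp only [map_neg, LinearMap.neg_apply, hJ3, neg_neg, mul_neg] at h
    have h2 : g (J1 u) (J3 v) = g (J2 u) v := by
      rw [← gJ3 (J1 u) v, j3j1]
    rw [h2] at h
    linarith
  have r6 : ∀ a b u v, R (J3 a) b u v = R a (J3 b) u v - η u v * g (J2 a) b := by
    intro a b u v
    rw [hRp, r5 u v a b, ← hRp]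
  have fpqk2 : ∀ a b u v, R (J2 a) (J2 b) u v = -R a b u v + η u v * g (J1 a) b := by
    intro a b u v
    rw [hRp, hQK2, ← hRp]
  have fpqk3 : ∀ a b u v, R (J3 a) (J3 b) u v = -R a b u v + η u v * g (J1 a) b := by
    intro a b u v
    rw [hRp, hQK3, ← hRp]
  -- Bianchi consequences
  have EqC : ∀ x y z w, R (J2 x) y (J2 z) w + R (J2 z) x (J2 y) w
      = η (J2 x) y * g (J3 z) w + R y z x w - η y z * g (J1 x) w
        + η (J2 z) x * g (J3 y) w + η y (J2 w) * g (J3 z) x := by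
    intro x y z w
    linear_combination r3 (J2 x) y z w + r3 (J2 z) x y w + r4 z x y (J2 w)
      + hRbianchi (J2 x) y z (J2 w) - hQK2 y z x w
  have EqC3 : ∀ x y z w, R (J3 x) y (J3 z) w + R (J3 z) x (J3 y) w
      = -η (J3 x) y * g (J2 z) w + R y z x w - η y z * g (J1 x) w
        - η (J3 z) x * g (J2 y) w - η y (J3 w) * g (J2 z) x := by
    intro x y z w
    linear_combination r5 (J3 x) y z w + r5 (J3 z) x y w + r6 z x y (J3 w)
      + hRbianchi (J3 x) y z (J3 w) - hQK3 y z x w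
  have EqA : ∀ x y z w, R (J2 y) z (J2 x) w + R (J2 z) x (J2 y) w
      = R x y z w - η z w * g (J1 x) y + η (J2 y) w * g (J3 z) x := by
    intro x y z w
    linear_combination hRbianchi (J2 x) (J2 y) z w + r4 z x (J2 y) w - fpqk2 x y z w
  have EqA3 : ∀ x y z w, R (J3 y) z (J3 x) w + R (J3 z) x (J3 y) w
      = R x y z w - η z w * g (J1 x) y - η (J3 y) w * g (J2 z) x := by
    intro x y z w
    linear_combination hRbianchi (J3 x) (J3 y) z w + r6 z x (J3 y) w - fpqk3 x y z w
  have Eid0 : ∀ x y z w, η z w * g (J1 x) y - η (J2 y) w * g (J3 z) x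
      + η (J2 z) x * g (J3 y) w - η x y * g (J1 z) w + η (J2 y) z * g (J3 x) w
      + η x (J2 w) * g (J3 y) z = 0 := by
    intro x y z w
    linear_combination EqA x y z w - EqC z x y w
  have Eid03 : ∀ x y z w, η z w * g (J1 x) y + η (J3 y) w * g (J2 z) x
      - η (J3 z) x * g (J2 y) w - η x y * g (J1 z) w - η (J3 y) z * g (J2 x) w
      - η x (J3 w) * g (J2 y) z = 0 := by
    intro x y z w
    linear_combination EqA3 x y z w - EqC3 z x y w
  have bridge : ∀ x y z w, R (J3 x) y (J3 z) w = R (J2 x) (J1 y) (J2 z) (J1 w) := by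
    intro x y z w
    rw [h312 x, h312 z, r2, r1, neg_neg]
  have GcorrA : ∀ x y z w, R x (J1 y) z (J1 w) + R z (J1 y) x (J1 w) =
      R x y z w - R y z x w
      + 2*(η (J2 x) (J1 y) + η (J3 x) y) * g z (J2 w)
      - η (J1 y) z * g x w
      - η (J1 y) (J3 w) * g z (J3 x)
      + η x (J1 y) * g z w
      - η y z * g x (J1 w)
      + η y (J3 w) * g z (J2 x)
      + η x y * g z (J1 w) := by
    intro x y z w
    have I1 := EqC x (J1 y) z (J1 w)
    have I2 := EqC (J1 y) z x (J1 w)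
    have I3 := EqC z x (J1 y) (J1 w)
    have C1 := EqC3 x y z w
    have C2 := EqC3 y z x w
    have C3 := EqC3 z x y w
    have B1 := bridge x y z w
    have Ha := hRa (J1 y) z x (J1 w)
    have Hq := hQK1 z x y w
    simp only [j2j3, j3j2, j3j1, j1j3, j1j2, j2j1, hJ1, hJ2, hJ3, gJ1, gJ2, gJ3,
      map_neg, LinearMap.neg_apply, neg_neg, mul_neg, neg_mul] at I1 I2 I3 C1 C2 C3 B1 Ha Hq ⊢
    linear_combination I1 + I2 - I3 - C1 - C2 + C3 + 2*B1 + Ha + Hq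
  -- duality setup
  have ginj : Function.Injective (g : V →ₗ[ℝ] Module.Dual ℝ V) := by
    intro a b hab
    have h0 : a - b = 0 := by
      apply hgnd
      intro v
      rw [map_sub, LinearMap.sub_apply]
      rw [show g a = g b from hab]
      ring
    exact sub_eq_zero.mp h0
  have gsurj : Function.Surjective (g : V →ₗ[ℝ] Module.Dual ℝ V) :=
    (LinearMap.injective_iff_surjective_of_finrank_eq_finrank
      (Subspace.dual_finrank_eq).symm).mp ginj
  let e : V ≃ₗ[ℝ] Module.Dual ℝ V := LinearEquiv.ofBijective g ⟨ginj, gsurj⟩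
  have key : ∀ (X : Module.Dual ℝ V) (v : V), g (e.symm X) v = X v := by
    intro X v
    have h1 : e (e.symm X) = X := e.apply_symm_apply X
    conv_rhs => rw [← h1]
    rfl
  have hexA : ∀ a b : V, ∃ P : Module.End ℝ V, ∀ u v, g (P u) v = R u a b v := by
    intro a b
    refine ⟨e.symm.toLinearMap ∘ₗ
      { toFun := fun u => R u a b
        map_add' := by intro u u'; simp [map_add]
        map_smul' := by intro c u; simp [map_smul] }, fun u v => ?_⟩
    simpa using key (R u a b) v
  choose A hA using hexA
  have hexC : ∀ a b : V, ∃ P : Module.End ℝ V, ∀ u v, g (P u) v = R a b u v := by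
    intro a b
    refine ⟨e.symm.toLinearMap ∘ₗ
      { toFun := fun u => R a b u
        map_add' := by intro u u'; simp [map_add]
        map_smul' := by intro c u; simp [map_smul] }, fun u v => ?_⟩
    simpa using key (R a b u) v
  choose C hC using hexC
  obtain ⟨Y, hY⟩ : ∃ P : Module.End ℝ V, ∀ u v, g (P u) v = η u v := by
    refine ⟨e.symm.toLinearMap ∘ₗ
      { toFun := fun u => η u
        map_add' := by intro u u'; simp [map_add]
        map_smul' := by intro c u; simp [map_smul] }, fun u v => ?_⟩
    simpa using key (η u) v
  have opext : ∀ P Q : Module.End ℝ V, (∀ u v, g (P u) v = g (Q u) v) → P = Q := by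
    intro P Q h
    ext u
    have h0 : P u - Q u = 0 := by
      apply hgnd
      intro v
      rw [map_sub, LinearMap.sub_apply, h u v]
      ring
    exact sub_eq_zero.mp h0
  -- rank one operators
  obtain ⟨rk, rk_apply, tr_rk⟩ : ∃ rk : Module.Dual ℝ V → V → Module.End ℝ V,
      (∀ f v u, rk f v u = f u • v) ∧
      (∀ f v, LinearMap.trace ℝ V (rk f v) = f v) := by
    refine ⟨fun f v => dualTensorHom ℝ V V (f ⊗ₜ v), fun f v u => ?_, fun f v => ?_⟩
    · simp
    · simp
  -- trace basics
  have trcomm : ∀ P Q : Module.End ℝ V,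
      LinearMap.trace ℝ V (P ∘ₗ Q) = LinearMap.trace ℝ V (Q ∘ₗ P) := by
    intro P Q
    exact LinearMap.trace_comp_comm' Q P
  have trJ1 : LinearMap.trace ℝ V J1 = 0 := by
    have h1 : J1 = J2 ∘ₗ J3 := by ext v; exact h123 v
    have h2 : J3 ∘ₗ J2 = -J1 := by
      ext v; simp [LinearMap.comp_apply, j3j2]
    have h3 : LinearMap.trace ℝ V J1 = -LinearMap.trace ℝ V J1 := by
      conv_lhs => rw [h1, trcomm, h2]
      rw [map_neg]
    linarith
  have trJ2 : LinearMap.trace ℝ V J2 = 0 := by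
    have h1 : J2 = J3 ∘ₗ J1 := by ext v; exact h231 v
    have h2 : J1 ∘ₗ J3 = -J2 := by
      ext v; simp [LinearMap.comp_apply, j1j3]
    have h3 : LinearMap.trace ℝ V J2 = -LinearMap.trace ℝ V J2 := by
      conv_lhs => rw [h1, trcomm, h2]
      rw [map_neg]
    linarith
  -- trace of g-adjoint
  have trAdj : ∀ P Q : Module.End ℝ V, (∀ u v, g (P u) v = g (Q v) u) →
      LinearMap.trace ℝ V P = LinearMap.trace ℝ V Q := by
    intro P Q h
    have hQ : Q = (e.symm.conj ((Module.Dual.transpose (R := ℝ)) P)) := by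
      apply opext
      intro u v
      rw [LinearEquiv.conj_apply_apply, LinearEquiv.symm_symm, key]
      rw [Module.Dual.transpose_apply, LinearMap.comp_apply]
      have h4 : (e u) (P v) = g u (P v) := rfl
      rw [h4, hgsymm u (P v), h v u]
    rw [hQ, LinearMap.trace_conj', LinearMap.trace_transpose']
  have trC0 : ∀ a b, LinearMap.trace ℝ V (C a b) = 0 := by
    intro a b
    have h := trAdj (C a b) (-(C a b)) (fun u v => by
      rw [LinearMap.neg_apply, map_neg, LinearMap.neg_apply, hC a b u v, hC a b v u]
      linarith [hRb a b u v])
    rw [map_neg] at h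
    linarith
  have hρA : ∀ a b, ρ a b = LinearMap.trace ℝ V (A a b) := fun a b => hρ a b (A a b) (hA a b)
  have ρsymm : ∀ a b, ρ a b = ρ b a := by
    intro a b
    rw [hρA a b, hρA b a]
    exact trAdj _ _ (fun u v => by
      rw [hA a b u v, hA b a v u]
      linear_combination hRp u a b v + hRa b v u a - hRb v b u a)
  have trJ1A : ∀ a b, LinearMap.trace ℝ V (J1 ∘ₗ A (J1 a) b) = ρ a b := by
    intro a b
    rw [trcomm]
    have h : A (J1 a) b ∘ₗ J1 = A a b := by
      apply opext
      intro u v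
      rw [LinearMap.comp_apply, hA (J1 a) b (J1 u) v, hA a b u v]
      exact fpJ1 u a b v
    rw [h, hρA]
  have starstar : ∀ a b, LinearMap.trace ℝ V (J1 ∘ₗ C a (J1 b)) = ρ a b + ρ b a := by
    intro a b
    have hop : J1 ∘ₗ C a (J1 b) = J1 ∘ₗ A (J1 b) a + A a b := by
      apply opext
      intro u v
      rw [LinearMap.add_apply, map_add, LinearMap.add_apply]
      rw [LinearMap.comp_apply, LinearMap.comp_apply]
      rw [gJ1 (C a (J1 b) u) v, gJ1 (A (J1 b) a u) v, hC, hA, hA]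
      linear_combination -hRbianchi a (J1 b) u (J1 v) + hRa (J1 b) u a (J1 v) + hQK1 u a b v
    rw [hop, map_add, trJ1A b a, hρA a b]
    ring
  -- main operator identity (contraction of GcorrA over (z,w))
  have CT2op : ∀ x y, -(J1 ∘ₗ C x (J1 y)) - (J1 ∘ₗ A (J1 y) x)
      = C x y + A y x
        + (2*(η (J2 x) (J1 y) + η (J3 x) y)) • J2
        - rk (η (J1 y)) x
        - rk (g (J3 x)) (J3 (Y (J1 y)))
        + (η x (J1 y)) • (1 : Module.End ℝ V)
        + rk (η y) (J1 x)
        + rk (g (J2 x)) (J3 (Y y))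
        - (η x y) • J1 := by
    intro x y
    apply opext
    intro z v
    simp only [LinearMap.add_apply, LinearMap.sub_apply, LinearMap.neg_apply,
      LinearMap.smul_apply, LinearMap.comp_apply, Module.End.one_apply, map_add, map_sub,
      map_neg, map_smul, smul_eq_mul, rk_apply]
    rw [gJ1 (C x (J1 y) z) v, gJ1 (A (J1 y) x z) v, hC x (J1 y) z (J1 v),
      hA (J1 y) x z (J1 v), hC x y z v, hA y x z v]
    linear_combination (GcorrA x y z v) - hRa y z x v
      - (2*(η (J2 x) (J1 y) + η (J3 x) y)) * gJ2 z v
      + (g (J3 x) z) * gJ3 (Y (J1 y)) v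
      + (g (J3 x) z) * hY (J1 y) (J3 v)
      + (η (J1 y) (J3 v)) * hgsymm (J3 x) z
      - (η y z) * gJ1 x v
      - (g (J2 x) z) * gJ3 (Y y) v
      - (g (J2 x) z) * hY y (J3 v)
      - (η y (J3 v)) * hgsymm (J2 x) z
      + (η x y) * gJ1 z v
  have final1 : ∀ x y, ρ x y + 3 * ρ y x = -(4*(n:ℝ)) * η x (J1 y) := by
    intro x y
    have h := congrArg (LinearMap.trace ℝ V) (CT2op x y)
    simp only [map_add, map_sub, map_neg, map_smul, smul_eq_mul] at h
    rw [starstar x y, trJ1A y x, trC0 x y, ← hρA y x, trJ2, trJ1, tr_rk, tr_rk, tr_rk, tr_rk,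
      LinearMap.trace_one, hdim] at h
    have gt1 : g (J3 x) (J3 (Y (J1 y))) = -η (J1 y) x := by
      rw [hgJ3 x (Y (J1 y)), hgsymm x (Y (J1 y)), hY (J1 y) x]
    have gt2 : g (J2 x) (J3 (Y y)) = -η y (J1 x) := by
      have e1 : g (J1 x) (Y y) = -g x (J1 (Y y)) := gJ1 x (Y y)
      have e2 : g (Y y) (J1 x) = η y (J1 x) := hY _ _
      have e3 : g (J1 x) (Y y) = g (Y y) (J1 x) := hgsymm _ _
      rw [gJ2 x (J3 (Y y)), j2j3 (Y y)]
      linarith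
    rw [gt1, gt2] at h
    push_cast at h
    linarith
  intro x y
  have h1 := final1 y x
  have h2 := ρsymm x y
  have h3 := hηalt y (J1 x)
  linear_combination ((1:ℝ)/4) * h1 + ((1:ℝ)/4) * h2 - (n:ℝ) * h3
end

section
/- Let R be a curvature-like tensor on V satisfying the quaternionic Kähler curvature relations with associated alternating bilinear form η₁, and let ρ be its Ricci tensor. Then ρ(J₁x, J₁y) = ρ(x,y) for all x,y ∈ V, and η₁(x, J₁y) = −η₁(J₁x, y) for all x,y ∈ V. -/
theorem stmt6
    (n : ℕ) (hn : 1 ≤ n)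
    (V : Type) [AddCommGroup V] [Module ℝ V] [FiniteDimensional ℝ V]
    (hdim : Module.finrank ℝ V = 4 * n)
    (J1 J2 J3 : V →ₗ[ℝ] V)
    (hJ1 : ∀ x, J1 (J1 x) = -x) (hJ2 : ∀ x, J2 (J2 x) = -x) (hJ3 : ∀ x, J3 (J3 x) = -x)
    (h123 : ∀ x, J1 x = J2 (J3 x)) (h132 : ∀ x, J1 x = -J3 (J2 x))
    (h231 : ∀ x, J2 x = J3 (J1 x)) (h213 : ∀ x, J2 x = -J1 (J3 x))
    (h312 : ∀ x, J3 x = J1 (J2 x)) (h321 : ∀ x, J3 x = -J2 (J1 x))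
    (g : V →ₗ[ℝ] V →ₗ[ℝ] ℝ)
    (hgsymm : ∀ x y, g x y = g y x)
    (hgnd : ∀ x, (∀ y, g x y = 0) → x = 0)
    (hgJ1 : ∀ x y, g (J1 x) (J1 y) = g x y)
    (hgJ2 : ∀ x y, g (J2 x) (J2 y) = -g x y)
    (hgJ3 : ∀ x y, g (J3 x) (J3 y) = -g x y)
    (R : V →ₗ[ℝ] V →ₗ[ℝ] V →ₗ[ℝ] V →ₗ[ℝ] ℝ)
    (hRa : ∀ x y z w, R x y z w = -R y x z w)
    (hRb : ∀ x y z w, R x y z w = -R x y w z)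
    (hRp : ∀ x y z w, R x y z w = R z w x y)
    (hRbianchi : ∀ x y z w, R x y z w + R y z x w + R z x y w = 0)
    (η : V →ₗ[ℝ] V →ₗ[ℝ] ℝ)
    (hηalt : ∀ x y, η x y = -η y x)
    (hQK1 : ∀ x y z w, R x y (J1 z) (J1 w) = R x y z w)
    (hQK2 : ∀ x y z w, R x y (J2 z) (J2 w) = -R x y z w + η x y * g (J1 z) w)
    (hQK3 : ∀ x y z w, R x y (J3 z) (J3 w) = -R x y z w + η x y * g (J1 z) w)
    (ρ : V → V → ℝ)
    (hρ : ∀ x y, ∀ A : Module.End ℝ V, (∀ z w, g (A z) w = R z x y w) → ρ x y = LinearMap.trace ℝ V A)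
    :
    (∀ x y, ρ (J1 x) (J1 y) = ρ x y) ∧ (∀ x y, η x (J1 y) = -η (J1 x) y) := by
  -- g induces a linear equivalence V ≃ V*
  have hGinj : Function.Injective g := by
    intro a b hab
    have h0 : g (a - b) = 0 := by rw [map_sub, hab, sub_self]
    exact sub_eq_zero.mp (hgnd (a - b) (fun y => by rw [h0]; rfl))
  have hGsurj : Function.Surjective g :=
    (LinearMap.injective_iff_surjective_of_finrank_eq_finrank
      (Subspace.dual_finrank_eq (K := ℝ) (V := V)).symm).mp hGinj
  let e : V ≃ₗ[ℝ] (V →ₗ[ℝ] ℝ) := LinearEquiv.ofBijective g ⟨hGinj, hGsurj⟩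
  have he : ∀ u : V →ₗ[ℝ] ℝ, g (e.symm u) = u := fun u => e.apply_symm_apply u
  -- existence of the Ricci endomorphism
  have hAex : ∀ x y : V, ∃ A : Module.End ℝ V, ∀ z w, g (A z) w = R z x y w := by
    intro x y
    refine ⟨e.symm.toLinearMap ∘ₗ
      ⟨⟨fun z => R z x y, by intro a b; simp⟩, by intro c a; simp⟩, fun z w => ?_⟩
    simp only [LinearMap.comp_apply, LinearMap.coe_mk, AddHom.coe_mk,
      LinearEquiv.coe_coe, he]
  -- invariance of R under J1 in the first pair
  have hpair : ∀ x y z w, R (J1 x) (J1 y) z w = R x y z w := by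
    intro x y z w
    rw [hRp, hQK1, ← hRp]
  -- moving J1 across the last two slots
  have L1 : ∀ a b c d, R a b (J1 c) d = -R a b c (J1 d) := by
    intro a b c d
    have hd : d = -(J1 (J1 d)) := by rw [hJ1 d, neg_neg]
    calc R a b (J1 c) d = R a b (J1 c) (-(J1 (J1 d))) := by rw [← hd]
      _ = -R a b (J1 c) (J1 (J1 d)) := by rw [map_neg]
      _ = -R a b c (J1 d) := by rw [hQK1]
  have hmix : ∀ x y z w, R (J1 z) x y (J1 w) = R z (J1 x) (J1 y) w := by
    intro x y z w
    calc R (J1 z) x y (J1 w) = R y (J1 w) (J1 z) x := by rw [hRp]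
      _ = -R y (J1 w) z (J1 x) := L1 y (J1 w) z x
      _ = -R z (J1 x) y (J1 w) := by rw [hRp]
      _ = R z (J1 x) (J1 y) w := by have h := L1 z (J1 x) y w; linarith
  constructor
  · -- Ricci invariance
    intro x y
    obtain ⟨A, hA⟩ := hAex x y
    have hAtr := hρ x y A hA
    -- B := (-J1) ∘ A ∘ J1
    set B : Module.End ℝ V := (-J1) * A * J1 with hBdef
    have hB : ∀ z w, g (B z) w = R z (J1 x) (J1 y) w := by
      intro z w
      have h1 : g (B z) w = -g (J1 (A (J1 z))) w := by
        simp [hBdef, Module.End.mul_apply]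
      have h2 : g (J1 (A (J1 z))) w = -g (A (J1 z)) (J1 w) := by
        have := hgJ1 (A (J1 z)) (J1 w)
        rw [hJ1 w] at this
        rw [← this, map_neg, neg_neg]
      rw [h1, h2, neg_neg, hA, hmix]
    have hBtr := hρ (J1 x) (J1 y) B hB
    rw [hAtr, hBtr]
    have hJ1inv : J1 * (-J1) = (1 : Module.End ℝ V) := by
      ext v
      simp [Module.End.mul_apply, hJ1]
    calc LinearMap.trace ℝ V B
        = LinearMap.trace ℝ V ((-J1) * (A * J1)) := by rw [hBdef, mul_assoc]
      _ = LinearMap.trace ℝ V ((A * J1) * (-J1)) := LinearMap.trace_mul_comm ℝ _ _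
      _ = LinearMap.trace ℝ V (A * (J1 * (-J1))) := by rw [mul_assoc]
      _ = LinearMap.trace ℝ V A := by rw [hJ1inv, mul_one]
  · -- η invariance
    have hηJ : ∀ x y, η (J1 x) (J1 y) = η x y := by
      intro x y
      -- find z, w with g (J1 z) w ≠ 0
      have hnt : Nontrivial V := by
        have : 0 < Module.finrank ℝ V := by omega
        exact Module.finrank_pos_iff.mp this
      obtain ⟨v, hv⟩ := exists_ne (0 : V)
      have hvw : ∃ w, g v w ≠ 0 := by
        by_contra h
        push_neg at h
        exact hv (hgnd v h)
      obtain ⟨w, hw⟩ := hvw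
      set z := -(J1 v) with hz
      have hJz : J1 z = v := by rw [hz, map_neg, hJ1, neg_neg]
      have key : η (J1 x) (J1 y) * g (J1 z) w = η x y * g (J1 z) w := by
        have h1 := hQK2 (J1 x) (J1 y) z w
        rw [hpair, hpair, hQK2] at h1
        linarith
      rw [hJz] at key
      exact mul_right_cancel₀ hw key
    intro x y
    have h := hηJ (J1 x) y
    rw [hJ1 x] at h
    have h2 : η (-x) (J1 y) = -η x (J1 y) := by rw [map_neg]; rfl
    rw [h2] at h
    linarith
end

section
/- Let R be a curvature-like tensor on V satisfying the quaternionic Kähler curvature relations with associated alternating bilinear form η₁, and let ρ be its Ricci tensor. Then ρ = 0 if and only if R = 0. -/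
theorem stmt7
    (n : ℕ) (hn : 1 ≤ n)
    (V : Type) [AddCommGroup V] [Module ℝ V] [FiniteDimensional ℝ V]
    (hdim : Module.finrank ℝ V = 4 * n)
    (J1 J2 J3 : V →ₗ[ℝ] V)
    (hJ1 : ∀ x, J1 (J1 x) = -x) (hJ2 : ∀ x, J2 (J2 x) = -x) (hJ3 : ∀ x, J3 (J3 x) = -x)
    (h123 : ∀ x, J1 x = J2 (J3 x)) (h132 : ∀ x, J1 x = -J3 (J2 x))
    (h231 : ∀ x, J2 x = J3 (J1 x)) (h213 : ∀ x, J2 x = -J1 (J3 x))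
    (h312 : ∀ x, J3 x = J1 (J2 x)) (h321 : ∀ x, J3 x = -J2 (J1 x))
    (g : V →ₗ[ℝ] V →ₗ[ℝ] ℝ)
    (hgsymm : ∀ x y, g x y = g y x)
    (hgnd : ∀ x, (∀ y, g x y = 0) → x = 0)
    (hgJ1 : ∀ x y, g (J1 x) (J1 y) = g x y)
    (hgJ2 : ∀ x y, g (J2 x) (J2 y) = -g x y)
    (hgJ3 : ∀ x y, g (J3 x) (J3 y) = -g x y)
    (R : V →ₗ[ℝ] V →ₗ[ℝ] V →ₗ[ℝ] V →ₗ[ℝ] ℝ)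
    (hRa : ∀ x y z w, R x y z w = -R y x z w)
    (hRb : ∀ x y z w, R x y z w = -R x y w z)
    (hRp : ∀ x y z w, R x y z w = R z w x y)
    (hRbianchi : ∀ x y z w, R x y z w + R y z x w + R z x y w = 0)
    (η : V →ₗ[ℝ] V →ₗ[ℝ] ℝ)
    (hηalt : ∀ x y, η x y = -η y x)
    (hQK1 : ∀ x y z w, R x y (J1 z) (J1 w) = R x y z w)
    (hQK2 : ∀ x y z w, R x y (J2 z) (J2 w) = -R x y z w + η x y * g (J1 z) w)
    (hQK3 : ∀ x y z w, R x y (J3 z) (J3 w) = -R x y z w + η x y * g (J1 z) w)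
    (ρ : V → V → ℝ)
    (hρ : ∀ x y, ∀ A : Module.End ℝ V, (∀ z w, g (A z) w = R z x y w) → ρ x y = LinearMap.trace ℝ V A)
    :
    (∀ x y, ρ x y = 0) ↔ (∀ x y z w, R x y z w = 0) := by
  constructor
  · intro hρ0
    -- adjointness properties of the Jα with respect to g
    have hskew1 : ∀ x y, g (J1 x) y = - g x (J1 y) := by
      intro x y
      have h := hgJ1 x (J1 y)
      rw [hJ1 y] at h
      simp only [map_neg] at h
      linarith
    have hsa2 : ∀ x y, g (J2 x) y = g x (J2 y) := by
      intro x y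
      have h := hgJ2 x (J2 y)
      rw [hJ2 y] at h
      simp only [map_neg] at h
      linarith
    have hsa3 : ∀ x y, g (J3 x) y = g x (J3 y) := by
      intro x y
      have h := hgJ3 x (J3 y)
      rw [hJ3 y] at h
      simp only [map_neg] at h
      linarith
    -- slot-moving identities in the last two arguments
    have moveJ1 : ∀ x y z w, R x y (J1 z) w = - R x y z (J1 w) := by
      intro x y z w
      have h := hQK1 x y z (J1 w)
      rw [hJ1 w] at h
      simp only [map_neg] at h
      linarith
    have moveJ2 : ∀ x y z w, R x y (J2 z) w = R x y z (J2 w) + η x y * g (J3 z) w := by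
      intro x y z w
      have h := hQK2 x y z (J2 w)
      rw [hJ2 w] at h
      have h2 : g (J1 z) (J2 w) = - g (J3 z) w := by
        rw [h123 z]; exact hgJ2 (J3 z) w
      rw [h2] at h
      simp only [map_neg] at h
      linarith
    have moveJ3 : ∀ x y z w, R x y (J3 z) w = R x y z (J3 w) - η x y * g (J2 z) w := by
      intro x y z w
      have h := hQK3 x y z (J3 w)
      rw [hJ3 w] at h
      have h2 : g (J1 z) (J3 w) = g (J2 z) w := by
        rw [h132 z]
        simp only [map_neg, LinearMap.neg_apply]
        rw [hgJ3 (J2 z) w]; ring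
      rw [h2] at h
      simp only [map_neg] at h
      linarith
    -- first-pair versions
    have m1' : ∀ x y z w, R (J1 x) y z w = - R x (J1 y) z w := by
      intro x y z w
      rw [hRp (J1 x) y z w, moveJ1 z w x y, hRp z w x (J1 y)]
    have m2' : ∀ x y z w, R (J2 x) y z w = R x (J2 y) z w + η z w * g (J3 x) y := by
      intro x y z w
      rw [hRp (J2 x) y z w, moveJ2 z w x y, hRp z w x (J2 y)]
    have m3' : ∀ x y z w, R (J3 x) y z w = R x (J3 y) z w - η z w * g (J2 x) y := by
      intro x y z w
      rw [hRp (J3 x) y z w, moveJ3 z w x y, hRp z w x (J3 y)]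
    -- g as a linear equivalence onto the dual
    have hinj : Function.Injective g := by
      intro a b hab
      have h0 : ∀ y, g (a - b) y = 0 := by
        intro y
        rw [map_sub, LinearMap.sub_apply, hab, sub_self]
      exact sub_eq_zero.mp (hgnd _ h0)
    have hfr : Module.finrank ℝ V = Module.finrank ℝ (Module.Dual ℝ V) :=
      (Subspace.dual_finrank_eq).symm
    let e : V ≃ₗ[ℝ] Module.Dual ℝ V := g.linearEquivOfInjective hinj hfr
    have he : ∀ v, e v = g v := fun v => rfl
    have hesymm : ∀ u : Module.Dual ℝ V, g (e.symm u) = u := by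
      intro u
      rw [← he, e.apply_symm_apply]
    -- the operators A and L
    let Aop : V → V → Module.End ℝ V := fun x y =>
      (e.symm : Module.Dual ℝ V →ₗ[ℝ] V) ∘ₗ ((R.flip x).flip y)
    let Lop : V → V → Module.End ℝ V := fun x y =>
      (e.symm : Module.Dual ℝ V →ₗ[ℝ] V) ∘ₗ (R x y)
    have hA : ∀ x y z w, g (Aop x y z) w = R z x y w := by
      intro x y z w
      show g (e.symm (((R.flip x).flip y) z)) w = R z x y w
      rw [hesymm]
      rfl
    have hL : ∀ x y z w, g (Lop x y z) w = R x y z w := by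
      intro x y z w
      show g (e.symm ((R x y) z)) w = R x y z w
      rw [hesymm]
    -- extensionality via nondegeneracy
    have hext : ∀ F G : Module.End ℝ V, (∀ z w, g (F z) w = g (G z) w) → F = G := by
      intro F G h
      ext z
      have h0 : ∀ w, g (F z - G z) w = 0 := by
        intro w
        rw [map_sub, LinearMap.sub_apply, h z w, sub_self]
      exact sub_eq_zero.mp (hgnd _ h0)
    -- products of the J's as endomorphisms
    have hJ2J3 : J2 * J3 = J1 := by
      ext x; exact (h123 x).symm
    have hJ3J2 : J3 * J2 = -J1 := by
      ext x
      show J3 (J2 x) = -(J1 x)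
      rw [h132 x]
      simp
    have hJ3sq : J3 * J3 = -1 := by
      ext x
      show J3 (J3 x) = -(x)
      rw [hJ3 x]
    -- key endomorphism identities
    have hLJ2 : ∀ x y, Lop x y * J2 = J2 * Lop x y + η x y • J3 := by
      intro x y
      apply hext
      intro z w
      show g (Lop x y (J2 z)) w = g (J2 (Lop x y z) + η x y • J3 z) w
      rw [map_add, LinearMap.add_apply, map_smul, LinearMap.smul_apply]
      rw [hL, hsa2, hL]
      rw [moveJ2 x y z w]
      simp [smul_eq_mul]
    have hLA : ∀ x y, Lop x y * J1 = Aop y x * J1 - Aop x y * J1 := by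
      intro x y
      apply hext
      intro z w
      show g (Lop x y (J1 z)) w = g (Aop y x (J1 z) - Aop x y (J1 z)) w
      rw [map_sub, LinearMap.sub_apply, hL, hA, hA]
      have hb := hRbianchi x y (J1 z) w
      have ha := hRa y (J1 z) x w
      linarith
    have hAJ1 : ∀ x y, Aop x y * J1 = - Aop (J1 x) y := by
      intro x y
      apply hext
      intro z w
      show g (Aop x y (J1 z)) w = g (-(Aop (J1 x) y z)) w
      rw [map_neg, LinearMap.neg_apply, hA, hA]
      exact m1' z x y w
    have hρA : ∀ x y, ρ x y = LinearMap.trace ℝ V (Aop x y) := by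
      intro x y
      exact hρ x y (Aop x y) (fun z w => hA x y z w)
    -- trace identity: trace (Lop x y * J1) = -(2n) * η x y
    have htrL : ∀ x y, LinearMap.trace ℝ V (Lop x y * J1) = -(2 * (n : ℝ)) * η x y := by
      intro x y
      have h1 : Lop x y * J1 = J2 * (Lop x y * J3) + η x y • (J3 * J3) := by
        rw [← hJ2J3, ← mul_assoc, hLJ2, add_mul, smul_mul_assoc, mul_assoc]
      have h2 : LinearMap.trace ℝ V (J2 * (Lop x y * J3)) =
          - LinearMap.trace ℝ V (Lop x y * J1) := by
        rw [LinearMap.trace_mul_comm, mul_assoc, hJ3J2]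
        have : Lop x y * -J1 = -(Lop x y * J1) := mul_neg _ _
        rw [this, map_neg]
      have h3 : LinearMap.trace ℝ V (J3 * J3) = -(4 * (n : ℝ)) := by
        rw [hJ3sq, map_neg, LinearMap.trace_one, hdim]
        push_cast
        ring
      have h4 := congrArg (LinearMap.trace ℝ V) h1
      rw [map_add, map_smul, h2, h3, smul_eq_mul] at h4
      linarith
    -- hence η = 0
    have hη0 : ∀ x y, η x y = 0 := by
      intro x y
      have h1 := htrL x y
      have h2 := congrArg (LinearMap.trace ℝ V) (hLA x y)
      rw [map_sub] at h2
      have h3 := congrArg (LinearMap.trace ℝ V) (hAJ1 x y)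
      rw [map_neg] at h3
      have h4 := congrArg (LinearMap.trace ℝ V) (hAJ1 y x)
      rw [map_neg] at h4
      have h5 := hρA (J1 x) y
      have h6 := hρA (J1 y) x
      have h7 := hρ0 (J1 x) y
      have h8 := hρ0 (J1 y) x
      have hn' : (0 : ℝ) < 2 * (n : ℝ) := by
        have : (1 : ℝ) ≤ (n : ℝ) := by exact_mod_cast hn
        linarith
      have : -(2 * (n : ℝ)) * η x y = 0 := by
        rw [h1.symm, h2, h3, h4, ← h5, ← h6, h7, h8]
        ring
      have h9 : (2 * (n : ℝ)) * η x y = 0 := by linarith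
      exact (mul_eq_zero.mp h9).resolve_left (by linarith)
    -- η = 0 versions of the slot-moving identities
    have b0 : ∀ x y z w, R x y (J2 z) w = R x y z (J2 w) := by
      intro x y z w
      rw [moveJ2, hη0]; ring
    have b0' : ∀ x y z w, R (J2 x) y z w = R x (J2 y) z w := by
      intro x y z w
      rw [m2', hη0]; ring
    have c0 : ∀ x y z w, R x y (J3 z) w = R x y z (J3 w) := by
      intro x y z w
      rw [moveJ3, hη0]; ring
    have c0' : ∀ x y z w, R (J3 x) y z w = R x (J3 y) z w := by
      intro x y z w
      rw [m3', hη0]; ring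
    -- Bianchi trick: R x (J2 y) z (J2 w) = - R x y z w
    have IIa : ∀ x y z w, R x (J2 y) z (J2 w) = - R x y z w := by
      have star : ∀ x y z w,
          R y (J2 z) x (J2 w) + R z (J2 x) y (J2 w) = R x y z w := by
        intro x y z w
        have hb := hRbianchi (J2 x) (J2 y) z w
        have t1 : R (J2 x) (J2 y) z w = - R x y z w := by
          rw [b0' x (J2 y) z w, hJ2 y]
          simp only [map_neg, LinearMap.neg_apply]
        have t2 : R (J2 y) z (J2 x) w = R y (J2 z) x (J2 w) := by
          rw [b0 (J2 y) z x w, b0' y z x (J2 w)]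
        have t3 : R z (J2 x) (J2 y) w = R z (J2 x) y (J2 w) := b0 z (J2 x) y w
        linarith
      intro x y z w
      have e1 := star x y z w
      have e2 := star y z x w
      have e3 := star z x y w
      have hb := hRbianchi x y z w
      linarith
    have IIb : ∀ x y z w, R x (J3 y) z (J3 w) = - R x y z w := by
      have star : ∀ x y z w,
          R y (J3 z) x (J3 w) + R z (J3 x) y (J3 w) = R x y z w := by
        intro x y z w
        have hb := hRbianchi (J3 x) (J3 y) z w
        have t1 : R (J3 x) (J3 y) z w = - R x y z w := by
          rw [c0' x (J3 y) z w, hJ3 y]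
          simp only [map_neg, LinearMap.neg_apply]
        have t2 : R (J3 y) z (J3 x) w = R y (J3 z) x (J3 w) := by
          rw [c0 (J3 y) z x w, c0' y z x (J3 w)]
        have t3 : R z (J3 x) (J3 y) w = R z (J3 x) y (J3 w) := c0 z (J3 x) y w
        linarith
      intro x y z w
      have e1 := star x y z w
      have e2 := star y z x w
      have e3 := star z x y w
      have hb := hRbianchi x y z w
      linarith
    have III : ∀ x y z w, R x (J1 y) z (J1 w) = R x y z w := by
      intro x y z w
      rw [h123 y, h123 w, IIa x (J3 y) z (J3 w), IIb x y z w]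
      ring
    -- conclusion: R is symmetric in the first two slots, hence zero
    have key : ∀ x y z w, R x y z w = R y x z w := by
      intro x y z w
      have s1 : R x y z w = R x (J1 y) z (J1 w) := (III x y z w).symm
      have s2 : R (J1 x) y z (J1 w) = - R x (J1 y) z (J1 w) := m1' x y z (J1 w)
      have s3 : R (J1 x) y z (J1 w) = - R y (J1 x) z (J1 w) := hRa (J1 x) y z (J1 w)
      have s4 : R y (J1 x) z (J1 w) = R y x z w := III y x z w
      linarith
    intro x y z w
    have h1 := key x y z w
    have h2 := hRa x y z w
    linarith
  · intro hR0 x y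
    have h0 : ∀ z w, g ((0 : Module.End ℝ V) z) w = R z x y w := by
      intro z w
      rw [hR0 z x y w]
      simp
    rw [hρ x y 0 h0, map_zero]
end

section
/- Assume n ≥ 2. Let R be a curvature-like tensor on V satisfying the quaternionic Kähler curvature relations with associated alternating bilinear form η₁, and let ρ be its Ricci tensor. Then ρ is hybrid with respect to J₂ and J₃: ρ(J₂y, J₂z) = ρ(J₃y, J₃z) = −ρ(y,z) for all y,z ∈ V. -/
set_option maxHeartbeats 1000000 in
theorem stmt9
    (n : ℕ) (hn : 2 ≤ n)
    (V : Type) [AddCommGroup V] [Module ℝ V] [FiniteDimensional ℝ V]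
    (hdim : Module.finrank ℝ V = 4 * n)
    (J1 J2 J3 : V →ₗ[ℝ] V)
    (hJ1 : ∀ x, J1 (J1 x) = -x) (hJ2 : ∀ x, J2 (J2 x) = -x) (hJ3 : ∀ x, J3 (J3 x) = -x)
    (h123 : ∀ x, J1 x = J2 (J3 x)) (h132 : ∀ x, J1 x = -J3 (J2 x))
    (h231 : ∀ x, J2 x = J3 (J1 x)) (h213 : ∀ x, J2 x = -J1 (J3 x))
    (h312 : ∀ x, J3 x = J1 (J2 x)) (h321 : ∀ x, J3 x = -J2 (J1 x))
    (g : V →ₗ[ℝ] V →ₗ[ℝ] ℝ)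
    (hgsymm : ∀ x y, g x y = g y x)
    (hgnd : ∀ x, (∀ y, g x y = 0) → x = 0)
    (hgJ1 : ∀ x y, g (J1 x) (J1 y) = g x y)
    (hgJ2 : ∀ x y, g (J2 x) (J2 y) = -g x y)
    (hgJ3 : ∀ x y, g (J3 x) (J3 y) = -g x y)
    (R : V →ₗ[ℝ] V →ₗ[ℝ] V →ₗ[ℝ] V →ₗ[ℝ] ℝ)
    (hRa : ∀ x y z w, R x y z w = -R y x z w)
    (hRb : ∀ x y z w, R x y z w = -R x y w z)
    (hRp : ∀ x y z w, R x y z w = R z w x y)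
    (hRbianchi : ∀ x y z w, R x y z w + R y z x w + R z x y w = 0)
    (η : V →ₗ[ℝ] V →ₗ[ℝ] ℝ)
    (hηalt : ∀ x y, η x y = -η y x)
    (hQK1 : ∀ x y z w, R x y (J1 z) (J1 w) = R x y z w)
    (hQK2 : ∀ x y z w, R x y (J2 z) (J2 w) = -R x y z w + η x y * g (J1 z) w)
    (hQK3 : ∀ x y z w, R x y (J3 z) (J3 w) = -R x y z w + η x y * g (J1 z) w)
    (ρ : V → V → ℝ)
    (hρ : ∀ x y, ∀ A : Module.End ℝ V, (∀ z w, g (A z) w = R z x y w) → ρ x y = LinearMap.trace ℝ V A)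
    :
    ∀ y z, ρ (J2 y) (J2 z) = -ρ y z ∧ ρ (J3 y) (J3 z) = -ρ y z := by
  -- J algebra
  have j12 : ∀ x, J1 (J2 x) = J3 x := fun x => (h312 x).symm
  have j13 : ∀ x, J1 (J3 x) = -J2 x := fun x => by rw [h213 x, neg_neg]
  have j21 : ∀ x, J2 (J1 x) = -J3 x := fun x => by rw [h321 x, neg_neg]
  have j23 : ∀ x, J2 (J3 x) = J1 x := fun x => (h123 x).symm
  have j31 : ∀ x, J3 (J1 x) = J2 x := fun x => (h231 x).symm
  have j32 : ∀ x, J3 (J2 x) = -J1 x := fun x => by rw [h132 x, neg_neg]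
  -- g adjointness
  have gk : ∀ x y, g (J1 x) y = -g x (J1 y) := by
    intro x y
    have h := hgJ1 x (J1 y)
    rw [hJ1 y] at h
    simp only [map_neg, LinearMap.neg_apply] at h
    linarith
  have g2 : ∀ x y, g (J2 x) y = g x (J2 y) := by
    intro x y
    have h := hgJ2 x (J2 y)
    rw [hJ2 y] at h
    simp only [map_neg, LinearMap.neg_apply] at h
    linarith
  have g3 : ∀ x y, g (J3 x) y = g x (J3 y) := by
    intro x y
    have h := hgJ3 x (J3 y)
    rw [hJ3 y] at h
    simp only [map_neg, LinearMap.neg_apply] at h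
    linarith
  have gswap2 : ∀ u v, g (J2 u) v = g (J2 v) u := by
    intro u v; rw [g2, hgsymm]
  -- nondegeneracy machinery
  have hginj : Function.Injective g := by
    intro u v huv
    have h : ∀ y, g (u - v) y = 0 := by intro y; rw [map_sub]; simp [huv]
    exact sub_eq_zero.mp (hgnd _ h)
  have hgsurj : Function.Surjective g :=
    (LinearMap.injective_iff_surjective_of_finrank_eq_finrank
      (Subspace.dual_finrank_eq).symm).mp hginj
  have hgbij : Function.Bijective g := ⟨hginj, hgsurj⟩
  set geq := LinearEquiv.ofBijective g hgbij with hgeq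
  have hgeqs : ∀ (f : Module.Dual ℝ V) (v : V), g (geq.symm f) v = f v := by
    intro f v
    have h1 : g (geq.symm f) = f := by
      have := geq.apply_symm_apply f
      rwa [hgeq, LinearEquiv.ofBijective_apply] at this
    rw [h1]
  -- nontrivial, pick z₀ w₀ with g (J1 z₀) w₀ ≠ 0
  have hpos : 0 < Module.finrank ℝ V := by rw [hdim]; omega
  have hnt : Nontrivial V := Module.nontrivial_of_finrank_pos hpos
  obtain ⟨z₀, hz₀⟩ := exists_ne (0 : V)
  have hJ1z₀ : J1 z₀ ≠ 0 := by
    intro h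
    apply hz₀
    have h2 := hJ1 z₀
    rw [h, map_zero] at h2
    exact neg_eq_zero.mp h2.symm |>.symm ▸ rfl
  obtain ⟨w₀, hw₀⟩ : ∃ w, g (J1 z₀) w ≠ 0 := by
    by_contra hall
    push_neg at hall
    exact hJ1z₀ (hgnd _ hall)
  -- R invariance under J1 in first pair
  have RJ1 : ∀ x y z w, R (J1 x) (J1 y) z w = R x y z w := by
    intro x y z w
    rw [hRp (J1 x) (J1 y) z w, hQK1 z w x y, ← hRp x y z w]
  -- J1-invariance of η
  have I1 : ∀ x y, η (J1 x) (J1 y) = η x y := by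
    intro x y
    have key : (η (J1 x) (J1 y) - η x y) * g (J1 z₀) w₀ = 0 := by
      have h1 := hQK2 (J1 x) (J1 y) z₀ w₀
      have h2 := hQK2 x y z₀ w₀
      have h3 := RJ1 x y (J2 z₀) (J2 w₀)
      have h4 := RJ1 x y z₀ w₀
      linear_combination -h1 + h2 + h3 + h4
    have := mul_eq_zero.mp key
    rcases this with h | h
    · linarith
    · exact absurd h hw₀
  -- L1
  have L1 : ∀ x y z w, R (J2 x) (J2 y) z w = -R x y z w + η z w * g (J1 x) y := by
    intro x y z w
    rw [hRp (J2 x) (J2 y) z w, hQK2 z w x y, ← hRp x y z w]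
  -- mu identity
  have mu : ∀ x y z w,
      (η (J2 x) (J2 y) + η x y) * g (J1 z) w = (η (J2 z) (J2 w) + η z w) * g (J1 x) y := by
    intro x y z w
    have h1 := hQK2 (J2 x) (J2 y) z w
    have h2 := L1 x y z w
    have h3 := L1 x y (J2 z) (J2 w)
    have h4 := hQK2 x y z w
    linear_combination -h1 + h2 + h3 - h4
  set c : ℝ := (η (J2 z₀) (J2 w₀) + η z₀ w₀) / g (J1 z₀) w₀ with hc
  have mu2 : ∀ x y, η (J2 x) (J2 y) + η x y = c * g (J1 x) y := by
    intro x y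
    have h := mu x y z₀ w₀
    rw [hc]
    field_simp
    linear_combination h
  -- swap rules
  have S34 : ∀ x y z w, R x y (J2 z) w = R x y z (J2 w) + η x y * g z (J3 w) := by
    intro x y z w
    have h := hQK2 x y z (J2 w)
    rw [hJ2 w] at h
    rw [gk z (J2 w), j12 w] at h
    simp only [map_neg, LinearMap.neg_apply] at h
    linarith
  have S12 : ∀ x y z w, R (J2 x) y z w = R x (J2 y) z w + η z w * g x (J3 y) := by
    intro x y z w
    rw [hRp (J2 x) y z w, S34 z w x y, ← hRp x (J2 y) z w]
  -- the big identity (C)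
  have C : ∀ x y z w,
      η z w * g (J1 x) y - η (J2 y) w * g z (J3 x) - η x y * g (J1 z) w
      + η (J2 y) z * g x (J3 w) + η x (J2 w) * g y (J3 z) + η (J2 z) x * g y (J3 w) = 0 := by
    intro x y z w
    have b1 := hRbianchi (J2 x) (J2 y) z w
    have b2 := hRbianchi x y (J2 z) (J2 w)
    have e1 := L1 x y z w
    have e2 := S12 z x (J2 y) w   -- R (J2 z) x (J2 y) w = R z (J2 x) (J2 y) w + η (J2 y) w * g z (J3 x)
    have e3 := hQK2 x y z w
    have e4 := S12 y z x (J2 w)   -- R (J2 y) z x (J2 w) = R y (J2 z) x (J2 w) + η x (J2 w) * g y (J3 z)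
    have e5 := S34 (J2 y) z x w   -- R (J2 y) z (J2 x) w = R (J2 y) z x (J2 w) + η (J2 y) z * g x (J3 w)
    have e6 := S34 (J2 z) x y w   -- R (J2 z) x (J2 y) w = R (J2 z) x y (J2 w) + η (J2 z) x * g y (J3 w)
    linear_combination b1 - b2 - e1 + e2 + e3 - e4 - e5 - e6

  -- tau and its properties
  set τ : V → V → ℝ := fun u v => η (J2 u) v - c / 2 * g (J3 u) v with hτdef
  have hτ : ∀ u v, τ u v = η (J2 u) v - c / 2 * g (J3 u) v := fun u v => rfl
  have E2 : ∀ u v, η (J2 u) v = τ u v + c / 2 * g (J3 u) v := by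
    intro u v; rw [hτ]; ring
  have E0 : ∀ u v, η u v = -τ (J2 u) v + c / 2 * g (J1 u) v := by
    intro u v
    rw [hτ (J2 u) v, hJ2 u, j32 u]
    simp only [map_neg, LinearMap.neg_apply]
    ring
  have τalt : ∀ u v, τ u v = -τ v u := by
    intro u v
    have h := mu2 (J2 u) v
    rw [hJ2 u, j12 u] at h
    simp only [map_neg, LinearMap.neg_apply] at h
    have h2 := hηalt u (J2 v)
    have h3 : g (J3 v) u = g (J3 u) v := by rw [g3 v u]; exact hgsymm v (J3 u)
    rw [hτ u v, hτ v u]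
    linear_combination h + h2 - (c/2) * h3
  have τneg2 : ∀ u w, τ u (-w) = -τ u w := by
    intro u w; rw [hτ, hτ]; simp only [map_neg]; ring
  have M2 : ∀ u v, τ (J2 u) v = τ u (J2 v) := by
    intro u v
    have h1 := mu2 u v
    have h2 : g (J3 u) (J2 v) = g (J1 u) v := by
      rw [g3 u (J2 v), j32 v]
      simp only [map_neg]
      rw [gk u v]
    rw [hτ (J2 u) v, hτ u (J2 v), hJ2 u, j32 u, h2]
    simp only [map_neg, LinearMap.neg_apply]
    linear_combination -h1
  have M1 : ∀ u v, τ (J1 u) v = τ u (J1 v) := by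
    intro u v
    have h1 := I1 (J2 u) (J1 v)
    rw [j12 u, hJ1 v] at h1
    simp only [map_neg] at h1
    have h2 : g (J3 u) (J1 v) = g (J2 u) v := by
      rw [g3 u (J1 v), j31 v, ← g2 u v]
    rw [hτ (J1 u) v, hτ u (J1 v), j21 u, j31 u, h2]
    simp only [map_neg, LinearMap.neg_apply]
    linear_combination h1
  have M3 : ∀ u v, τ (J3 u) v = -τ u (J3 v) := by
    intro u v
    rw [← j12 u, M1, M2, j21 v, τneg2]
  have τ22 : ∀ u v, τ (J2 u) (J2 v) = -τ u v := by
    intro u v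
    rw [M2, hJ2 v, τneg2]
  -- representer operator T
  set H : V →ₗ[ℝ] V := geq.symm.toLinearMap ∘ₗ (η : V →ₗ[ℝ] Module.Dual ℝ V) with hHdef
  have hH : ∀ u v, g (H u) v = η u v := by
    intro u v
    exact hgeqs (η u) v
  set T : V →ₗ[ℝ] V := H ∘ₗ J2 - (c / 2) • J3 with hTdef
  have hT : ∀ u v, g (T u) v = τ u v := by
    intro u v
    have hTu : T u = H (J2 u) - (c / 2) • J3 u := rfl
    rw [hτ, hTu, map_sub, map_smul]
    simp only [LinearMap.sub_apply, LinearMap.smul_apply, smul_eq_mul]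
    rw [hH]
  have hTr : ∀ u v, τ u v = g (T u) v := fun u v => (hT u v).symm
  have mτ1 : ∀ u v, τ (J1 v) u = g (J1 (T u)) v := by
    intro u v
    rw [τalt (J1 v) u, hTr u (J1 v), gk (T u) v]
  -- identity (G)
  have G : ∀ x y z w,
      τ (J2 z) w * g (J1 x) y - τ (J2 x) y * g (J1 z) w + τ y w * g (J3 z) x
      - τ y z * g (J3 x) w + τ w x * g (J3 y) z - τ z x * g (J3 y) w = 0 := by
    intro x y z w
    have hC := C x y z w
    rw [E0 z w, E0 x y, E2 y w, E2 y z, E2 z x, hηalt x (J2 w), E2 w x] at hC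
    have s1 : g z (J3 x) = g (J3 z) x := (g3 z x).symm
    have s2 : g x (J3 w) = g (J3 x) w := (g3 x w).symm
    have s3' : g y (J3 z) = g (J3 y) z := (g3 y z).symm
    have s4 : g y (J3 w) = g (J3 y) w := (g3 y w).symm
    have s5 : g (J3 w) x = g (J3 x) w := by rw [g3 w x, hgsymm w (J3 x), g3 x w]
    linear_combination (-1) * hC + (- τ y w - (c/2) * g (J3 y) w) * s1
      + (τ y z + (c/2) * g (J3 y) z) * s2 + (-τ w x - (c/2) * g (J3 w) x) * s3'
      + (τ z x + (c/2) * g (J3 z) x) * s4 + (-(c/2) * g (J3 y) z) * s5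

  have τneg1 : ∀ u v, τ (-u) v = -τ u v := by
    intro u v; rw [hτ, hτ]; simp only [map_neg, LinearMap.neg_apply]; ring
  have trank : ∀ (f : V →ₗ[ℝ] ℝ) (v : V), LinearMap.trace ℝ V (f.smulRight v) = f v := by
    intro f v
    have h : f.smulRight v = dualTensorHom ℝ V V (f ⊗ₜ v) := by ext x; simp
    rw [h, LinearMap.trace_eq_contract_apply, contractLeft_apply]
  have τzero : ∀ a b, τ a b = 0 := by
    intro a b
    set Φ : V →ₗ[ℝ] V :=
      (-2 * τ a b) • (LinearMap.id : V →ₗ[ℝ] V)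
      + (g.flip (J3 a)).smulRight (J1 (T (J2 b)))
      + (g.flip (J1 b)).smulRight (J1 (T a))
      + (g.flip (T (J2 b))).smulRight (J2 a)
      + (g.flip (T a)).smulRight b
      - (g.flip (J1 a)).smulRight (J1 (T b))
      - (g.flip (J3 b)).smulRight (J1 (T (J2 a)))
      - (g.flip (T b)).smulRight a
      - (g.flip (T (J2 a))).smulRight (J2 b) with hΦ
    have hΦx : ∀ x, Φ x = (-2 * τ a b) • x + g x (J3 a) • J1 (T (J2 b)) + g x (J1 b) • J1 (T a)
        + g x (T (J2 b)) • J2 a + g x (T a) • b - g x (J1 a) • J1 (T b)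
        - g x (J3 b) • J1 (T (J2 a)) - g x (T b) • a - g x (T (J2 a)) • J2 b := by
      intro x
      simp [hΦ, LinearMap.smulRight_apply, LinearMap.flip_apply]
    have claim1 : ∀ x ygen, g (Φ x) ygen = 0 := by
      intro x y
      have hG1 := G x (J1 y) a (J2 b)
      have hG2 := G x (J1 y) (J2 a) b
      have a1 : g (J1 a) (J2 b) = -g (J3 a) b := by
        rw [gk a (J2 b), j12 b, g3 a b]
      have a2 : g (J3 x) (J2 b) = -g x (J1 b) := by
        rw [g3 x (J2 b), j32 b]; simp only [map_neg]
      rw [τ22 a b, hgJ1 x y, a1, mτ1 (J2 b) y, hgsymm (J3 a) x, mτ1 a y, a2,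
          hTr (J2 b) x, hgsymm (T (J2 b)) x, j31 y, gswap2 y a, hTr a x, hgsymm (T a) x,
          hgJ2 y b, hgsymm y b] at hG1
      have a3 : g (J3 (J2 a)) x = -g x (J1 a) := by
        rw [j32 a]; simp only [map_neg, LinearMap.neg_apply]; rw [hgsymm (J1 a) x]
      rw [hJ2 a, τneg1 a b, hgJ1 x y, j12 a, mτ1 b y, a3, mτ1 (J2 a) y, g3 x b,
          hTr b x, hgsymm (T b) x, j31 y, hgJ2 y a, hgsymm y a, hTr (J2 a) x,
          hgsymm (T (J2 a)) x, gswap2 y b] at hG2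
      rw [hΦx x]
      simp only [map_add, map_sub, map_smul, LinearMap.add_apply, LinearMap.sub_apply,
        LinearMap.smul_apply, smul_eq_mul]
      linear_combination hG1 + hG2
    have hΦ0 : Φ = 0 := by
      apply LinearMap.ext
      intro x
      rw [LinearMap.zero_apply]
      exact hgnd _ (claim1 x)
    have t2 : g (J1 (T (J2 b))) (J3 a) = τ a b := by
      rw [gk (T (J2 b)) (J3 a), j13 a]
      simp only [map_neg, neg_neg]
      rw [hT, τ22 b a, τalt a b]
    have t3 : g (J1 (T a)) (J1 b) = τ a b := by rw [hgJ1 (T a) b, hT]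
    have t4 : g (J2 a) (T (J2 b)) = τ a b := by
      rw [hgsymm (J2 a) (T (J2 b)), hT, τ22 b a, τalt a b]
    have t5 : g b (T a) = τ a b := by rw [hgsymm b (T a), hT]
    have t6 : g (J1 (T b)) (J1 a) = -τ a b := by rw [hgJ1 (T b) a, hT, τalt b a]
    have t7 : g (J1 (T (J2 a))) (J3 b) = -τ a b := by
      rw [gk (T (J2 a)) (J3 b), j13 b]
      simp only [map_neg, neg_neg]
      rw [hT, τ22 a b]
    have t8 : g a (T b) = -τ a b := by rw [hgsymm a (T b), hT, τalt b a]
    have t9 : g (J2 b) (T (J2 a)) = -τ a b := by rw [hgsymm (J2 b) (T (J2 a)), hT, τ22 a b]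
    have htr : LinearMap.trace ℝ V Φ
        = -2 * τ a b * (Module.finrank ℝ V : ℝ)
          + g (J1 (T (J2 b))) (J3 a) + g (J1 (T a)) (J1 b) + g (J2 a) (T (J2 b)) + g b (T a)
          - g (J1 (T b)) (J1 a) - g (J1 (T (J2 a))) (J3 b) - g a (T b)
          - g (J2 b) (T (J2 a)) := by
      rw [hΦ]
      simp only [map_add, map_sub, map_smul, trank, LinearMap.flip_apply, smul_eq_mul,
        LinearMap.trace_id]
      try ring
    rw [hΦ0, map_zero, hdim] at htr
    rw [t2, t3, t4, t5, t6, t7, t8, t9] at htr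
    have hcast : ((4 * n : ℕ) : ℝ) = 4 * (n : ℝ) := by push_cast; ring
    rw [hcast] at htr
    have hne : (8 : ℝ) - 8 * (n : ℝ) ≠ 0 := by
      have h2 : (2 : ℝ) ≤ (n : ℝ) := by exact_mod_cast hn
      intro h; linarith
    have hfac : τ a b * ((8 : ℝ) - 8 * (n : ℝ)) = 0 := by linear_combination -htr
    exact (mul_eq_zero.mp hfac).resolve_right hne
  have ηform : ∀ u v, η u v = c / 2 * g (J1 u) v := by
    intro u v
    rw [E0 u v, τzero]
    ring

  -- J3 swap rules
  have S34' : ∀ x y z w, R x y (J3 z) w = R x y z (J3 w) - η x y * g z (J2 w) := by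
    intro x y z w
    have h := hQK3 x y z (J3 w)
    rw [hJ3 w, gk z (J3 w), j13 w] at h
    simp only [map_neg, LinearMap.neg_apply, neg_neg] at h
    linarith
  have S12' : ∀ x y z w, R (J3 x) y z w = R x (J3 y) z w - η z w * g x (J2 y) := by
    intro x y z w
    rw [hRp (J3 x) y z w, S34' z w x y, ← hRp x (J3 y) z w]
  intro y z
  -- representer A₀ for (y,z)
  set M : V →ₗ[ℝ] Module.Dual ℝ V :=
    { toFun := fun u => R u y z
      map_add' := by intros; simp
      map_smul' := by intros; simp } with hM
  set A₀ : Module.End ℝ V := geq.symm.toLinearMap ∘ₗ M with hA₀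
  have hA : ∀ u w, g (A₀ u) w = R u y z w := by
    intro u w
    exact hgeqs (M u) w
  have hρ0 : ρ y z = LinearMap.trace ℝ V A₀ := hρ y z A₀ hA
  -- traces of conjugated operators
  have hsq2 : (J2 * J2 : Module.End ℝ V) = -1 := by
    ext x; simp [Module.End.mul_apply, hJ2 x]
  have hsq3 : (J3 * J3 : Module.End ℝ V) = -1 := by
    ext x; simp [Module.End.mul_apply, hJ3 x]
  constructor
  · -- J2 case
    set A2 : Module.End ℝ V := J2 * A₀ * J2 with hA2def
    have hA2 : ∀ u w, g (A2 u) w = R u (J2 y) (J2 z) w := by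
      intro u w
      have h0 : A2 u = J2 (A₀ (J2 u)) := rfl
      rw [h0, g2 (A₀ (J2 u)) w, hA (J2 u) (J2 w)]
      have e1 := S12 u y z (J2 w)
      have e2 := S34 u (J2 y) z w
      have q1 : η z (J2 w) = -(c/2) * g z (J3 w) := by
        rw [ηform z (J2 w), gk z (J2 w), j12 w]; ring
      have q2 : η u (J2 y) = -(c/2) * g u (J3 y) := by
        rw [ηform u (J2 y), gk u (J2 y), j12 y]; ring
      linear_combination e1 - e2 + g u (J3 y) * q1 - g z (J3 w) * q2
    have htrA2 : LinearMap.trace ℝ V A2 = -LinearMap.trace ℝ V A₀ := by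
      rw [hA2def, LinearMap.trace_mul_comm, ← mul_assoc, hsq2, neg_one_mul, map_neg]
    rw [hρ (J2 y) (J2 z) A2 hA2, htrA2, hρ0]
  · -- J3 case
    set A3 : Module.End ℝ V := J3 * A₀ * J3 with hA3def
    have hA3 : ∀ u w, g (A3 u) w = R u (J3 y) (J3 z) w := by
      intro u w
      have h0 : A3 u = J3 (A₀ (J3 u)) := rfl
      rw [h0, g3 (A₀ (J3 u)) w, hA (J3 u) (J3 w)]
      have e1 := S12' u y z (J3 w)
      have e2 := S34' u (J3 y) z w
      have q1 : η z (J3 w) = (c/2) * g z (J2 w) := by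
        rw [ηform z (J3 w), gk z (J3 w), j13 w]
        simp only [map_neg, neg_neg]
        try ring
      have q2 : η u (J3 y) = (c/2) * g u (J2 y) := by
        rw [ηform u (J3 y), gk u (J3 y), j13 y]
        simp only [map_neg, neg_neg]
        try ring
      linear_combination e1 - e2 - g u (J2 y) * q1 + g z (J2 w) * q2
    have htrA3 : LinearMap.trace ℝ V A3 = -LinearMap.trace ℝ V A₀ := by
      rw [hA3def, LinearMap.trace_mul_comm, ← mul_assoc, hsq3, neg_one_mul, map_neg]
    rw [hρ (J3 y) (J3 z) A3 hA3, htrA3, hρ0]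
end

section
/- Let R be a curvature-like tensor on V satisfying the quaternionic Kähler curvature relations with associated alternating bilinear form η₁, and let ρ be its Ricci tensor. Then for all x,y,z,w ∈ V: R(J₂x,J₂y,J₂z,J₂w) = R(J₃x,J₃y,J₃z,J₃w) = R(x,y,z,w) − (1/n)·g(x,J₁y)·ρ(J₁z,w) + (1/n)·ρ(J₂x,J₃y)·g(J₁z,w), and moreover R(J₁x,J₁y,J₁z,J₁w) = R(x,y,z,w). -/
set_option maxHeartbeats 1000000 in

theorem stmt10
    (n : ℕ) (hn : 1 ≤ n)
    (V : Type) [AddCommGroup V] [Module ℝ V] [FiniteDimensional ℝ V]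
    (hdim : Module.finrank ℝ V = 4 * n)
    (J1 J2 J3 : V →ₗ[ℝ] V)
    (hJ1 : ∀ x, J1 (J1 x) = -x) (hJ2 : ∀ x, J2 (J2 x) = -x) (hJ3 : ∀ x, J3 (J3 x) = -x)
    (h123 : ∀ x, J1 x = J2 (J3 x)) (h132 : ∀ x, J1 x = -J3 (J2 x))
    (h231 : ∀ x, J2 x = J3 (J1 x)) (h213 : ∀ x, J2 x = -J1 (J3 x))
    (h312 : ∀ x, J3 x = J1 (J2 x)) (h321 : ∀ x, J3 x = -J2 (J1 x))
    (g : V →ₗ[ℝ] V →ₗ[ℝ] ℝ)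
    (hgsymm : ∀ x y, g x y = g y x)
    (hgnd : ∀ x, (∀ y, g x y = 0) → x = 0)
    (hgJ1 : ∀ x y, g (J1 x) (J1 y) = g x y)
    (hgJ2 : ∀ x y, g (J2 x) (J2 y) = -g x y)
    (hgJ3 : ∀ x y, g (J3 x) (J3 y) = -g x y)
    (R : V →ₗ[ℝ] V →ₗ[ℝ] V →ₗ[ℝ] V →ₗ[ℝ] ℝ)
    (hRa : ∀ x y z w, R x y z w = -R y x z w)
    (hRb : ∀ x y z w, R x y z w = -R x y w z)
    (hRp : ∀ x y z w, R x y z w = R z w x y)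
    (hRbianchi : ∀ x y z w, R x y z w + R y z x w + R z x y w = 0)
    (η : V →ₗ[ℝ] V →ₗ[ℝ] ℝ)
    (hηalt : ∀ x y, η x y = -η y x)
    (hQK1 : ∀ x y z w, R x y (J1 z) (J1 w) = R x y z w)
    (hQK2 : ∀ x y z w, R x y (J2 z) (J2 w) = -R x y z w + η x y * g (J1 z) w)
    (hQK3 : ∀ x y z w, R x y (J3 z) (J3 w) = -R x y z w + η x y * g (J1 z) w)
    (ρ : V → V → ℝ)
    (hρ : ∀ x y, ∀ A : Module.End ℝ V, (∀ z w, g (A z) w = R z x y w) → ρ x y = LinearMap.trace ℝ V A)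
    :
    ∀ x y z w,
      R (J1 x) (J1 y) (J1 z) (J1 w) = R x y z w ∧
      R (J2 x) (J2 y) (J2 z) (J2 w) =
        R x y z w - (1 / (n : ℝ)) * g x (J1 y) * ρ (J1 z) w
          + (1 / (n : ℝ)) * ρ (J2 x) (J3 y) * g (J1 z) w ∧
      R (J3 x) (J3 y) (J3 z) (J3 w) =
        R x y z w - (1 / (n : ℝ)) * g x (J1 y) * ρ (J1 z) w
          + (1 / (n : ℝ)) * ρ (J2 x) (J3 y) * g (J1 z) w := by
  classical
  have hn0 : (n : ℝ) ≠ 0 := Nat.cast_ne_zero.mpr (by omega)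
  -- metric compatibility, one-sided versions
  have gJ1s : ∀ a b, g (J1 a) b = -g a (J1 b) := by
    intro a b
    have h := hgJ1 a (J1 b)
    rw [hJ1, map_neg] at h
    linarith
  have gJ2s : ∀ a b, g (J2 a) b = g a (J2 b) := by
    intro a b
    have h := hgJ2 a (J2 b)
    rw [hJ2, map_neg] at h
    linarith
  have gJ3s : ∀ a b, g (J3 a) b = g a (J3 b) := by
    intro a b
    have h := hgJ3 a (J3 b)
    rw [hJ3, map_neg] at h
    linarith
  -- simple curvature identities
  have e1 : ∀ a b c d, R (J1 a) (J1 b) c d = R a b c d := by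
    intro a b c d
    calc R (J1 a) (J1 b) c d = R c d (J1 a) (J1 b) := hRp _ _ _ _
      _ = R c d a b := hQK1 _ _ _ _
      _ = R a b c d := (hRp _ _ _ _).symm
  have e2 : ∀ a b c d, R a b c (J1 d) = -R a b (J1 c) d := by
    intro a b c d
    have h := hQK1 a b (J1 c) d
    rw [hJ1] at h
    simp only [map_neg, LinearMap.neg_apply] at h
    linarith
  have e3 : ∀ a b c d, R a (J1 b) c d = -R (J1 a) b c d := by
    intro a b c d
    have h := e1 (J1 a) b c d
    rw [hJ1] at h
    rw [hRp (-a)] at h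
    simp only [map_neg, LinearMap.neg_apply] at h
    rw [← hRp a] at h
    linarith
  have l2 : ∀ a b c d, R (J2 a) (J2 b) c d = -R a b c d + η c d * g (J1 a) b := by
    intro a b c d
    calc R (J2 a) (J2 b) c d = R c d (J2 a) (J2 b) := hRp _ _ _ _
      _ = -R c d a b + η c d * g (J1 a) b := hQK2 _ _ _ _
      _ = -R a b c d + η c d * g (J1 a) b := by rw [hRp a b c d]
  have l3 : ∀ a b c d, R (J3 a) (J3 b) c d = -R a b c d + η c d * g (J1 a) b := by
    intro a b c d
    calc R (J3 a) (J3 b) c d = R c d (J3 a) (J3 b) := hRp _ _ _ _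
      _ = -R c d a b + η c d * g (J1 a) b := hQK3 _ _ _ _
      _ = -R a b c d + η c d * g (J1 a) b := by rw [hRp a b c d]
  -- the key pointwise identity used for the ``star'' trace computation
  have starR : ∀ x y u v, R x y u (J1 v) = R x y (J2 u) (J3 v) + η x y * g u v := by
    intro x y u v
    have k1 : J2 (-(J2 u)) = u := by rw [map_neg, hJ2, neg_neg]
    have k2 : J2 (J3 v) = J1 v := (h123 v).symm
    have k3 : J1 (-(J2 u)) = -(J3 u) := by rw [map_neg, ← h312]
    have h := hQK2 x y (-(J2 u)) (J3 v)
    rw [k1, k2, k3] at h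
    simp only [map_neg, LinearMap.neg_apply, neg_neg] at h
    rw [hgJ3] at h
    linarith
  -- musical isomorphism
  have hinj : Function.Injective g := by
    intro a b hab
    have h0 : ∀ y, g (a - b) y = 0 := by
      intro y
      rw [map_sub, LinearMap.sub_apply, hab, sub_self]
    exact sub_eq_zero.mp (hgnd _ h0)
  have hsurj : Function.Surjective g :=
    (LinearMap.injective_iff_surjective_of_finrank_eq_finrank
      (Subspace.dual_finrank_eq (V := V)).symm).mp hinj
  let G : V ≃ₗ[ℝ] Module.Dual ℝ V := LinearEquiv.ofBijective g ⟨hinj, hsurj⟩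
  have hG : ∀ (φ : Module.Dual ℝ V) (v : V), g (G.symm φ) v = φ v := by
    intro φ v
    have h : G (G.symm φ) = φ := G.apply_symm_apply φ
    calc g (G.symm φ) v = (G (G.symm φ)) v := rfl
      _ = φ v := by rw [h]
  -- extensionality for endomorphisms via g
  have ext_g : ∀ M N : Module.End ℝ V, (∀ u v, g (M u) v = g (N u) v) → M = N := by
    intro M N h
    ext u
    have h0 : ∀ v, g (M u - N u) v = 0 := by
      intro v
      rw [map_sub, LinearMap.sub_apply, h u v, sub_self]
    exact sub_eq_zero.mp (hgnd _ h0)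
  -- adjoint endomorphisms have the same trace
  have adjtr : ∀ M N : Module.End ℝ V, (∀ u v, g (M u) v = g u (N v)) →
      LinearMap.trace ℝ V M = LinearMap.trace ℝ V N := by
    intro M N h
    have key : N = G.symm.conj (Module.Dual.transpose (R := ℝ) M) := by
      ext v
      rw [LinearEquiv.conj_apply, LinearEquiv.symm_symm]
      have h2 : (Module.Dual.transpose (R := ℝ) M) (G v) = G (N v) := by
        ext u
        rw [Module.Dual.transpose_apply]
        calc (G v).comp M u = g v (M u) := rfl
          _ = g (M u) v := hgsymm _ _
          _ = g u (N v) := h u v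
          _ = g (N v) u := hgsymm _ _
          _ = (G (N v)) u := rfl
      simp only [LinearMap.comp_apply, LinearEquiv.coe_coe]
      rw [h2, LinearEquiv.symm_apply_apply]
    rw [key, LinearMap.trace_conj', LinearMap.trace_transpose']
  -- the endomorphisms associated with the Ricci tensor and with R(x,y,·,·)
  let Bf : V → V → Module.End ℝ V := fun x y =>
    G.symm.toLinearMap ∘ₗ
      ({ toFun := fun u => R u x y
         map_add' := fun a b => by simp
         map_smul' := fun c a => by simp } : V →ₗ[ℝ] Module.Dual ℝ V)
  have hBf : ∀ x y u v, g (Bf x y u) v = R u x y v := by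
    intro x y u v
    show g (G.symm (R u x y)) v = R u x y v
    exact hG _ _
  let Pf : V → V → Module.End ℝ V := fun x y =>
    G.symm.toLinearMap ∘ₗ
      ({ toFun := fun u => R x y u
         map_add' := fun a b => by simp
         map_smul' := fun c a => by simp } : V →ₗ[ℝ] Module.Dual ℝ V)
  have hPf : ∀ x y u v, g (Pf x y u) v = R x y u v := by
    intro x y u v
    show g (G.symm (R x y u)) v = R x y u v
    exact hG _ _
  have hρB : ∀ x y, ρ x y = LinearMap.trace ℝ V (Bf x y) := by
    intro x y
    exact hρ x y (Bf x y) (fun z w => hBf x y z w)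
  clear_value Bf Pf
  -- J2 ∘ J3 = J1 as endomorphisms
  have hJ23 : (J2 * J3 : Module.End ℝ V) = J1 := by
    ext u
    exact (h123 u).symm
  -- star identity as endomorphisms
  have hstar : ∀ x y, -(J1 * Pf x y) = J3 * Pf x y * J2 + η x y • (1 : Module.End ℝ V) := by
    intro x y
    apply ext_g
    intro u v
    have L : g ((-(J1 * Pf x y)) u) v = R x y u (J1 v) := by
      have h0 : (-(J1 * Pf x y)) u = -(J1 (Pf x y u)) := rfl
      rw [h0, map_neg, LinearMap.neg_apply, gJ1s, neg_neg, hPf]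
    have Rr : g ((J3 * Pf x y * J2 + η x y • (1 : Module.End ℝ V)) u) v
        = R x y (J2 u) (J3 v) + η x y * g u v := by
      have h0 : (J3 * Pf x y * J2 + η x y • (1 : Module.End ℝ V)) u
          = J3 (Pf x y (J2 u)) + η x y • u := rfl
      rw [h0, map_add, LinearMap.add_apply, map_smul, LinearMap.smul_apply, gJ3s, hPf,
        smul_eq_mul]
    rw [L, Rr]
    exact starR x y u v
  have trace_star : ∀ x y, LinearMap.trace ℝ V (J1 * Pf x y) = -(2 * n * η x y) := by
    intro x y
    have h := congrArg (LinearMap.trace ℝ V) (hstar x y)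
    rw [map_neg, map_add, map_smul, LinearMap.trace_one] at h
    have hmc : LinearMap.trace ℝ V (J3 * Pf x y * J2) = LinearMap.trace ℝ V (J1 * Pf x y) := by
      rw [LinearMap.trace_mul_comm, ← mul_assoc, hJ23]
    rw [hmc] at h
    have hfin : ((Module.finrank ℝ V : ℝ)) = 4 * (n : ℝ) := by
      rw [hdim]; push_cast; ring
    rw [hfin] at h
    simp only [smul_eq_mul] at h
    linarith
  -- Bianchi as endomorphisms
  have hBianchiE : ∀ x y, Bf y x = Bf x y + Pf x y := by
    intro x y
    apply ext_g
    intro u v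
    rw [hBf]
    have h0 : g ((Bf x y + Pf x y) u) v = R u x y v + R x y u v := by
      have h1 : (Bf x y + Pf x y) u = Bf x y u + Pf x y u := rfl
      rw [h1, map_add, LinearMap.add_apply, hBf, hPf]
    rw [h0]
    have hb := hRbianchi u x y v
    have ha := hRa y u x v
    linarith
  -- B_{y,x} is the g-adjoint of B_{x,y}
  have hBadj : ∀ x y u v, g (Bf y x u) v = g u (Bf x y v) := by
    intro x y u v
    rw [hBf, hgsymm u (Bf x y v), hBf]
    have h1 := hRp u y x v
    have h2 := hRa x v u y
    have h3 := hRb v x u y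
    linarith
  have hτ : ∀ x y, LinearMap.trace ℝ V (J1 * Bf y x) = -LinearMap.trace ℝ V (J1 * Bf x y) := by
    intro x y
    have h := adjtr (J1 * Bf y x) (-(Bf x y * J1)) ?_
    · rw [h, map_neg, LinearMap.trace_mul_comm]
    · intro u v
      have l1 : g ((J1 * Bf y x) u) v = -g (Bf y x u) (J1 v) := by
        have h0 : (J1 * Bf y x) u = J1 (Bf y x u) := rfl
        rw [h0, gJ1s]
      have l2' : g u ((-(Bf x y * J1)) v) = -g u (Bf x y (J1 v)) := by
        have h0 : (-(Bf x y * J1)) v = -(Bf x y (J1 v)) := rfl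
        rw [h0, map_neg]
      rw [l1, l2', hBadj]
  -- the "star Ricci" trace equals n·η
  have hρstar : ∀ x y, LinearMap.trace ℝ V (J1 * Bf x y) = (n : ℝ) * η x y := by
    intro x y
    have h1 : LinearMap.trace ℝ V (J1 * Bf y x)
        = LinearMap.trace ℝ V (J1 * Bf x y) + LinearMap.trace ℝ V (J1 * Pf x y) := by
      rw [hBianchiE x y, mul_add, map_add]
    have h2 := hτ x y
    have h3 := trace_star x y
    linarith
  -- Ricci identities
  have hρJ1r : ∀ x y, ρ x (J1 y) = (n : ℝ) * η x y := by
    intro x y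
    have hE : Bf x (J1 y) = J1 * Bf x y := by
      apply ext_g
      intro u v
      rw [hBf]
      have h0 : g ((J1 * Bf x y) u) v = -R u x y (J1 v) := by
        have h1 : (J1 * Bf x y) u = J1 (Bf x y u) := rfl
        rw [h1, gJ1s, hBf]
      rw [h0]
      have := e2 u x y v
      linarith
    rw [hρB, hE, hρstar]
  have hρJ1l : ∀ x y, ρ (J1 x) y = -((n : ℝ) * η x y) := by
    intro x y
    have hE : Bf (J1 x) y = -(Bf x y * J1) := by
      apply ext_g
      intro u v
      rw [hBf]
      have h0 : g ((-(Bf x y * J1)) u) v = -R (J1 u) x y v := by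
        have h1 : (-(Bf x y * J1)) u = -(Bf x y (J1 u)) := rfl
        rw [h1, map_neg, LinearMap.neg_apply, hBf]
      rw [h0]
      exact e3 u x y v
    rw [hρB, hE, map_neg, LinearMap.trace_mul_comm, hρstar]
  -- ρ is "linear" in each slot through Bf ; we only need negation in slot 1
  have hρneg1 : ∀ x y, ρ (-x) y = -ρ x y := by
    intro x y
    have hE : Bf (-x) y = -(Bf x y) := by
      apply ext_g
      intro u v
      rw [hBf]
      have h0 : g ((-(Bf x y)) u) v = -R u x y v := by
        have h1 : (-(Bf x y)) u = -(Bf x y u) := rfl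
        rw [h1, map_neg, LinearMap.neg_apply, hBf]
      rw [h0]
      simp only [map_neg, LinearMap.neg_apply]
    rw [hρB, hE, map_neg, ← hρB]
  -- the two expressions for ρ(J2x, J3y)
  intro x y z w
  have hη2 : ρ (J2 x) (J3 y) = (n : ℝ) * η (J2 x) (J2 y) := by
    have h0 : J3 y = J1 (J2 y) := h312 y
    rw [h0, hρJ1r]
  have hη3 : ρ (J2 x) (J3 y) = (n : ℝ) * η (J3 x) (J3 y) := by
    have h0 : J1 (J3 x) = -(J2 x) := by rw [h213 x, neg_neg]
    have h1 := hρJ1l (J3 x) (J3 y)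
    rw [h0, hρneg1] at h1
    linarith
  have hρJ1zw : ρ (J1 z) w = -((n : ℝ) * η z w) := hρJ1l z w
  refine ⟨?_, ?_, ?_⟩
  · calc R (J1 x) (J1 y) (J1 z) (J1 w) = R x y (J1 z) (J1 w) := e1 x y (J1 z) (J1 w)
      _ = R x y z w := hQK1 x y z w
  · calc R (J2 x) (J2 y) (J2 z) (J2 w)
        = -R (J2 x) (J2 y) z w + η (J2 x) (J2 y) * g (J1 z) w := hQK2 (J2 x) (J2 y) z w
      _ = -(-R x y z w + η z w * g (J1 x) y) + η (J2 x) (J2 y) * g (J1 z) w := by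
          rw [l2 x y z w]
      _ = R x y z w - (1 / (n : ℝ)) * g x (J1 y) * ρ (J1 z) w
          + (1 / (n : ℝ)) * ρ (J2 x) (J3 y) * g (J1 z) w := by
          rw [hρJ1zw, hη2, gJ1s x y]
          field_simp
          ring
  · calc R (J3 x) (J3 y) (J3 z) (J3 w)
        = -R (J3 x) (J3 y) z w + η (J3 x) (J3 y) * g (J1 z) w := hQK3 (J3 x) (J3 y) z w
      _ = -(-R x y z w + η z w * g (J1 x) y) + η (J3 x) (J3 y) * g (J1 z) w := by
          rw [l3 x y z w]
      _ = R x y z w - (1 / (n : ℝ)) * g x (J1 y) * ρ (J1 z) w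
          + (1 / (n : ℝ)) * ρ (J2 x) (J3 y) * g (J1 z) w := by
          rw [hρJ1zw, hη3, gJ1s x y]
          field_simp
          ring
end

section
/- Assume n ≥ 2. Let R be a curvature-like tensor on V satisfying the quaternionic Kähler curvature relations with associated alternating bilinear form η₁, with Ricci tensor ρ and scalar curvature τ. Then for all x,y,z,w ∈ V: R(x,y,J₂z,J₂w) = R(x,y,J₃z,J₃w) = −R(x,y,z,w) − (τ/(4n²))·g(J₁x,y)·g(J₁z,w). -/
set_option maxHeartbeats 1000000 in
theorem stmt11
    (n : ℕ) (hn : 2 ≤ n)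
    (V : Type) [AddCommGroup V] [Module ℝ V] [FiniteDimensional ℝ V]
    (hdim : Module.finrank ℝ V = 4 * n)
    (J1 J2 J3 : V →ₗ[ℝ] V)
    (hJ1 : ∀ x, J1 (J1 x) = -x) (hJ2 : ∀ x, J2 (J2 x) = -x) (hJ3 : ∀ x, J3 (J3 x) = -x)
    (h123 : ∀ x, J1 x = J2 (J3 x)) (h132 : ∀ x, J1 x = -J3 (J2 x))
    (h231 : ∀ x, J2 x = J3 (J1 x)) (h213 : ∀ x, J2 x = -J1 (J3 x))
    (h312 : ∀ x, J3 x = J1 (J2 x)) (h321 : ∀ x, J3 x = -J2 (J1 x))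
    (g : V →ₗ[ℝ] V →ₗ[ℝ] ℝ)
    (hgsymm : ∀ x y, g x y = g y x)
    (hgnd : ∀ x, (∀ y, g x y = 0) → x = 0)
    (hgJ1 : ∀ x y, g (J1 x) (J1 y) = g x y)
    (hgJ2 : ∀ x y, g (J2 x) (J2 y) = -g x y)
    (hgJ3 : ∀ x y, g (J3 x) (J3 y) = -g x y)
    (R : V →ₗ[ℝ] V →ₗ[ℝ] V →ₗ[ℝ] V →ₗ[ℝ] ℝ)
    (hRa : ∀ x y z w, R x y z w = -R y x z w)
    (hRb : ∀ x y z w, R x y z w = -R x y w z)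
    (hRp : ∀ x y z w, R x y z w = R z w x y)
    (hRbianchi : ∀ x y z w, R x y z w + R y z x w + R z x y w = 0)
    (η : V →ₗ[ℝ] V →ₗ[ℝ] ℝ)
    (hηalt : ∀ x y, η x y = -η y x)
    (hQK1 : ∀ x y z w, R x y (J1 z) (J1 w) = R x y z w)
    (hQK2 : ∀ x y z w, R x y (J2 z) (J2 w) = -R x y z w + η x y * g (J1 z) w)
    (hQK3 : ∀ x y z w, R x y (J3 z) (J3 w) = -R x y z w + η x y * g (J1 z) w)
    (ρ : V → V → ℝ)
    (hρ : ∀ x y, ∀ A : Module.End ℝ V, (∀ z w, g (A z) w = R z x y w) → ρ x y = LinearMap.trace ℝ V A)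
    (τ : ℝ)
    (hτ : ∀ S : Module.End ℝ V, (∀ x y, g (S x) y = ρ x y) → τ = LinearMap.trace ℝ V S)
    :
    ∀ x y z w,
      R x y (J2 z) (J2 w) =
        -R x y z w - (τ / (4 * (n : ℝ) ^ 2)) * g (J1 x) y * g (J1 z) w ∧
      R x y (J3 z) (J3 w) =
        -R x y z w - (τ / (4 * (n : ℝ) ^ 2)) * g (J1 x) y * g (J1 z) w := by
  classical
  -- ===== basic pointwise lemmas about g and the J's =====
  have hgJ1skew : ∀ a c : V, g (J1 a) c = - g a (J1 c) := by
    intro a c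
    have h := hgJ1 a (J1 c)
    rw [hJ1 c] at h
    simp only [map_neg] at h
    linarith
  have hgJ2self : ∀ a c : V, g (J2 a) c = g a (J2 c) := by
    intro a c
    have h := hgJ2 a (J2 c)
    rw [hJ2 c] at h
    simp only [map_neg] at h
    linarith
  have hgJ3self : ∀ a c : V, g (J3 a) c = g a (J3 c) := by
    intro a c
    have h := hgJ3 a (J3 c)
    rw [hJ3 c] at h
    simp only [map_neg] at h
    linarith
  have hg2swap : ∀ a c : V, g (J2 a) c = g (J2 c) a := by
    intro a c; rw [hgJ2self a c, hgsymm]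
  have hg3swap : ∀ a c : V, g (J3 a) c = g (J3 c) a := by
    intro a c; rw [hgJ3self a c, hgsymm]
  have hJ2J1 : ∀ x, J2 (J1 x) = -J3 x := fun x => by rw [h321 x, neg_neg]
  have hJ3J2 : ∀ x, J3 (J2 x) = -J1 x := fun x => by rw [h132 x, neg_neg]
  have hJ1J3 : ∀ x, J1 (J3 x) = -J2 x := fun x => by rw [h213 x, neg_neg]
  have hJ3J1 : ∀ x, J3 (J1 x) = J2 x := fun x => (h231 x).symm
  have hJ1J2 : ∀ x, J1 (J2 x) = J3 x := fun x => (h312 x).symm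
  have hJ2J3 : ∀ x, J2 (J3 x) = J1 x := fun x => (h123 x).symm
  -- ===== curvature pointwise lemmas =====
  have ha : ∀ x y z w, R x y z (J1 w) = -R x y (J1 z) w := by
    intro x y z w
    have h := hQK1 x y (J1 z) w
    rw [hJ1 z] at h
    simp only [map_neg, LinearMap.neg_apply] at h
    linarith
  have ha' : ∀ x y z w, R x (J1 y) z w = -R (J1 x) y z w := by
    intro x y z w
    have h := ha z w x y
    rw [hRp z w x (J1 y), hRp z w (J1 x) y] at h
    exact h
  have hb : ∀ x y z w, R x y z (J2 w) = R x y (J2 z) w - η x y * g (J3 z) w := by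
    intro x y z w
    have h := hQK2 x y (J2 z) w
    rw [hJ2 z, hJ1J2 z] at h
    simp only [map_neg, LinearMap.neg_apply] at h
    linarith
  have hb' : ∀ x y z w, R x (J2 y) z w = R (J2 x) y z w - η z w * g (J3 x) y := by
    intro x y z w
    have h := hb z w x y
    rw [hRp z w x (J2 y), hRp z w (J2 x) y] at h
    exact h
  have hM12 : ∀ a b c d, R (J2 a) b (J2 c) d + R (J2 b) a (J2 c) d = η (J2 c) d * g (J3 b) a := by
    intro a b c d
    have h1 := hb' b a (J2 c) d
    have h2 := hRa b (J2 a) (J2 c) d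
    linarith
  have hM34 : ∀ a b c d, R (J2 a) b (J2 c) d + R (J2 a) b (J2 d) c = η (J2 a) b * g (J3 c) d := by
    intro a b c d
    have h1 := hb (J2 a) b c d
    have h2 := hRb (J2 a) b c (J2 d)
    linarith
  have hMp : ∀ a b c d, R (J2 a) b (J2 c) d = R (J2 c) d (J2 a) b := by
    intro a b c d; exact hRp _ _ _ _
  have hMstar : ∀ a b c d,
      R (J2 a) b (J2 c) d - R (J2 c) b (J2 a) d - R b d c a + η b d * g (J1 c) a = 0 := by
    intro a b c d
    have h1 := hRbianchi (J2 a) b (J2 c) d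
    have h2 := hRa b (J2 c) (J2 a) d
    have h3 := hRp (J2 c) (J2 a) b d
    have h4 := hQK2 b d c a
    linarith
  have Rel6 : ∀ x y z w,
      η z w * g (J1 x) y + η (J2 z) x * g (J3 y) w + η (J2 y) z * g (J3 x) w
      = η x y * g (J1 z) w + η (J2 y) w * g (J3 x) z + η (J2 w) x * g (J3 y) z := by
    intro x y z w
    linear_combination -hRp x y z w + hM12 x z y w + hM12 x w z y - hMp x w z y
      - hM34 y z x w + hMstar y z x w + hM34 y w x z - hM34 y w z x - hM34 z x y w
      + hM12 z y w x - hM34 z y w x - hMstar w x z y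
  -- ===== contraction machinery =====
  have hnd : LinearMap.BilinForm.Nondegenerate g :=
    ⟨hgnd, fun y hy => hgnd y fun x => by rw [hgsymm]; exact hy x⟩
  let b0 : Module.Basis (Fin (Module.finrank ℝ V)) ℝ V := Module.finBasis ℝ V
  let bb : Module.Basis (Fin (Module.finrank ℝ V)) ℝ V := LinearMap.BilinForm.dualBasis g hnd b0
  have hrepr : ∀ (x : V) i, bb.repr x i = g x (b0 i) := fun x i =>
    LinearMap.BilinForm.dualBasis_repr_apply (B := g) hnd b0 x i
  have hdual : ∀ i j, g (bb i) (b0 j) = if j = i then 1 else 0 := fun i j =>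
    LinearMap.BilinForm.apply_dualBasis_left (B := g) hnd b0 i j
  have e1 : ∀ x : V, ∑ i, g x (b0 i) • bb i = x := by
    intro x
    have h := bb.sum_repr x
    simp_rw [hrepr] at h
    exact h
  have e2 : ∀ x : V, ∑ i, g x (bb i) • b0 i = x := by
    intro x
    have key : ∀ j, g (x - ∑ i, g x (bb i) • b0 i) (bb j) = 0 := by
      intro j
      have hexp : g (∑ i, g x (bb i) • b0 i) (bb j) = g x (bb j) := by
        simp only [map_sum, map_smul, LinearMap.sum_apply, LinearMap.smul_apply, smul_eq_mul]
        have h2 : ∀ i, g x (bb i) * g (b0 i) (bb j) = g x (bb i) * (if i = j then 1 else 0) := by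
          intro i
          congr 1
          rw [hgsymm, hdual j i]
        rw [Finset.sum_congr rfl fun i _ => h2 i]
        simp
      rw [map_sub, LinearMap.sub_apply, hexp, sub_self]
    have hzero : x - ∑ i, g x (bb i) • b0 i = 0 := by
      apply hgnd
      intro v
      have hv := bb.sum_repr v
      calc g (x - ∑ i, g x (bb i) • b0 i) v
          = g (x - ∑ i, g x (bb i) • b0 i) (∑ j, bb.repr v j • bb j) := by rw [hv]
        _ = ∑ j, bb.repr v j * g (x - ∑ i, g x (bb i) • b0 i) (bb j) := by
            rw [map_sum]
            exact Finset.sum_congr rfl fun j _ => by rw [map_smul, smul_eq_mul]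
        _ = 0 := by
            rw [Finset.sum_congr rfl fun j _ => by rw [key j]]
            simp
    exact (sub_eq_zero.mp hzero).symm
  have sum1 : ∀ (φ : V →ₗ[ℝ] ℝ) (s : V), ∑ i, φ (bb i) * g s (b0 i) = φ s := by
    intro φ s
    conv_rhs => rw [← e1 s]
    rw [map_sum]
    exact Finset.sum_congr rfl fun i _ => by rw [map_smul, smul_eq_mul, mul_comm]
  have sum2 : ∀ (ψ : V →ₗ[ℝ] ℝ) (s : V), ∑ i, g s (bb i) * ψ (b0 i) = ψ s := by
    intro ψ s
    conv_rhs => rw [← e2 s]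
    rw [map_sum]
    exact Finset.sum_congr rfl fun i _ => by rw [map_smul, smul_eq_mul]
  have sum3 : ∀ (s t : V), ∑ i, g s (bb i) * η (J3 (b0 i)) t = η (J3 s) t := by
    intro s t
    have h := sum2 ((η.flip t) ∘ₗ J3) s
    simpa using h
  have ctrsymm : ∀ (B : V →ₗ[ℝ] V →ₗ[ℝ] ℝ), ∑ i, B (bb i) (b0 i) = ∑ i, B (b0 i) (bb i) := by
    intro B
    have hL : ∀ i, B (bb i) (b0 i) = ∑ j, g (b0 i) (b0 j) * B (bb i) (bb j) := by
      intro i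
      conv_lhs => rw [← e1 (b0 i)]
      rw [map_sum]
      exact Finset.sum_congr rfl fun j _ => by rw [map_smul, smul_eq_mul]
    have hR : ∀ i, B (b0 i) (bb i) = ∑ j, g (b0 i) (b0 j) * B (bb j) (bb i) := by
      intro i
      conv_lhs => rw [show B (b0 i) (bb i) = B (∑ j, g (b0 i) (b0 j) • bb j) (bb i) by rw [e1 (b0 i)]]
      rw [map_sum, LinearMap.sum_apply]
      exact Finset.sum_congr rfl fun j _ => by rw [map_smul, LinearMap.smul_apply, smul_eq_mul]
    rw [Finset.sum_congr rfl fun i _ => hL i, Finset.sum_congr rfl fun i _ => hR i,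
      Finset.sum_comm]
    exact Finset.sum_congr rfl fun i _ => Finset.sum_congr rfl fun j _ => by rw [hgsymm]
  have altη : ∑ i, η (bb i) (b0 i) = 0 := by
    have h := ctrsymm η
    have h2 : ∑ i, η (b0 i) (bb i) = -∑ i, η (bb i) (b0 i) := by
      rw [← Finset.sum_neg_distrib]
      exact Finset.sum_congr rfl fun i _ => hηalt _ _
    linarith [h, h2]
  -- R as bilinear forms in two chosen slots
  let Rform : V → V → (V →ₗ[ℝ] V →ₗ[ℝ] ℝ) := fun a c =>
    LinearMap.mk₂' ℝ ℝ (fun u v => R u a c v)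
      (by intros; simp) (by intros; simp) (by intros; simp) (by intros; simp)
  let R2form : V → V → (V →ₗ[ℝ] V →ₗ[ℝ] ℝ) := fun a c =>
    LinearMap.mk₂' ℝ ℝ (fun u v => R u v a c)
      (by intros; simp) (by intros; simp) (by intros; simp) (by intros; simp)
  have hRform : ∀ a c u v, Rform a c u v = R u a c v := fun a c u v => rfl
  have hR2form : ∀ a c u v, R2form a c u v = R u v a c := fun a c u v => rfl
  have altR : ∀ a c, ∑ i, R (bb i) (b0 i) a c = 0 := by
    intro a c
    have h := ctrsymm (R2form a c)
    simp only [hR2form] at h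
    have h2 : ∑ i, R (b0 i) (bb i) a c = -∑ i, R (bb i) (b0 i) a c := by
      rw [← Finset.sum_neg_distrib]
      exact Finset.sum_congr rfl fun i _ => hRa _ _ _ _
    linarith [h, h2]
  have trace_via : ∀ (Φ : Module.End ℝ V),
      LinearMap.trace ℝ V Φ = ∑ i, g (Φ (bb i)) (b0 i) := by
    intro Φ
    rw [LinearMap.trace_eq_matrix_trace ℝ bb Φ]
    simp only [Matrix.trace, Matrix.diag, LinearMap.toMatrix_apply, hrepr]
  have hgid : ∑ i, g (bb i) (b0 i) = 4 * (n : ℝ) := by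
    have h := trace_via LinearMap.id
    rw [LinearMap.trace_id] at h
    simp only [LinearMap.id_apply] at h
    rw [← h, hdim]
    push_cast
    ring
  -- the Ricci operator
  let Aop : V → V → Module.End ℝ V := fun a c =>
    (LinearMap.BilinForm.toDual g hnd).symm.toLinearMap ∘ₗ ((R.flip a).flip c)
  have hA : ∀ a c u v, g (Aop a c u) v = R u a c v := by
    intro a c u v
    exact LinearMap.BilinForm.apply_toDual_symm_apply (hB := hnd) (R u a c) v
  have trA : ∀ a c, ρ a c = ∑ i, R (bb i) a c (b0 i) := by
    intro a c
    rw [hρ a c (Aop a c) (fun u v => hA a c u v), trace_via]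
    exact Finset.sum_congr rfl fun i _ => by rw [hA]
  have ρneg : ∀ a c, ρ a (-c) = -ρ a c := by
    intro a c
    rw [trA a (-c), trA a c, ← Finset.sum_neg_distrib]
    exact Finset.sum_congr rfl fun i _ => by simp
  have tJ1A : ∀ a c, ∑ i, R (bb i) a c (J1 (b0 i)) = -ρ a (J1 c) := by
    intro a c
    rw [trA a (J1 c), ← Finset.sum_neg_distrib]
    exact Finset.sum_congr rfl fun i _ => by
      have h := ha (bb i) a c (b0 i)
      linarith
  have tAJ1 : ∀ a c, ∑ i, R (J1 (bb i)) a c (b0 i) = ρ a (J1 c) := by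
    intro a c
    have h1 : ∑ i, R (J1 (bb i)) a c (b0 i) = LinearMap.trace ℝ V (Aop a c ∘ₗ J1) := by
      rw [trace_via]
      exact Finset.sum_congr rfl fun i _ => by rw [LinearMap.comp_apply, hA]
    have h2 : LinearMap.trace ℝ V (Aop a c ∘ₗ J1) = LinearMap.trace ℝ V (J1 ∘ₗ Aop a c) := by
      rw [← Module.End.mul_eq_comp, ← Module.End.mul_eq_comp, LinearMap.trace_mul_comm]
    have h3 : LinearMap.trace ℝ V (J1 ∘ₗ Aop a c) = ∑ i, -R (bb i) a c (J1 (b0 i)) := by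
      rw [trace_via]
      exact Finset.sum_congr rfl fun i _ => by
        rw [LinearMap.comp_apply, hgJ1skew, hA]
    rw [h1, h2, h3, Finset.sum_neg_distrib, tJ1A, neg_neg]
  have V1 : ∀ a c, ρ (J1 a) c = -ρ a (J1 c) := by
    intro a c
    rw [trA (J1 a) c, ← tAJ1 a c, ← Finset.sum_neg_distrib]
    exact Finset.sum_congr rfl fun i _ => by
      have h := ha' (bb i) a c (b0 i)
      linarith
  have ρsym : ∀ a c, ρ c a = ρ a c := by
    intro a c
    have hpt : ∀ u v : V, R u c a v = R v a c u := by
      intro u v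
      have h1 := hRp u c a v
      have h2 := hRa a v u c
      have h3 := hRb v a u c
      linarith
    rw [trA c a, trA a c]
    calc ∑ i, R (bb i) c a (b0 i) = ∑ i, R (b0 i) a c (bb i) :=
          Finset.sum_congr rfl fun i _ => hpt _ _
      _ = ∑ i, Rform a c (b0 i) (bb i) := Finset.sum_congr rfl fun i _ => rfl
      _ = ∑ i, Rform a c (bb i) (b0 i) := (ctrsymm (Rform a c)).symm
      _ = ∑ i, R (bb i) a c (b0 i) := Finset.sum_congr rfl fun i _ => rfl
  -- ===== stage 1 : η = lam * ω =====
  set hsc : ℝ := ∑ i, η (bb i) (J1 (b0 i)) with hsc_def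
  have Pzw : ∀ z w u v : V,
      η z w * g u v + η (J2 z) u * g (J2 w) v + g (J3 z) u * η (J3 v) w
      = η u (J1 v) * g (J1 z) w + η (J2 w) u * g (J2 z) v + g (J3 w) u * η (J3 v) z := by
    intro z w u v
    have r := Rel6 u (J1 v) z w
    rw [hgJ1 u v, hJ3J1 v, hJ2J1 v] at r
    simp only [map_neg, LinearMap.neg_apply] at r
    rw [hg2swap v w, hg2swap v z, hg3swap u w, hg3swap u z] at r
    linear_combination r
  have club : ∀ z w : V, 4 * (n:ℝ) * η z w - 2 * η z w + 2 * η (J2 z) (J2 w)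
      = hsc * g (J1 z) w := by
    intro z w
    have S : ∑ i, (η z w * g (bb i) (b0 i) + η (J2 z) (bb i) * g (J2 w) (b0 i)
          + g (J3 z) (bb i) * η (J3 (b0 i)) w)
        = ∑ i, (η (bb i) (J1 (b0 i)) * g (J1 z) w + η (J2 w) (bb i) * g (J2 z) (b0 i)
          + g (J3 w) (bb i) * η (J3 (b0 i)) z) :=
      Finset.sum_congr rfl fun i _ => Pzw z w (bb i) (b0 i)
    rw [Finset.sum_add_distrib, Finset.sum_add_distrib, Finset.sum_add_distrib,
      Finset.sum_add_distrib, ← Finset.mul_sum, hgid, sum1 (η (J2 z)) (J2 w),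
      sum1 (η (J2 w)) (J2 z), sum3 (J3 z) w, sum3 (J3 w) z, ← Finset.sum_mul,
      ← hsc_def, hJ3 z, hJ3 w] at S
    simp only [map_neg, LinearMap.neg_apply] at S
    linear_combination S + hηalt (J2 w) (J2 z) - hηalt w z
  have club2 : ∀ z w : V, 4 * (n:ℝ) * η (J2 z) (J2 w) - 2 * η (J2 z) (J2 w) + 2 * η z w
      = hsc * g (J1 z) w := by
    intro z w
    have h := club (J2 z) (J2 w)
    rw [hJ2 z, hJ2 w] at h
    simp only [map_neg, LinearMap.neg_apply, neg_neg] at h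
    rw [hJ1J2 z, ← hgJ2self (J3 z) w, hJ2J3 z] at h
    linear_combination h
  have hnR : (2:ℝ) ≤ (n:ℝ) := by exact_mod_cast hn
  have hnne : (4:ℝ) * (n:ℝ) - 4 ≠ 0 := by intro hcon; linarith
  have ηJ2inv : ∀ z w : V, η (J2 z) (J2 w) = η z w := by
    intro z w
    have k : (4 * (n:ℝ) - 4) * (η z w - η (J2 z) (J2 w)) = 0 := by
      linear_combination club z w - club2 z w
    rcases mul_eq_zero.mp k with h | h
    · exact absurd h hnne
    · linarith
  have hn0 : 4 * (n:ℝ) ≠ 0 := by intro hcon; linarith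
  set lam : ℝ := hsc / (4 * (n:ℝ)) with lam_def
  have ηlam : ∀ z w : V, η z w = lam * g (J1 z) w := by
    intro z w
    have h := club z w
    rw [ηJ2inv z w] at h
    rw [lam_def]
    field_simp
    linear_combination h
  have hsc4 : hsc = 4 * (n:ℝ) * lam := by
    rw [lam_def]
    field_simp
  -- ===== stage 2 : the scalar curvature =====
  have tJ2A : ∀ a c, ∑ i, R (bb i) a c (J2 (b0 i)) = ρ a (J2 c) - η (J3 c) a := by
    intro a c
    have S : ∑ i, R (bb i) a (J2 c) (b0 i)
        = ∑ i, (R (bb i) a c (J2 (b0 i)) + η (bb i) a * g (J3 c) (b0 i)) :=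
      Finset.sum_congr rfl fun i _ => by
        have h := hb (bb i) a c (b0 i)
        linarith
    rw [Finset.sum_add_distrib] at S
    have h1 := sum1 (η.flip a) (J3 c)
    simp only [LinearMap.flip_apply] at h1
    rw [h1, ← trA a (J2 c)] at S
    linarith
  have tAJ2 : ∀ a c, ∑ i, R (J2 (bb i)) a c (b0 i) = ρ a (J2 c) - η (J3 c) a := by
    intro a c
    have h1 : ∑ i, R (J2 (bb i)) a c (b0 i) = LinearMap.trace ℝ V (Aop a c ∘ₗ J2) := by
      rw [trace_via]
      exact Finset.sum_congr rfl fun i _ => by rw [LinearMap.comp_apply, hA]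
    have h2 : LinearMap.trace ℝ V (Aop a c ∘ₗ J2) = LinearMap.trace ℝ V (J2 ∘ₗ Aop a c) := by
      rw [← Module.End.mul_eq_comp, ← Module.End.mul_eq_comp, LinearMap.trace_mul_comm]
    have h3 : LinearMap.trace ℝ V (J2 ∘ₗ Aop a c) = ∑ i, R (bb i) a c (J2 (b0 i)) := by
      rw [trace_via]
      exact Finset.sum_congr rfl fun i _ => by rw [LinearMap.comp_apply, hgJ2self, hA]
    rw [h1, h2, h3, tJ2A]
  have RJ2 : ∀ a c, ρ (J2 a) (J2 c) = -ρ c a := by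
    intro a c
    have Q : ∀ u v : V, R u (J2 a) (J2 c) v
        = R u v a c - η u v * g (J1 a) c + R (J2 u) c (J2 a) v - η (J2 a) v * g (J3 c) u := by
      intro u v
      have h1 := hRbianchi u (J2 a) (J2 c) v
      have h2 := hRp (J2 a) (J2 c) u v
      have h3 := hQK2 u v a c
      have h4 := hRa (J2 c) u (J2 a) v
      have h5 := hb' u c (J2 a) v
      have h6 := hg3swap u c
      linear_combination h1 - h2 - h3 - h4 + h5 - η (J2 a) v * h6
    have S : ρ (J2 a) (J2 c) = ∑ i, (R (bb i) (b0 i) a c - η (bb i) (b0 i) * g (J1 a) c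
        + R (J2 (bb i)) c (J2 a) (b0 i) - η (J2 a) (b0 i) * g (J3 c) (bb i)) := by
      rw [trA (J2 a) (J2 c)]
      exact Finset.sum_congr rfl fun i _ => Q (bb i) (b0 i)
    simp only [Finset.sum_sub_distrib, Finset.sum_add_distrib] at S
    rw [← Finset.sum_mul, altR a c, altη, tAJ2 c (J2 a)] at S
    have h7 : ∑ i, η (J2 a) (b0 i) * g (J3 c) (bb i)
        = ∑ i, g (J3 c) (bb i) * η (J2 a) (b0 i) :=
      Finset.sum_congr rfl fun i _ => mul_comm _ _
    rw [h7, sum2 (η (J2 a)) (J3 c)] at S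
    rw [hJ2 a, hJ3J2 a, ρneg c a] at S
    simp only [map_neg, LinearMap.neg_apply] at S
    rw [ηlam (J1 a) c, ηlam (J2 a) (J3 c), hJ1 a, hJ1J2 a, hgJ3 a c] at S
    simp only [map_neg, LinearMap.neg_apply] at S
    linarith
  have tKc : ∀ a c, ∑ i, R (bb i) (J1 (b0 i)) a c = ρ a (J1 c) - ρ c (J1 a) := by
    intro a c
    have S : ∑ i, R (bb i) (J1 (b0 i)) a c
        = ∑ i, (R (bb i) c a (J1 (b0 i)) - R (bb i) a c (J1 (b0 i))) :=
      Finset.sum_congr rfl fun i _ => by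
        have h1 := hRp (bb i) (J1 (b0 i)) a c
        have h2 := hRbianchi a c (bb i) (J1 (b0 i))
        have h3 := hRa c (bb i) a (J1 (b0 i))
        linarith
    rw [Finset.sum_sub_distrib, tJ1A c a, tJ1A a c] at S
    rw [S]; ring
  have C1 : ∀ z w : V, ρ (J2 z) (J3 w) - ρ (J2 w) (J3 z)
      = -(ρ z (J1 w) - ρ w (J1 z)) + hsc * g (J1 z) w := by
    intro z w
    have S : ∑ i, R (bb i) (J1 (b0 i)) (J2 z) (J2 w)
        = ∑ i, (-R (bb i) (J1 (b0 i)) z w + η (bb i) (J1 (b0 i)) * g (J1 z) w) :=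
      Finset.sum_congr rfl fun i _ => hQK2 (bb i) (J1 (b0 i)) z w
    rw [Finset.sum_add_distrib, Finset.sum_neg_distrib, ← Finset.sum_mul,
      tKc (J2 z) (J2 w), tKc z w, ← hsc_def, hJ1J2 z, hJ1J2 w] at S
    linarith
  have mix : ∀ z w : V, ρ (J2 z) (J3 w) = -ρ w (J1 z) := by
    intro z w
    rw [h321 w, ρneg (J2 z) (J2 (J1 w)), RJ2 z (J1 w), V1 w z]
    ring
  have C3 : ∀ z w : V, ρ z (J1 w) = (n:ℝ) * lam * g (J1 z) w := by
    intro z w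
    have h := C1 z w
    rw [mix z w, mix w z] at h
    have hws : ρ w (J1 z) = -ρ z (J1 w) := by
      rw [ρsym (J1 z) w, V1 z w]
    rw [hsc4] at h
    linear_combination h / 4 + hws / 2
  have ρg : ∀ z w : V, ρ z w = -((n:ℝ) * lam) * g z w := by
    intro z w
    have h := C3 z (J1 w)
    rw [hJ1 w, ρneg z w, hgJ1 z w] at h
    linarith
  have hτval : τ = -((n:ℝ) * lam) * (4 * (n:ℝ)) := by
    have hS : ∀ x y : V,
        g (((-((n:ℝ) * lam)) • (LinearMap.id : Module.End ℝ V)) x) y = ρ x y := by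
      intro x y
      rw [ρg x y]
      simp only [LinearMap.smul_apply, LinearMap.id_apply, map_smul, smul_eq_mul]
    have h := hτ _ hS
    rw [map_smul, LinearMap.trace_id, smul_eq_mul] at h
    rw [h, hdim]
    push_cast
    ring
  -- ===== conclusion =====
  intro x y z w
  have hnz : (n:ℝ) ≠ 0 := by intro hcon; rw [hcon] at hnR; linarith
  have hlam' : -(τ / (4 * (n : ℝ) ^ 2)) = lam := by
    rw [hτval]
    field_simp
  constructor
  · rw [hQK2 x y z w, ηlam x y, ← hlam']
    ring
  · rw [hQK3 x y z w, ηlam x y, ← hlam']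
    ring
end

section
/- Assume n ≥ 2. Let R be a curvature-like tensor on V satisfying the quaternionic Kähler curvature relations with associated alternating bilinear form η₁, with Ricci tensor ρ and scalar curvature τ. Then τ = 0 if and only if R = 0. -/
set_option maxHeartbeats 2000000

private lemma trace_smulRight' {V : Type} [AddCommGroup V] [Module ℝ V] [FiniteDimensional ℝ V]
    (f : V →ₗ[ℝ] ℝ) (v : V) : LinearMap.trace ℝ V (f.smulRight v) = f v := by
  have h : f.smulRight v = (LinearMap.toSpanSingleton ℝ V v).comp f := by
    ext z; simp [LinearMap.toSpanSingleton_apply]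
  rw [h, LinearMap.trace_comp_comm']
  have h2 : f.comp (LinearMap.toSpanSingleton ℝ V v) = (f v) • LinearMap.id := by
    ext r
    simp [LinearMap.toSpanSingleton_apply, mul_comm]
  rw [h2, map_smul, LinearMap.trace_id, Module.finrank_self]
  simp


theorem flatAux {V : Type*} [AddCommGroup V]
    (J1 J2 J3 : V → V)
    (hJ1 : ∀ x, J1 (J1 x) = -x) (hJ2 : ∀ x, J2 (J2 x) = -x) (hJ3 : ∀ x, J3 (J3 x) = -x)
    (h123 : ∀ x, J1 x = J2 (J3 x)) (h132 : ∀ x, J1 x = -J3 (J2 x))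
    (R : V → V → V → V → ℝ)
    (a1 : ∀ x y z w, R x y z w = -R y x z w)
    (a2 : ∀ x y z w, R x y z w = -R x y w z)
    (p : ∀ x y z w, R x y z w = R z w x y)
    (bi : ∀ x y z w, R x y z w + R y z x w + R z x y w = 0)
    (n1 : ∀ x y z w, R (-x) y z w = -R x y z w)
    (n3 : ∀ x y z w, R x y (-z) w = -R x y z w)
    (q1 : ∀ x y z w, R x y (J1 z) (J1 w) = R x y z w)
    (q2 : ∀ x y z w, R x y (J2 z) (J2 w) = -R x y z w)
    (q3 : ∀ x y z w, R x y (J3 z) (J3 w) = -R x y z w) :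
    ∀ x y z w, R x y z w = 0 := by
  have hop : ∀ (J : V → V), (∀ x, J (J x) = -x) →
      (∀ x y z w, R x y (J z) (J w) = -R x y z w) →
      ∀ x y z w, R (J x) y z w = R x y (J z) w := by
    intro J hJJ qJ
    have m2 : ∀ x y z w, R x y (J z) w = R x y z (J w) := by
      intro x y z w
      have h := qJ x y (J z) w
      rw [hJJ z, n3] at h
      linarith
    have m2' : ∀ x y z w, R (J x) y z w = R x (J y) z w := by
      intro x y z w
      linear_combination p (J x) y z w + m2 z w x y + p z w x (J y)
    have B2 : ∀ x y z w, R x y (J z) w + R x w (J y) z + R y w (J z) x = 0 := by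
      intro x y z w
      linear_combination bi x y (J z) w + m2' y z x w - p (J y) z x w - p (J z) x y w
    have B3 : ∀ x y z w, R z w (J x) y + R x w (J y) z + R z x (J y) w = 0 := by
      intro x y z w
      linear_combination bi x (J y) z w + m2' x y z w - p (J x) y z w - p (J y) z x w
    have hC1 : ∀ x y z w, R x y (J z) w - R z w (J x) y = R z x (J y) w - R y w (J z) x := by
      intro x y z w
      linear_combination B2 x y z w - B3 x y z w
    have hopkey : ∀ x y z w, R x y (J z) w = R z w (J x) y := by
      intro x y z w
      have e1 := hC1 x y z w
      have e2 := hC1 z w x y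
      have e3a := a1 z x (J y) w
      have e3b : R y w (J z) x = -R y w (J x) z := by
        linear_combination m2 y w z x + a2 y w (J x) z
      have e4a : R x z (J w) y = -R x z (J y) w := by
        linear_combination m2 x z w y + a2 x z (J y) w
      have e4b := a1 w y (J x) z
      linarith
    intro x y z w
    linear_combination p (J x) y z w - hopkey x y z w
  have hop2 := hop J2 hJ2 q2
  have hop3 := hop J3 hJ3 q3
  have m1 : ∀ x y z w, R x y (J1 z) w = -R x y z (J1 w) := by
    intro x y z w
    have h := q1 x y (J1 z) w
    rw [hJ1 z, n3] at h
    linarith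
  have m1'' : ∀ x y z w, R (J1 x) y z w = R (J1 y) x z w := by
    intro x y z w
    linear_combination p (J1 x) y z w + m1 z w x y + p x (J1 y) z w - a1 x (J1 y) z w
  have key1 : ∀ x y z w, R x y (J1 z) w = -R (J1 x) y z w := by
    intro x y z w
    have h2 := hop2 x y (J3 z) w
    have h3 := hop3 (J2 x) y z w
    have h4 : J3 (J2 x) = -J1 x := by rw [h132 x, neg_neg]
    rw [h4, n1] at h3
    have h1 : R x y (J1 z) w = R x y (J2 (J3 z)) w := by rw [← h123]
    linarith
  have keyZero : ∀ x y z w, R (J1 x) y z w = 0 := by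
    intro a b c d
    have e1 : R a b (J1 c) d = R (J1 a) b c d := by
      linear_combination p a b (J1 c) d + m1'' c d a b + key1 d c a b - a1 d c (J1 a) b +
        p c d (J1 a) b
    have e2 := key1 a b c d
    linarith
  intro x y z w
  have h := keyZero (J1 x) y z w
  rw [hJ1 x, n1] at h
  linarith

private lemma comp_smulRight' {V : Type} [AddCommGroup V] [Module ℝ V]
    (J : V →ₗ[ℝ] V) (f : V →ₗ[ℝ] ℝ) (v : V) :
    J ∘ₗ (f.smulRight v) = f.smulRight (J v) := by
  ext z; simp

theorem stmt12
    (n : ℕ) (hn : 2 ≤ n)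
    (V : Type) [AddCommGroup V] [Module ℝ V] [FiniteDimensional ℝ V]
    (hdim : Module.finrank ℝ V = 4 * n)
    (J1 J2 J3 : V →ₗ[ℝ] V)
    (hJ1 : ∀ x, J1 (J1 x) = -x) (hJ2 : ∀ x, J2 (J2 x) = -x) (hJ3 : ∀ x, J3 (J3 x) = -x)
    (h123 : ∀ x, J1 x = J2 (J3 x)) (h132 : ∀ x, J1 x = -J3 (J2 x))
    (h231 : ∀ x, J2 x = J3 (J1 x)) (h213 : ∀ x, J2 x = -J1 (J3 x))
    (h312 : ∀ x, J3 x = J1 (J2 x)) (h321 : ∀ x, J3 x = -J2 (J1 x))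
    (g : V →ₗ[ℝ] V →ₗ[ℝ] ℝ)
    (hgsymm : ∀ x y, g x y = g y x)
    (hgnd : ∀ x, (∀ y, g x y = 0) → x = 0)
    (hgJ1 : ∀ x y, g (J1 x) (J1 y) = g x y)
    (hgJ2 : ∀ x y, g (J2 x) (J2 y) = -g x y)
    (hgJ3 : ∀ x y, g (J3 x) (J3 y) = -g x y)
    (R : V →ₗ[ℝ] V →ₗ[ℝ] V →ₗ[ℝ] V →ₗ[ℝ] ℝ)
    (hRa : ∀ x y z w, R x y z w = -R y x z w)
    (hRb : ∀ x y z w, R x y z w = -R x y w z)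
    (hRp : ∀ x y z w, R x y z w = R z w x y)
    (hRbianchi : ∀ x y z w, R x y z w + R y z x w + R z x y w = 0)
    (η : V →ₗ[ℝ] V →ₗ[ℝ] ℝ)
    (hηalt : ∀ x y, η x y = -η y x)
    (hQK1 : ∀ x y z w, R x y (J1 z) (J1 w) = R x y z w)
    (hQK2 : ∀ x y z w, R x y (J2 z) (J2 w) = -R x y z w + η x y * g (J1 z) w)
    (hQK3 : ∀ x y z w, R x y (J3 z) (J3 w) = -R x y z w + η x y * g (J1 z) w)
    (ρ : V → V → ℝ)
    (hρ : ∀ x y, ∀ A : Module.End ℝ V, (∀ z w, g (A z) w = R z x y w) → ρ x y = LinearMap.trace ℝ V A)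
    (τ : ℝ)
    (hτ : ∀ S : Module.End ℝ V, (∀ x y, g (S x) y = ρ x y) → τ = LinearMap.trace ℝ V S)
    :
    τ = 0 ↔ (∀ x y z w, R x y z w = 0) := by
  -- ######## basic twist lemmas ########
  have gneg : ∀ u v : V, g (-u) v = -g u v := by intro u v; simp
  have gJ1r : ∀ u v, g u (J1 v) = -g (J1 u) v := by
    intro u v
    have h := hgJ1 u (J1 v)
    rw [hJ1 v, map_neg] at h
    linarith [LinearMap.neg_apply (g u) v]
  have gJ2r : ∀ u v, g u (J2 v) = g (J2 u) v := by
    intro u v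
    have h := hgJ2 u (J2 v)
    rw [hJ2 v, map_neg] at h
    simpa using h.symm
  have gJ3r : ∀ u v, g u (J3 v) = g (J3 u) v := by
    intro u v
    have h := hgJ3 u (J3 v)
    rw [hJ3 v, map_neg] at h
    simpa using h.symm
  have omAlt : ∀ u v, g (J1 u) v = -g (J1 v) u := by
    intro u v
    linear_combination hgsymm (J1 u) v + gJ1r v u
  have s2symm : ∀ u v, g (J2 u) v = g (J2 v) u := by
    intro u v
    linear_combination hgsymm (J2 u) v + gJ2r v u
  have s3symm : ∀ u v, g (J3 u) v = g (J3 v) u := by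
    intro u v
    linear_combination hgsymm (J3 u) v + gJ3r v u
  have trJ1 : LinearMap.trace ℝ V J1 = 0 := by
    have c1 : J1 = J2 * J3 := by ext u; exact h123 u
    have c2 : J3 * J2 = -J1 := by
      ext u
      simp only [Module.End.mul_apply, LinearMap.neg_apply]
      rw [← neg_eq_iff_eq_neg]; exact (h132 u).symm
    have h := LinearMap.trace_mul_comm ℝ J2 J3
    rw [← c1, c2, map_neg] at h
    linarith
  have trJ2 : LinearMap.trace ℝ V J2 = 0 := by
    have c1 : J2 = J3 * J1 := by ext u; exact h231 u
    have c2 : J1 * J3 = -J2 := by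
      ext u
      simp only [Module.End.mul_apply, LinearMap.neg_apply]
      rw [← neg_eq_iff_eq_neg]; exact (h213 u).symm
    have h := LinearMap.trace_mul_comm ℝ J3 J1
    rw [← c1, c2, map_neg] at h
    linarith
  have trJ3 : LinearMap.trace ℝ V J3 = 0 := by
    have c1 : J3 = J1 * J2 := by ext u; exact h312 u
    have c2 : J2 * J1 = -J3 := by
      ext u
      simp only [Module.End.mul_apply, LinearMap.neg_apply]
      rw [← neg_eq_iff_eq_neg]; exact (h321 u).symm
    have h := LinearMap.trace_mul_comm ℝ J1 J2
    rw [← c1, c2, map_neg] at h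
    linarith
  -- composed J identities (vector level)
  have c21 : ∀ u : V, J2 (J1 u) = -J3 u := by intro u; rw [h321 u, neg_neg]
  have c12 : ∀ u : V, J1 (J2 u) = J3 u := by intro u; rw [← h312 u]
  have c13 : ∀ u : V, J1 (J3 u) = -J2 u := by intro u; rw [h213 u, neg_neg]
  have c31 : ∀ u : V, J3 (J1 u) = J2 u := by intro u; rw [← h231 u]
  have c23 : ∀ u : V, J2 (J3 u) = J1 u := by intro u; rw [← h123 u]
  have c32 : ∀ u : V, J3 (J2 u) = -J1 u := by intro u; rw [h132 u, neg_neg]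
  -- R negation lemmas
  have Rn1 : ∀ x y z w : V, R (-x) y z w = -R x y z w := by
    intro x y z w; rw [← neg_one_smul ℝ x, map_smul]; simp
  have Rn3 : ∀ x y z w : V, R x y (-z) w = -R x y z w := by intro x y z w; simp
  -- ######## Part I : moves with η ########
  -- M2 : move J2 within last pair
  have M2 : ∀ x y z w, R x y (J2 z) w = R x y z (J2 w) + η x y * g (J3 z) w := by
    intro x y z w
    have h := hQK2 x y (J2 z) w
    rw [hJ2 z, Rn3] at h
    have h2 : g (J1 (J2 z)) w = g (J3 z) w := by rw [c12]
    linear_combination h + η x y * h2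
  -- P2 : first-pair anti-invariance
  have P2 : ∀ x y z w, R (J2 x) (J2 y) z w = -R x y z w + η z w * g (J1 x) y := by
    intro x y z w
    linear_combination hRp (J2 x) (J2 y) z w + hQK2 z w x y + hRp x y z w
  -- M2' : move J2 within first pair
  have M2' : ∀ x y z w, R (J2 x) y z w = R x (J2 y) z w + η z w * g (J3 x) y := by
    intro x y z w
    linear_combination hRp (J2 x) y z w + M2 z w x y + hRp z w x (J2 y)
  -- phi identity
  have phi : ∀ x y z w, (η (J2 x) (J2 y) + η x y) * g (J1 z) w
      = (η (J2 z) (J2 w) + η z w) * g (J1 x) y := by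
    intro x y z w
    linear_combination (P2 x y z w) + (P2 x y (J2 z) (J2 w)) - (hQK2 (J2 x) (J2 y) z w)
      - (hQK2 x y z w)
  -- a vector pair with Ω ≠ 0
  have hnontriv : Nontrivial V := by
    have : 0 < Module.finrank ℝ V := by omega
    exact Module.nontrivial_of_finrank_pos this
  obtain ⟨v0, hv0⟩ := exists_ne (0 : V)
  have hex : ∃ w0, g (J1 v0) w0 ≠ 0 := by
    by_contra hc
    push_neg at hc
    have hJ1v : J1 v0 = 0 := hgnd _ hc
    apply hv0
    have := hJ1 v0
    rw [hJ1v, map_zero] at this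
    exact (neg_eq_zero.mp this.symm).symm ▸ rfl
  obtain ⟨w0, hw0⟩ := hex
  set lam : ℝ := (η (J2 v0) (J2 w0) + η v0 w0) / g (J1 v0) w0 with hlamdef
  have hV : ∀ x y, η (J2 x) (J2 y) + η x y = lam * g (J1 x) y := by
    intro x y
    rw [hlamdef, div_mul_eq_mul_div, eq_div_iff hw0]
    linear_combination phi x y v0 w0
  set k : ℝ := lam / 2 with hkdef
  have hlam2 : lam = 2 * k := by rw [hkdef]; ring
  -- twist lemmas
  have tw12 : ∀ u v : V, g (J1 u) (J2 v) = -g (J3 u) v := by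
    intro u v; rw [gJ2r, c21 u, map_neg]; simp
  have tw13 : ∀ u v : V, g (J1 u) (J3 v) = g (J2 u) v := by
    intro u v; rw [gJ3r, c31 u]
  have tw21 : ∀ u v : V, g (J2 u) (J1 v) = -g (J3 u) v := by
    intro u v; rw [gJ1r, c12 u]
  have tw23 : ∀ u v : V, g (J2 u) (J3 v) = -g (J1 u) v := by
    intro u v; rw [gJ3r, c32 u, map_neg]; simp
  have tw31 : ∀ u v : V, g (J3 u) (J1 v) = g (J2 u) v := by
    intro u v; rw [gJ1r, c13 u, map_neg]; simp
  have tw32 : ∀ u v : V, g (J3 u) (J2 v) = g (J1 u) v := by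
    intro u v; rw [gJ2r, c23 u]
  -- hVg3 : symmetric part of η(J2·,·)
  have hVg3 : ∀ a b, η (J2 a) b + η (J2 b) a = lam * g (J3 a) b := by
    intro a b
    have h := hV a (J2 b)
    rw [hJ2 b, map_neg] at h
    linear_combination -h + hηalt a (J2 b) - lam * tw12 a b
  -- ######## Part II : the loop identity ########
  have ruleA : ∀ a b c d, R (J2 a) b (J2 c) d - R (J2 c) b (J2 a) d
      = R c a b d - η b d * g (J1 c) a := by
    intro a b c d
    linear_combination hRbianchi (J2 a) b (J2 c) d - hRa b (J2 c) (J2 a) d - P2 c a b d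
  have I3 : ∀ x y z w, R x (J2 y) z (J2 w)
      = -R (J2 y) x (J2 z) w + η (J2 y) x * g (J3 z) w := by
    intro x y z w
    linear_combination hRa x (J2 y) z (J2 w) + M2 (J2 y) x z w
  have I5 : ∀ x y z w, R x (J2 y) z (J2 w) - R z (J2 y) x (J2 w)
      = R z x y w - η z x * g (J1 y) w := by
    intro x y z w
    linear_combination hRbianchi x (J2 y) z (J2 w) - hRa (J2 y) z x (J2 w) - hQK2 z x y w
  have ruleC : ∀ a b c d, R (J2 a) c (J2 b) d - R (J2 a) b (J2 c) d
      = R c b a d - η c b * g (J1 a) d - η (J2 a) b * g (J3 c) d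
        + η (J2 a) c * g (J3 b) d := by
    intro a b c d
    linear_combination I5 b a c d - I3 b a c d + I3 c a b d
  have starRaw : ∀ a b c d,
      (R c b a d - η c b * g (J1 a) d - η (J2 a) b * g (J3 c) d + η (J2 a) c * g (J3 b) d)
    + (R a c b d - η a c * g (J1 b) d - η (J2 b) c * g (J3 a) d + η (J2 b) a * g (J3 c) d)
    - (R a b c d - η a b * g (J1 c) d - η (J2 c) b * g (J3 a) d + η (J2 c) a * g (J3 b) d)
    + (R c a b d - η b d * g (J1 c) a)
    - (R b a c d - η c d * g (J1 b) a)
    + (R b c a d - η a d * g (J1 b) c) = 0 := by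
    intro a b c d
    linear_combination -(ruleC a b c d) - (ruleC b c a d) + (ruleC c b a d)
      - (ruleA a b c d) + (ruleA a c b d) - (ruleA c a b d)
  have starXi : ∀ a b c d,
      (η a b - k * g (J1 a) b) * g (J1 c) d - (η c d - k * g (J1 c) d) * g (J1 a) b
    + (η b d - k * g (J1 b) d) * g (J1 a) c - (η a c - k * g (J1 a) c) * g (J1 b) d
    + (η b c - k * g (J1 b) c) * g (J1 a) d - (η a d - k * g (J1 a) d) * g (J1 b) c
    - 2 * (η (J2 a) b - k * g (J3 a) b) * g (J3 c) d
    + 2 * (η (J2 a) c - k * g (J3 a) c) * g (J3 b) d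
    - 2 * (η (J2 b) c - k * g (J3 b) c) * g (J3 a) d = 0 := by
    intro a b c d
    linear_combination starRaw a b c d
      - hRa c b a d - hRa a c b d + hRa a b c d
      - (η c d) * (omAlt a b) + (η b d) * (omAlt a c) + (g (J1 a) d) * (hηalt b c)
      - (g (J3 c) d) * (hVg3 a b) + (g (J3 b) d) * (hVg3 a c) - (g (J3 a) d) * (hVg3 b c)
      - (g (J3 a) b * g (J3 c) d) * hlam2 + (g (J3 a) c * g (J3 b) d) * hlam2
      - (g (J3 b) c * g (J3 a) d) * hlam2
  -- ######## Part III : contraction, η = k Ω ########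
  have hnd : LinearMap.BilinForm.Nondegenerate g :=
    ⟨hgnd, fun y hy => hgnd y (fun x => (hgsymm y x).trans (hy x))⟩
  set Xeta : V →ₗ[ℝ] V := (LinearMap.BilinForm.toDual g hnd).symm.toLinearMap ∘ₗ η with hXetaDef
  have hXeta : ∀ a b, g (Xeta a) b = η a b := by
    intro a b
    exact LinearMap.BilinForm.apply_toDual_symm_apply (B := g) (hB := hnd) (η a) b
  set Y : V →ₗ[ℝ] V := Xeta - k • J1 with hYdef
  have hY : ∀ a b, g (Y a) b = η a b - k * g (J1 a) b := by
    intro a b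
    rw [hYdef]
    simp only [LinearMap.sub_apply, LinearMap.smul_apply, map_sub, map_smul, smul_eq_mul,
      LinearMap.sub_apply, hXeta]
    all_goals ring
  set s1 : ℝ := LinearMap.trace ℝ V (J1 ∘ₗ Y) with hs1def
  set s2 : ℝ := LinearMap.trace ℝ V (J1 ∘ₗ (Y ∘ₗ J2)) with hs2def
  have hJ1sq : J1 ∘ₗ J1 = -LinearMap.id := by
    ext z; simp [hJ1 z]
  have trJ1sq : LinearMap.trace ℝ V (J1 ∘ₗ J1) = -(4 * (n:ℝ)) := by
    rw [hJ1sq, map_neg, LinearMap.trace_id, hdim]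
    push_cast
    ring
  have trEq : ∀ c d, (4*(n:ℝ) - 4) * (η c d - k * g (J1 c) d)
      + g (J1 c) d * s1 - 2 * g (J3 c) d * s2 = 0 := by
    intro c d
    set F1 : V →ₗ[ℝ] V := (g (J1 c) d) • Y with hF1
    set F2 : V →ₗ[ℝ] V := (-(η c d - k * g (J1 c) d)) • J1 with hF2
    set F3 : V →ₗ[ℝ] V := (-((g.flip c) ∘ₗ J1)).smulRight (Y d) with hF3
    set F4 : V →ₗ[ℝ] V := ((g.flip c) ∘ₗ Y).smulRight (J1 d) with hF4
    set F5 : V →ₗ[ℝ] V := (-((g.flip d) ∘ₗ J1)).smulRight (Y c) with hF5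
    set F6 : V →ₗ[ℝ] V := ((g.flip d) ∘ₗ Y).smulRight (J1 c) with hF6
    set F7 : V →ₗ[ℝ] V := (-(2 * g (J3 c) d)) • (Y ∘ₗ J2) with hF7
    set F8 : V →ₗ[ℝ] V := ((2:ℝ) • ((g.flip c) ∘ₗ (Y ∘ₗ J2))).smulRight (J3 d) with hF8
    set F9 : V →ₗ[ℝ] V := ((2:ℝ) • ((g.flip d) ∘ₗ J3)).smulRight (Y (J2 c)) with hF9
    set F : V →ₗ[ℝ] V := F1 + F2 + F3 + F4 + F5 + F6 + F7 + F8 + F9 with hFdef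
    have hF0 : ∀ a b, g (F a) b = 0 := by
      intro a b
      have expand : g (F a) b
          = (g (J1 c) d) * (g (Y a) b)
          + (-(η c d - k * g (J1 c) d)) * g (J1 a) b
          + (-(g (J1 a) c)) * g (Y d) b
          + (g (Y a) c) * g (J1 d) b
          + (-(g (J1 a) d)) * g (Y c) b
          + (g (Y a) d) * g (J1 c) b
          + (-(2 * g (J3 c) d)) * g (Y (J2 a)) b
          + (2 * g (Y (J2 a)) c) * g (J3 d) b
          + (2 * g (J3 a) d) * g (Y (J2 c)) b := by
        rw [hFdef]
        simp only [LinearMap.add_apply, LinearMap.smul_apply, LinearMap.smulRight_apply,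
          LinearMap.comp_apply, LinearMap.flip_apply, LinearMap.neg_apply, map_add, map_smul,
          map_neg, smul_eq_mul, hF1, hF2, hF3, hF4, hF5, hF6, hF7, hF8, hF9]
        all_goals ring
      rw [expand]
      rw [hY a b, hY d b, hY a c, hY c b, hY a d, hY (J2 a) b, hY (J2 a) c, hY (J2 c) b]
      rw [c12 a, c12 c]
      linear_combination starXi a b c d
        - (g (J1 a) c) * (hηalt d b) + k * (g (J1 a) c) * (omAlt d b)
        + (η a c - k * g (J1 a) c) * (omAlt d b)
        - (g (J1 a) d) * (hηalt c b) + k * (g (J1 a) d) * (omAlt c b)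
        + (η a d - k * g (J1 a) d) * (omAlt c b)
        + 2 * (η (J2 a) c - k * g (J3 a) c) * (s3symm d b)
        + 2 * (g (J3 a) d) * (hVg3 b c) + 2 * (g (J3 a) d) * (g (J3 b) c) * hlam2
        - 2 * k * (g (J3 a) d) * (s3symm c b)
    have hFzero : F = 0 := by
      apply LinearMap.ext
      intro a
      simp only [LinearMap.zero_apply]
      exact hgnd _ (hF0 a)
    have htr0 : LinearMap.trace ℝ V (J1 ∘ₗ F) = 0 := by
      rw [hFzero]
      simp
    have htrsum : LinearMap.trace ℝ V (J1 ∘ₗ F)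
        = LinearMap.trace ℝ V (J1 ∘ₗ F1) + LinearMap.trace ℝ V (J1 ∘ₗ F2)
        + LinearMap.trace ℝ V (J1 ∘ₗ F3) + LinearMap.trace ℝ V (J1 ∘ₗ F4)
        + LinearMap.trace ℝ V (J1 ∘ₗ F5) + LinearMap.trace ℝ V (J1 ∘ₗ F6)
        + LinearMap.trace ℝ V (J1 ∘ₗ F7) + LinearMap.trace ℝ V (J1 ∘ₗ F8)
        + LinearMap.trace ℝ V (J1 ∘ₗ F9) := by
      rw [hFdef]
      simp only [LinearMap.comp_add, map_add]
    have t1 : LinearMap.trace ℝ V (J1 ∘ₗ F1) = g (J1 c) d * s1 := by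
      rw [hF1, LinearMap.comp_smul, map_smul, hs1def, smul_eq_mul]
    have t2 : LinearMap.trace ℝ V (J1 ∘ₗ F2) = (η c d - k * g (J1 c) d) * (4*(n:ℝ)) := by
      rw [hF2, LinearMap.comp_smul, map_smul, trJ1sq, smul_eq_mul]
      ring
    have t3 : LinearMap.trace ℝ V (J1 ∘ₗ F3) = g (Y d) c := by
      rw [hF3, comp_smulRight', trace_smulRight']
      simp only [LinearMap.neg_apply, LinearMap.comp_apply, LinearMap.flip_apply]
      rw [hJ1 (Y d)]
      simp
    have t4 : LinearMap.trace ℝ V (J1 ∘ₗ F4) = -g (Y d) c := by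
      rw [hF4, comp_smulRight', trace_smulRight']
      simp only [LinearMap.comp_apply, LinearMap.flip_apply]
      rw [hJ1 d]
      simp
    have t5 : LinearMap.trace ℝ V (J1 ∘ₗ F5) = g (Y c) d := by
      rw [hF5, comp_smulRight', trace_smulRight']
      simp only [LinearMap.neg_apply, LinearMap.comp_apply, LinearMap.flip_apply]
      rw [hJ1 (Y c)]
      simp
    have t6 : LinearMap.trace ℝ V (J1 ∘ₗ F6) = -g (Y c) d := by
      rw [hF6, comp_smulRight', trace_smulRight']
      simp only [LinearMap.comp_apply, LinearMap.flip_apply]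
      rw [hJ1 c]
      simp
    have t7 : LinearMap.trace ℝ V (J1 ∘ₗ F7) = -(2 * g (J3 c) d) * s2 := by
      rw [hF7, LinearMap.comp_smul, map_smul, hs2def, smul_eq_mul]
    have t8 : LinearMap.trace ℝ V (J1 ∘ₗ F8) = 2 * g (Y d) c := by
      rw [hF8, comp_smulRight', trace_smulRight']
      simp only [LinearMap.smul_apply, LinearMap.comp_apply, LinearMap.flip_apply, smul_eq_mul]
      rw [c13 d, map_neg, hJ2 d]
      simp
    have t9 : LinearMap.trace ℝ V (J1 ∘ₗ F9) = 2 * g (Y (J2 c)) (J2 d) := by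
      rw [hF9, comp_smulRight', trace_smulRight']
      simp only [LinearMap.smul_apply, LinearMap.comp_apply, LinearMap.flip_apply, smul_eq_mul]
      rw [c31 (Y (J2 c)), ← gJ2r (Y (J2 c)) d]
    -- final combination
    have hYdc : g (Y d) c = η d c - k * g (J1 d) c := hY d c
    have hYcd : g (Y c) d = η c d - k * g (J1 c) d := hY c d
    have hT9v : g (Y (J2 c)) (J2 d) = -(η c d - k * g (J1 c) d) := by
      rw [hY (J2 c) (J2 d), c12 c, tw32 c d]
      have := hV c d
      linear_combination this - g (J1 c) d * hlam2
    rw [htrsum, t1, t2, t3, t4, t5, t6, t7, t8, t9, hT9v] at htr0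
    linear_combination htr0 - 2 * hYdc - 2 * (hηalt c d) + 2 * k * (omAlt c d)
  -- conclude ξ = 0
  have hEta : ∀ c d, η c d = k * g (J1 c) d := by
    intro c d
    have h1 := trEq c d
    have h2 := trEq (J2 c) (J2 d)
    rw [c12 c] at h2
    have e1 : g (J3 c) (J2 d) = g (J1 c) d := tw32 c d
    have e2 : g (J3 (J2 c)) (J2 d) = g (J3 c) d := by
      rw [c32 c, map_neg]
      simp only [LinearMap.neg_apply, gneg]
      rw [tw12 c d]
      ring
    rw [e1, e2] at h2
    have e3 : η (J2 c) (J2 d) = -η c d + 2 * k * g (J1 c) d := by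
      have := hV c d
      linear_combination this - g (J1 c) d * hlam2
    rw [e3] at h2
    have hne : (4*(n:ℝ) - 4) ≠ 0 := by
      have : (2:ℝ) ≤ (n:ℝ) := by exact_mod_cast hn
      nlinarith
    have : (4*(n:ℝ) - 4) * (η c d - k * g (J1 c) d) = 0 := by linarith
    have := mul_eq_zero.mp this
    rcases this with h | h
    · exact absurd h hne
    · linarith
  -- ######## Part IV : R = -(k/4) R0 ########
  set E : V → V → V → V → ℝ := fun x y z w =>
    g y z * g x w - g x z * g y w
    + g (J1 y) z * g (J1 x) w - g (J1 x) z * g (J1 y) w - 2 * g (J1 x) y * g (J1 z) w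
    - (g (J2 y) z * g (J2 x) w - g (J2 x) z * g (J2 y) w)
    - (g (J3 y) z * g (J3 x) w - g (J3 x) z * g (J3 y) w) with hEdef
  have hEapp : ∀ x y z w, E x y z w =
    g y z * g x w - g x z * g y w
    + g (J1 y) z * g (J1 x) w - g (J1 x) z * g (J1 y) w - 2 * g (J1 x) y * g (J1 z) w
    - (g (J2 y) z * g (J2 x) w - g (J2 x) z * g (J2 y) w)
    - (g (J3 y) z * g (J3 x) w - g (J3 x) z * g (J3 y) w) := by
    intro x y z w; rw [hEdef]
  have E1 : ∀ x y z w, E x y z w = -E y x z w := by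
    intro x y z w
    rw [hEapp, hEapp]
    linear_combination (-2 * g (J1 z) w) * omAlt x y
  have E2 : ∀ x y z w, E x y z w = -E x y w z := by
    intro x y z w
    rw [hEapp, hEapp]
    linear_combination (-2 * g (J1 x) y) * omAlt z w
  have E3 : ∀ x y z w, E x y z w = E z w x y := by
    intro x y z w
    rw [hEapp, hEapp]
    linear_combination (g x w) * (hgsymm y z) + (g z y) * (hgsymm x w)
      - (g y w) * (hgsymm x z) - (g z x) * (hgsymm y w)
      + (g (J1 x) w) * (omAlt y z) - (g (J1 z) y) * (omAlt w x)
      - ((g (J1 y) w) * (omAlt x z) - (g (J1 z) x) * (omAlt w y))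
      - ((g (J2 x) w) * (s2symm y z) + (g (J2 z) y) * (s2symm x w))
      + ((g (J2 y) w) * (s2symm x z) + (g (J2 z) x) * (s2symm y w))
      - ((g (J3 x) w) * (s3symm y z) + (g (J3 z) y) * (s3symm x w))
      + ((g (J3 y) w) * (s3symm x z) + (g (J3 z) x) * (s3symm y w))
  have E4 : ∀ x y z w, E x y z w + E y z x w + E z x y w = 0 := by
    intro x y z w
    rw [hEapp, hEapp, hEapp]
    linear_combination (g x w) * (hgsymm y z) + (g y w) * (hgsymm z x) + (g z w) * (hgsymm x y)
      - (g (J1 x) w) * (omAlt y z) - (g (J1 y) w) * (omAlt x z) - (g (J1 z) w) * (omAlt x y)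
      - (g (J2 x) w) * (s2symm y z) + (g (J2 y) w) * (s2symm x z) - (g (J2 z) w) * (s2symm x y)
      - (g (J3 x) w) * (s3symm y z) + (g (J3 y) w) * (s3symm x z) - (g (J3 z) w) * (s3symm x y)
  have Eq1 : ∀ x y z w, E x y (J1 z) (J1 w) = E x y z w := by
    intro x y z w
    rw [hEapp, hEapp]
    simp only [gJ1r, gJ2r, gJ3r, c12, c21, c13, c31, c23, c32, hJ1, hJ2, hJ3, map_neg,
      LinearMap.neg_apply]
    ring
  have Eq2 : ∀ x y z w, E x y (J2 z) (J2 w) = -E x y z w - 4 * g (J1 x) y * g (J1 z) w := by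
    intro x y z w
    rw [hEapp, hEapp]
    simp only [gJ1r, gJ2r, gJ3r, c12, c21, c13, c31, c23, c32, hJ1, hJ2, hJ3, map_neg,
      LinearMap.neg_apply]
    ring
  have Eq3 : ∀ x y z w, E x y (J3 z) (J3 w) = -E x y z w - 4 * g (J1 x) y * g (J1 z) w := by
    intro x y z w
    rw [hEapp, hEapp]
    simp only [gJ1r, gJ2r, gJ3r, c12, c21, c13, c31, c23, c32, hJ1, hJ2, hJ3, map_neg,
      LinearMap.neg_apply]
    ring
  have hRform : ∀ x y z w, R x y z w = -(k/4) * E x y z w := by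
    have flat := flatAux (V := V) J1 J2 J3 hJ1 hJ2 hJ3 h123 h132
      (fun x y z w => R x y z w + (k/4) * E x y z w)
      (by intro x y z w
          linear_combination hRa x y z w + (k/4) * E1 x y z w)
      (by intro x y z w
          linear_combination hRb x y z w + (k/4) * E2 x y z w)
      (by intro x y z w
          linear_combination hRp x y z w + (k/4) * E3 x y z w)
      (by intro x y z w
          linear_combination hRbianchi x y z w + (k/4) * E4 x y z w)
      (by intro x y z w
          simp only [map_neg, LinearMap.neg_apply, hEapp, Rn1, Rn3]
          ring)
      (by intro x y z w
          simp only [map_neg, LinearMap.neg_apply, hEapp, Rn1, Rn3]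
          ring)
      (by intro x y z w
          linear_combination hQK1 x y z w + (k/4) * Eq1 x y z w)
      (by intro x y z w
          linear_combination hQK2 x y z w + (k/4) * Eq2 x y z w + (g (J1 z) w) * (hEta x y))
      (by intro x y z w
          linear_combination hQK3 x y z w + (k/4) * Eq3 x y z w + (g (J1 z) w) * (hEta x y))
    intro x y z w
    have h := flat x y z w
    linarith
  -- ######## Part V : Ricci and scalar curvature ########
  have hrho : ∀ x y, ρ x y = -(k * (n:ℝ)) * g x y := by
    intro x y
    set A : Module.End ℝ V :=
      (-(k/4)) • ( (g x y) • (LinearMap.id : Module.End ℝ V)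
        - (g.flip y).smulRight x
        + (g (J1 x) y) • J1
        - ((g.flip y) ∘ₗ J1).smulRight (J1 x)
        - (2:ℝ) • (((g.flip x) ∘ₗ J1).smulRight (J1 y))
        - (g (J2 x) y) • J2
        + ((g.flip y) ∘ₗ J2).smulRight (J2 x)
        - (g (J3 x) y) • J3
        + ((g.flip y) ∘ₗ J3).smulRight (J3 x) ) with hAdef
    have hAval : ∀ z w, g (A z) w = R z x y w := by
      intro z w
      rw [hRform z x y w, hEapp, hAdef]
      simp only [LinearMap.smul_apply, LinearMap.add_apply, LinearMap.sub_apply,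
        LinearMap.smulRight_apply, LinearMap.comp_apply, LinearMap.flip_apply,
        LinearMap.id_apply, map_smul, map_add, map_sub, map_neg, smul_eq_mul,
        LinearMap.neg_apply]
      ring
    rw [hρ x y A hAval]
    have r1 : LinearMap.trace ℝ V ((g.flip y).smulRight x) = g x y := by
      rw [trace_smulRight']; simp
    have r2 : LinearMap.trace ℝ V (((g.flip y) ∘ₗ J1).smulRight (J1 x)) = -g x y := by
      rw [trace_smulRight']
      simp only [LinearMap.comp_apply, LinearMap.flip_apply]
      rw [hJ1 x]; simp
    have r3 : LinearMap.trace ℝ V (((g.flip x) ∘ₗ J1).smulRight (J1 y)) = -g y x := by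
      rw [trace_smulRight']
      simp only [LinearMap.comp_apply, LinearMap.flip_apply]
      rw [hJ1 y]; simp
    have r4 : LinearMap.trace ℝ V (((g.flip y) ∘ₗ J2).smulRight (J2 x)) = -g x y := by
      rw [trace_smulRight']
      simp only [LinearMap.comp_apply, LinearMap.flip_apply]
      rw [hJ2 x]; simp
    have r5 : LinearMap.trace ℝ V (((g.flip y) ∘ₗ J3).smulRight (J3 x)) = -g x y := by
      rw [trace_smulRight']
      simp only [LinearMap.comp_apply, LinearMap.flip_apply]
      rw [hJ3 x]; simp
    rw [hAdef, map_smul]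
    simp only [map_add, map_sub, map_smul]
    rw [r1, r2, r3, r4, r5, LinearMap.trace_id, hdim, trJ1, trJ2, trJ3]
    simp only [smul_eq_mul]
    push_cast
    linear_combination (-(k/2)) * hgsymm y x
  have htau : τ = -(k * (n:ℝ)) * (4 * (n:ℝ)) := by
    have hSval : ∀ x y, g (((-(k * (n:ℝ))) • (LinearMap.id : Module.End ℝ V)) x) y = ρ x y := by
      intro x y
      rw [hrho x y]
      simp only [LinearMap.smul_apply, LinearMap.id_apply, map_smul, smul_eq_mul,
        LinearMap.smul_apply]
      all_goals ring
    rw [hτ _ hSval, map_smul, LinearMap.trace_id, hdim]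
    simp only [smul_eq_mul]
    push_cast
    ring
  constructor
  · intro ht0
    have hk : k = 0 := by
      have h1 : (4 * (n:ℝ) * (n:ℝ)) * k = 0 := by
        rw [htau] at ht0
        linear_combination -ht0
      have h2 : (4 * (n:ℝ) * (n:ℝ)) ≠ 0 := by
        have : (2:ℝ) ≤ (n:ℝ) := by exact_mod_cast hn
        nlinarith
      exact (mul_eq_zero.mp h1).resolve_left h2
    intro x y z w
    rw [hRform x y z w, hk]
    ring
  · intro hR0
    have hrho0 : ∀ x y, ρ x y = 0 := by
      intro x y
      have h := hρ x y 0 (by intro z w; simp [hR0 z x y w])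
      simpa using h
    have h := hτ 0 (by intro x y; simp [hrho0 x y])
    simpa using h
end

section
/- For each cyclic permutation (α,β,γ) of (1,2,3), the square norm of the bilinear map A_α(x,y) = ω_γ(x)J_βy − ω_β(x)J_γy satisfies ‖A_α‖² = 4n·(ε_β·ω_γ(Ω_γ) + ε_γ·ω_β(Ω_β)). -/
lemma aux_tr {V : Type} [AddCommGroup V] [Module ℝ V] [FiniteDimensional ℝ V]
    {ι : Type} [Fintype ι] [DecidableEq ι]
    (g : V →ₗ[ℝ] V →ₗ[ℝ] ℝ) (e f : Module.Basis ι ℝ V)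
    (hef : ∀ i j, g (f i) (e j) = if i = j then 1 else 0)
    (T : V →ₗ[ℝ] V) :
    ∑ k, g (f k) (T (e k)) = LinearMap.trace ℝ V T := by
  have hrepr : ∀ (x : V) (j : ι), e.repr x j = g (f j) x := by
    intro x j
    conv_rhs => rw [← e.sum_repr x]
    simp only [map_sum, map_smul, LinearMap.smul_apply, hef, smul_eq_mul, mul_ite, mul_one,
      mul_zero, Finset.sum_ite_eq, Finset.mem_univ, if_true]
  rw [LinearMap.trace_eq_matrix_trace ℝ e, Matrix.trace]
  simp [Matrix.diag, LinearMap.toMatrix_apply, hrepr]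

theorem stmt13
    (n : ℕ) (hn : 1 ≤ n)
    (V : Type) [AddCommGroup V] [Module ℝ V] [FiniteDimensional ℝ V]
    (hdim : Module.finrank ℝ V = 4 * n)
    (J1 J2 J3 : V →ₗ[ℝ] V)
    (hJ1 : ∀ x, J1 (J1 x) = -x) (hJ2 : ∀ x, J2 (J2 x) = -x) (hJ3 : ∀ x, J3 (J3 x) = -x)
    (h123 : ∀ x, J1 x = J2 (J3 x)) (h132 : ∀ x, J1 x = -J3 (J2 x))
    (h231 : ∀ x, J2 x = J3 (J1 x)) (h213 : ∀ x, J2 x = -J1 (J3 x))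
    (h312 : ∀ x, J3 x = J1 (J2 x)) (h321 : ∀ x, J3 x = -J2 (J1 x))
    (g : V →ₗ[ℝ] V →ₗ[ℝ] ℝ)
    (hgsymm : ∀ x y, g x y = g y x)
    (hgnd : ∀ x, (∀ y, g x y = 0) → x = 0)
    (hgJ1 : ∀ x y, g (J1 x) (J1 y) = g x y)
    (hgJ2 : ∀ x y, g (J2 x) (J2 y) = -g x y)
    (hgJ3 : ∀ x y, g (J3 x) (J3 y) = -g x y)
    (ω1 ω2 ω3 : V →ₗ[ℝ] ℝ)
    (Ω1 Ω2 Ω3 : V)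
    (hΩ1 : ∀ x, g Ω1 x = ω1 x) (hΩ2 : ∀ x, g Ω2 x = ω2 x) (hΩ3 : ∀ x, g Ω3 x = ω3 x)
    :
    ∀ (e f : Module.Basis (Fin (4 * n)) ℝ V),
      (∀ i j, g (f i) (e j) = if i = j then 1 else 0) →
      ((∑ i, ∑ k, g (ω3 (e i) • J2 (e k) - ω2 (e i) • J3 (e k))
                     (ω3 (f i) • J2 (f k) - ω2 (f i) • J3 (f k)))
          = 4 * (n : ℝ) * (-ω3 Ω3 - ω2 Ω2) ∧
       (∑ i, ∑ k, g (ω1 (e i) • J3 (e k) - ω3 (e i) • J1 (e k))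
                     (ω1 (f i) • J3 (f k) - ω3 (f i) • J1 (f k)))
          = 4 * (n : ℝ) * (-ω1 Ω1 + ω3 Ω3) ∧
       (∑ i, ∑ k, g (ω2 (e i) • J1 (e k) - ω1 (e i) • J2 (e k))
                     (ω2 (f i) • J1 (f k) - ω1 (f i) • J2 (f k)))
          = 4 * (n : ℝ) * (ω2 Ω2 - ω1 Ω1)) := by
  intro e f hef
  -- symmetry/skewness of the J's w.r.t. g
  have hs2 : ∀ x y, g (J2 x) y = g x (J2 y) := by
    intro x y
    have h := hgJ2 x (J2 y); rw [hJ2 y] at h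
    simp only [map_neg, neg_inj] at h; exact h
  have hs3 : ∀ x y, g (J3 x) y = g x (J3 y) := by
    intro x y
    have h := hgJ3 x (J3 y); rw [hJ3 y] at h
    simp only [map_neg, neg_inj] at h; exact h
  have ha1 : ∀ x y, g (J1 x) y = -g x (J1 y) := by
    intro x y
    have h := hgJ1 x (J1 y); rw [hJ1 y] at h
    simp only [map_neg] at h; linarith
  -- cross identities
  have hc23 : ∀ x y, g (J2 x) (J3 y) = g x (J1 y) := by
    intro x y; rw [hs2, ← h123]
  have hc32 : ∀ x y, g (J3 x) (J2 y) = -g x (J1 y) := by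
    intro x y
    have h : J3 (J2 y) = -(J1 y) := by rw [h132 y]; simp
    rw [hs3, h, map_neg]
  have hc31 : ∀ x y, g (J3 x) (J1 y) = g x (J2 y) := by
    intro x y; rw [hs3, ← h231]
  have hc13 : ∀ x y, g (J1 x) (J3 y) = g x (J2 y) := by
    intro x y
    have h : J1 (J3 y) = -(J2 y) := by rw [h213 y]; simp
    rw [ha1, h, map_neg, neg_neg]
  have hc12 : ∀ x y, g (J1 x) (J2 y) = -g x (J3 y) := by
    intro x y; rw [ha1, ← h312]
  have hc21 : ∀ x y, g (J2 x) (J1 y) = -g x (J3 y) := by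
    intro x y
    have h : J2 (J1 y) = -(J3 y) := by rw [h321 y]; simp
    rw [hs2, h, map_neg]
  -- traces vanish
  have hfe : ∀ i j, g (e i) (f j) = if i = j then 1 else 0 := by
    intro i j; rw [hgsymm, hef]; simp [eq_comm]
  have trsum : ∀ T : V →ₗ[ℝ] V, ∑ k, g (e k) (T (f k)) = LinearMap.trace ℝ V T :=
    fun T => aux_tr g f e hfe T
  have trJ1 : LinearMap.trace ℝ V J1 = 0 := by
    have hcomm := LinearMap.trace_mul_comm ℝ J2 J3
    have e1 : J2 * J3 = J1 := LinearMap.ext fun x => (h123 x).symm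
    have e2 : J3 * J2 = -J1 := LinearMap.ext fun x => by
      simp only [Module.End.mul_apply, LinearMap.neg_apply, h132 x, neg_neg]
    rw [e1, e2, map_neg] at hcomm; linarith
  have trJ2 : LinearMap.trace ℝ V J2 = 0 := by
    have hcomm := LinearMap.trace_mul_comm ℝ J3 J1
    have e1 : J3 * J1 = J2 := LinearMap.ext fun x => (h231 x).symm
    have e2 : J1 * J3 = -J2 := LinearMap.ext fun x => by
      simp only [Module.End.mul_apply, LinearMap.neg_apply, h213 x, neg_neg]
    rw [e1, e2, map_neg] at hcomm; linarith
  have trJ3 : LinearMap.trace ℝ V J3 = 0 := by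
    have hcomm := LinearMap.trace_mul_comm ℝ J1 J2
    have e1 : J1 * J2 = J3 := LinearMap.ext fun x => (h312 x).symm
    have e2 : J2 * J1 = -J3 := LinearMap.ext fun x => by
      simp only [Module.End.mul_apply, LinearMap.neg_apply, h321 x, neg_neg]
    rw [e1, e2, map_neg] at hcomm; linarith
  have tr1 : ∑ k, g (e k) (J1 (f k)) = 0 := by rw [trsum J1, trJ1]
  have tr2 : ∑ k, g (e k) (J2 (f k)) = 0 := by rw [trsum J2, trJ2]
  have tr3 : ∑ k, g (e k) (J3 (f k)) = 0 := by rw [trsum J3, trJ3]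
  -- ∑ g(e k, f k) = 4n
  have hsum1 : ∑ k, g (e k) (f k) = 4 * (n : ℝ) := by
    have : ∀ k : Fin (4 * n), g (e k) (f k) = 1 := by intro k; rw [hfe]; simp
    rw [Finset.sum_congr rfl fun k _ => this k]
    simp
  -- ∑ ω(e i) * ω(f i) = ω Ω
  have hΩsum : ∀ (ω : V →ₗ[ℝ] ℝ) (Ω : V), (∀ x, g Ω x = ω x) →
      ∑ i, ω (e i) * ω (f i) = ω Ω := by
    intro ω Ω hΩ
    have hrepr : ∀ j, e.repr Ω j = ω (f j) := by
      intro j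
      have : g (f j) Ω = ω (f j) := by rw [hgsymm]; exact hΩ (f j)
      rw [← this]
      conv_rhs => rw [← e.sum_repr Ω]
      simp only [map_sum, map_smul, LinearMap.smul_apply, hef, smul_eq_mul, mul_ite, mul_one,
      mul_zero, Finset.sum_ite_eq, Finset.mem_univ, if_true]
    conv_rhs => rw [← e.sum_repr Ω]
    simp only [map_sum, map_smul, smul_eq_mul, hrepr]
    exact Finset.sum_congr rfl fun i _ => mul_comm _ _
  have hΩ2s := hΩsum ω2 Ω2 hΩ2
  have hΩ3s := hΩsum ω3 Ω3 hΩ3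
  have hΩ1s := hΩsum ω1 Ω1 hΩ1
  refine ⟨?_, ?_, ?_⟩
  · have expand : ∀ i k, g (ω3 (e i) • J2 (e k) - ω2 (e i) • J3 (e k))
        (ω3 (f i) • J2 (f k) - ω2 (f i) • J3 (f k)) =
        -((ω3 (e i) * ω3 (f i) + ω2 (e i) * ω2 (f i)) * g (e k) (f k)) +
        (ω2 (e i) * ω3 (f i) - ω3 (e i) * ω2 (f i)) * g (e k) (J1 (f k)) := by
      intro i k
      simp only [map_sub, map_smul, LinearMap.sub_apply, LinearMap.smul_apply,
        smul_eq_mul, hgJ2, hgJ3, hc23, hc32]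
      ring
    rw [Finset.sum_congr rfl fun i _ => Finset.sum_congr rfl fun k _ => expand i k]
    simp only [Finset.sum_add_distrib, ← Finset.mul_sum, Finset.sum_neg_distrib, hsum1, tr1,
      mul_zero, add_zero]
    rw [← Finset.sum_mul, Finset.sum_add_distrib, hΩ3s, hΩ2s]
    ring
  · have expand : ∀ i k, g (ω1 (e i) • J3 (e k) - ω3 (e i) • J1 (e k))
        (ω1 (f i) • J3 (f k) - ω3 (f i) • J1 (f k)) =
        (-(ω1 (e i) * ω1 (f i)) + ω3 (e i) * ω3 (f i)) * g (e k) (f k) +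
        (-(ω1 (e i) * ω3 (f i)) - ω3 (e i) * ω1 (f i)) * g (e k) (J2 (f k)) := by
      intro i k
      simp only [map_sub, map_smul, LinearMap.sub_apply, LinearMap.smul_apply,
        smul_eq_mul, hgJ1, hgJ3, hc31, hc13]
      ring
    rw [Finset.sum_congr rfl fun i _ => Finset.sum_congr rfl fun k _ => expand i k]
    simp only [Finset.sum_add_distrib, ← Finset.mul_sum, hsum1, tr2, mul_zero, add_zero,
      Finset.sum_const_zero]
    rw [← Finset.sum_mul, Finset.sum_add_distrib, Finset.sum_neg_distrib, hΩ1s, hΩ3s]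
    ring
  · have expand : ∀ i k, g (ω2 (e i) • J1 (e k) - ω1 (e i) • J2 (e k))
        (ω2 (f i) • J1 (f k) - ω1 (f i) • J2 (f k)) =
        (ω2 (e i) * ω2 (f i) - ω1 (e i) * ω1 (f i)) * g (e k) (f k) +
        (ω2 (e i) * ω1 (f i) + ω1 (e i) * ω2 (f i)) * g (e k) (J3 (f k)) := by
      intro i k
      simp only [map_sub, map_smul, LinearMap.sub_apply, LinearMap.smul_apply,
        smul_eq_mul, hgJ1, hgJ2, hc12, hc21]
      ring
    rw [Finset.sum_congr rfl fun i _ => Finset.sum_congr rfl fun k _ => expand i k]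
    simp only [Finset.sum_add_distrib, ← Finset.mul_sum, hsum1, tr3, mul_zero, add_zero,
      Finset.sum_const_zero]
    rw [← Finset.sum_mul, Finset.sum_sub_distrib, hΩ2s, hΩ1s]
    ring
end

section
/- (Isotropy criterion, Proposition 2.1.) The square norms ‖A₁‖², ‖A₂‖², ‖A₃‖² of the bilinear maps A_α(x,y) = ω_γ(x)J_βy − ω_β(x)J_γy all vanish if and only if the vectors Ω₁, Ω₂, Ω₃ are isotropic with respect to g, i.e. ω₁(Ω₁) = ω₂(Ω₂) = ω₃(Ω₃) = 0. -/
set_option maxHeartbeats 1000000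


theorem stmt14
    (n : ℕ) (hn : 1 ≤ n)
    (V : Type) [AddCommGroup V] [Module ℝ V] [FiniteDimensional ℝ V]
    (hdim : Module.finrank ℝ V = 4 * n)
    (J1 J2 J3 : V →ₗ[ℝ] V)
    (hJ1 : ∀ x, J1 (J1 x) = -x) (hJ2 : ∀ x, J2 (J2 x) = -x) (hJ3 : ∀ x, J3 (J3 x) = -x)
    (h123 : ∀ x, J1 x = J2 (J3 x)) (h132 : ∀ x, J1 x = -J3 (J2 x))
    (h231 : ∀ x, J2 x = J3 (J1 x)) (h213 : ∀ x, J2 x = -J1 (J3 x))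
    (h312 : ∀ x, J3 x = J1 (J2 x)) (h321 : ∀ x, J3 x = -J2 (J1 x))
    (g : V →ₗ[ℝ] V →ₗ[ℝ] ℝ)
    (hgsymm : ∀ x y, g x y = g y x)
    (hgnd : ∀ x, (∀ y, g x y = 0) → x = 0)
    (hgJ1 : ∀ x y, g (J1 x) (J1 y) = g x y)
    (hgJ2 : ∀ x y, g (J2 x) (J2 y) = -g x y)
    (hgJ3 : ∀ x y, g (J3 x) (J3 y) = -g x y)
    (ω1 ω2 ω3 : V →ₗ[ℝ] ℝ)
    (Ω1 Ω2 Ω3 : V)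
    (hΩ1 : ∀ x, g Ω1 x = ω1 x) (hΩ2 : ∀ x, g Ω2 x = ω2 x) (hΩ3 : ∀ x, g Ω3 x = ω3 x)
    (e f : Module.Basis (Fin (4 * n)) ℝ V)
    (hdual : ∀ i j, g (f i) (e j) = if i = j then 1 else 0) :
    ((∑ i, ∑ k, g (ω3 (e i) • J2 (e k) - ω2 (e i) • J3 (e k))
                   (ω3 (f i) • J2 (f k) - ω2 (f i) • J3 (f k))) = 0 ∧
     (∑ i, ∑ k, g (ω1 (e i) • J3 (e k) - ω3 (e i) • J1 (e k))
                   (ω1 (f i) • J3 (f k) - ω3 (f i) • J1 (f k))) = 0 ∧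
     (∑ i, ∑ k, g (ω2 (e i) • J1 (e k) - ω1 (e i) • J2 (e k))
                   (ω2 (f i) • J1 (f k) - ω1 (f i) • J2 (f k))) = 0) ↔
    (ω1 Ω1 = 0 ∧ ω2 Ω2 = 0 ∧ ω3 Ω3 = 0) := by
  have hge : ∀ i j, g (e i) (f j) = if i = j then 1 else 0 := by
    intro i j
    rw [hgsymm, hdual]
    simp [eq_comm]
  -- representation lemmas
  have hrepr_e : ∀ (x : V) (i), g (f i) x = e.repr x i := by
    intro x i
    conv_lhs => rw [← e.sum_repr x]
    simp [hdual, Finset.sum_ite_eq', mul_comm, -Module.Basis.sum_repr]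
  have hrepr_f : ∀ (x : V) (i), g (e i) x = f.repr x i := by
    intro x i
    conv_lhs => rw [← f.sum_repr x]
    simp [hge, Finset.sum_ite_eq', mul_comm, -Module.Basis.sum_repr]
  -- trace lemmas
  have htr_e : ∀ (A : V →ₗ[ℝ] V), ∑ k, g (f k) (A (e k)) = LinearMap.trace ℝ V A := by
    intro A
    rw [LinearMap.trace_eq_matrix_trace ℝ e, Matrix.trace]
    simp [Matrix.diag, LinearMap.toMatrix_apply, hrepr_e]
  have htr_f : ∀ (A : V →ₗ[ℝ] V), ∑ k, g (e k) (A (f k)) = LinearMap.trace ℝ V A := by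
    intro A
    rw [LinearMap.trace_eq_matrix_trace ℝ f, Matrix.trace]
    simp [Matrix.diag, LinearMap.toMatrix_apply, hrepr_f]
  -- traces of the J's vanish
  have htrJ1 : LinearMap.trace ℝ V J1 = 0 := by
    have e1 : J1 = J2 ∘ₗ J3 := LinearMap.ext fun x => h123 x
    have e2 : J1 = -(J3 ∘ₗ J2) := LinearMap.ext fun x => by
      simpa using h132 x
    have hcomm : LinearMap.trace ℝ V (J2 ∘ₗ J3) = LinearMap.trace ℝ V (J3 ∘ₗ J2) :=
      LinearMap.trace_mul_comm ℝ J2 J3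
    have t1 := congrArg (LinearMap.trace ℝ V) e1
    have t2 := congrArg (LinearMap.trace ℝ V) e2
    rw [map_neg] at t2
    linarith
  have htrJ2 : LinearMap.trace ℝ V J2 = 0 := by
    have e1 : J2 = J3 ∘ₗ J1 := LinearMap.ext fun x => h231 x
    have e2 : J2 = -(J1 ∘ₗ J3) := LinearMap.ext fun x => by
      simpa using h213 x
    have hcomm : LinearMap.trace ℝ V (J3 ∘ₗ J1) = LinearMap.trace ℝ V (J1 ∘ₗ J3) :=
      LinearMap.trace_mul_comm ℝ J3 J1
    have t1 := congrArg (LinearMap.trace ℝ V) e1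
    have t2 := congrArg (LinearMap.trace ℝ V) e2
    rw [map_neg] at t2
    linarith
  have htrJ3 : LinearMap.trace ℝ V J3 = 0 := by
    have e1 : J3 = J1 ∘ₗ J2 := LinearMap.ext fun x => h312 x
    have e2 : J3 = -(J2 ∘ₗ J1) := LinearMap.ext fun x => by
      simpa using h321 x
    have hcomm : LinearMap.trace ℝ V (J1 ∘ₗ J2) = LinearMap.trace ℝ V (J2 ∘ₗ J1) :=
      LinearMap.trace_mul_comm ℝ J1 J2
    have t1 := congrArg (LinearMap.trace ℝ V) e1
    have t2 := congrArg (LinearMap.trace ℝ V) e2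
    rw [map_neg] at t2
    linarith
  -- pairing sums
  have hpair : ∀ (ωa ωb : V →ₗ[ℝ] ℝ) (Ωb : V), (∀ x, g Ωb x = ωb x) →
      ∑ i, ωa (e i) * ωb (f i) = ωa Ωb := by
    intro ωa ωb Ωb hΩb
    have hb : ∀ i, ωb (f i) = e.repr Ωb i := fun i => by
      rw [← hΩb, hgsymm, hrepr_e]
    conv_rhs => rw [← e.sum_repr Ωb]
    simp [hb, map_sum, mul_comm, -Module.Basis.sum_repr]
  -- diagonal J sums
  have t11 : ∑ k, g (J1 (e k)) (J1 (f k)) = (4 * n : ℝ) := by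
    have : ∀ k : Fin (4 * n), g (J1 (e k)) (J1 (f k)) = 1 := by
      intro k; rw [hgJ1, hge]; simp
    simp [this, Finset.card_univ]
  have t22 : ∑ k, g (J2 (e k)) (J2 (f k)) = -(4 * n : ℝ) := by
    have : ∀ k : Fin (4 * n), g (J2 (e k)) (J2 (f k)) = -1 := by
      intro k; rw [hgJ2, hge]; simp
    simp [this, Finset.card_univ]
  have t33 : ∑ k, g (J3 (e k)) (J3 (f k)) = -(4 * n : ℝ) := by
    have : ∀ k : Fin (4 * n), g (J3 (e k)) (J3 (f k)) = -1 := by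
      intro k; rw [hgJ3, hge]; simp
    simp [this, Finset.card_univ]
  -- cross J sums vanish
  have t23 : ∑ k, g (J2 (e k)) (J3 (f k)) = 0 := by
    have h : ∀ k : Fin (4 * n), g (J2 (e k)) (J3 (f k)) = -(g (f k) (J1 (e k))) := by
      intro k
      rw [h231 (e k), hgJ3, hgsymm]
    simp only [h]
    rw [Finset.sum_neg_distrib, htr_e J1, htrJ1, neg_zero]
  have t32 : ∑ k, g (J3 (e k)) (J2 (f k)) = 0 := by
    have h : ∀ k : Fin (4 * n), g (J3 (e k)) (J2 (f k)) = -(g (e k) (J1 (f k))) := by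
      intro k
      rw [h231 (f k), hgJ3]
    simp only [h]
    rw [Finset.sum_neg_distrib, htr_f J1, htrJ1, neg_zero]
  have t13 : ∑ k, g (J1 (e k)) (J3 (f k)) = 0 := by
    have h : ∀ k : Fin (4 * n), g (J1 (e k)) (J3 (f k)) = g (e k) (J2 (f k)) := by
      intro k
      rw [h312 (f k), hgJ1]
    simp only [h]
    rw [htr_f J2, htrJ2]
  have t31 : ∑ k, g (J3 (e k)) (J1 (f k)) = 0 := by
    have h : ∀ k : Fin (4 * n), g (J3 (e k)) (J1 (f k)) = g (f k) (J2 (e k)) := by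
      intro k
      rw [h312 (e k), hgJ1, hgsymm]
    simp only [h]
    rw [htr_e J2, htrJ2]
  have t12 : ∑ k, g (J1 (e k)) (J2 (f k)) = 0 := by
    have h : ∀ k : Fin (4 * n), g (J1 (e k)) (J2 (f k)) = -(g (e k) (J3 (f k))) := by
      intro k
      rw [h213 (f k), map_neg, hgJ1]
    simp only [h]
    rw [Finset.sum_neg_distrib, htr_f J3, htrJ3, neg_zero]
  have t21 : ∑ k, g (J2 (e k)) (J1 (f k)) = 0 := by
    have h : ∀ k : Fin (4 * n), g (J2 (e k)) (J1 (f k)) = -(g (f k) (J3 (e k))) := by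
      intro k
      rw [h213 (e k), map_neg, LinearMap.neg_apply, hgJ1, hgsymm]
    simp only [h]
    rw [Finset.sum_neg_distrib, htr_e J3, htrJ3, neg_zero]
  -- general expansion of one of the big sums
  have key : ∀ (ωa ωb : V →ₗ[ℝ] ℝ) (Ja Jb : V →ₗ[ℝ] V) (Ωa Ωb : V)
      (ca cb : ℝ),
      (∀ x, g Ωa x = ωa x) → (∀ x, g Ωb x = ωb x) →
      (∑ k, g (Ja (e k)) (Ja (f k))) = ca →
      (∑ k, g (Jb (e k)) (Jb (f k))) = cb →
      (∑ k, g (Ja (e k)) (Jb (f k))) = 0 →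
      (∑ k, g (Jb (e k)) (Ja (f k))) = 0 →
      (∑ i, ∑ k, g (ωa (e i) • Ja (e k) - ωb (e i) • Jb (e k))
                   (ωa (f i) • Ja (f k) - ωb (f i) • Jb (f k)))
        = ca * ωa Ωa + cb * ωb Ωb := by
    intro ωa ωb Ja Jb Ωa Ωb ca cb hΩa hΩb ha hb hab hba
    have expand : ∀ i k : Fin (4 * n),
        g (ωa (e i) • Ja (e k) - ωb (e i) • Jb (e k))
          (ωa (f i) • Ja (f k) - ωb (f i) • Jb (f k))
        = (ωa (e i) * ωa (f i)) * g (Ja (e k)) (Ja (f k))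
          - (ωa (e i) * ωb (f i)) * g (Ja (e k)) (Jb (f k))
          - (ωb (e i) * ωa (f i)) * g (Jb (e k)) (Ja (f k))
          + (ωb (e i) * ωb (f i)) * g (Jb (e k)) (Jb (f k)) := by
      intro i k
      simp only [map_sub, map_smul, LinearMap.sub_apply, LinearMap.smul_apply, smul_eq_mul]
      ring
    have step1 : ∀ i : Fin (4 * n),
        (∑ k, g (ωa (e i) • Ja (e k) - ωb (e i) • Jb (e k))
          (ωa (f i) • Ja (f k) - ωb (f i) • Jb (f k)))
        = (ωa (e i) * ωa (f i)) * ca - (ωb (e i) * ωb (f i)) * (-cb) := by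
      intro i
      simp only [expand]
      rw [Finset.sum_add_distrib, Finset.sum_sub_distrib, Finset.sum_sub_distrib,
        ← Finset.mul_sum, ← Finset.mul_sum, ← Finset.mul_sum, ← Finset.mul_sum,
        ha, hb, hab, hba]
      ring
    calc (∑ i, ∑ k, g (ωa (e i) • Ja (e k) - ωb (e i) • Jb (e k))
            (ωa (f i) • Ja (f k) - ωb (f i) • Jb (f k)))
        = ∑ i, ((ωa (e i) * ωa (f i)) * ca - (ωb (e i) * ωb (f i)) * (-cb)) :=
          Finset.sum_congr rfl fun i _ => step1 i
      _ = (∑ i, ωa (e i) * ωa (f i)) * ca - (∑ i, ωb (e i) * ωb (f i)) * (-cb) := by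
          rw [Finset.sum_sub_distrib, ← Finset.sum_mul, ← Finset.sum_mul]
      _ = ca * ωa Ωa + cb * ωb Ωb := by
          rw [hpair ωa ωa Ωa hΩa, hpair ωb ωb Ωb hΩb]; ring
  have hS1 := key ω3 ω2 J2 J3 Ω3 Ω2 (-(4 * n : ℝ)) (-(4 * n : ℝ)) hΩ3 hΩ2 t22 t33 t23 t32
  have hS2 := key ω1 ω3 J3 J1 Ω1 Ω3 (-(4 * n : ℝ)) ((4 * n : ℝ)) hΩ1 hΩ3 t33 t11 t31 t13
  have hS3 := key ω2 ω1 J1 J2 Ω2 Ω1 ((4 * n : ℝ)) (-(4 * n : ℝ)) hΩ2 hΩ1 t11 t22 t12 t21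
  rw [hS1, hS2, hS3]
  have h4n : (0 : ℝ) < 4 * n := by positivity
  constructor
  · rintro ⟨h1, h2, h3⟩
    have ne4 : (4 * n : ℝ) ≠ 0 := ne_of_gt h4n
    have e1 : ω3 Ω3 + ω2 Ω2 = 0 := by
      have hm : (4 * n : ℝ) * (ω3 Ω3 + ω2 Ω2) = 0 := by linarith
      rcases mul_eq_zero.mp hm with h | h
      · exact absurd h ne4
      · exact h
    have e2 : ω1 Ω1 - ω3 Ω3 = 0 := by
      have hm : (4 * n : ℝ) * (ω1 Ω1 - ω3 Ω3) = 0 := by linarith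
      rcases mul_eq_zero.mp hm with h | h
      · exact absurd h ne4
      · exact h
    have e3 : ω2 Ω2 - ω1 Ω1 = 0 := by
      have hm : (4 * n : ℝ) * (ω2 Ω2 - ω1 Ω1) = 0 := by linarith
      rcases mul_eq_zero.mp hm with h | h
      · exact absurd h ne4
      · exact h
    exact ⟨by linarith, by linarith, by linarith⟩
  · rintro ⟨h1, h2, h3⟩
    rw [h1, h2, h3]
    constructor
    · ring
    constructor <;> ring
end

section
/- For each cyclic permutation (α,β,γ) of (1,2,3), let F_α(x,y,z) := ω_γ(x)·g(J_βy,z) − ω_β(x)·g(J_γy,z). Then for every basis (e₁,…,e_{4n}) of V with g-dual basis (ẽ₁,…,ẽ_{4n}) and every z ∈ V: Σᵢ F_α(ẽᵢ, eᵢ, z) = −ε_β·ω_γ(J_βz) + ε_γ·ω_β(J_γz). -/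
theorem stmt15
    (n : ℕ) (hn : 1 ≤ n)
    (V : Type) [AddCommGroup V] [Module ℝ V] [FiniteDimensional ℝ V]
    (hdim : Module.finrank ℝ V = 4 * n)
    (J1 J2 J3 : V →ₗ[ℝ] V)
    (hJ1 : ∀ x, J1 (J1 x) = -x) (hJ2 : ∀ x, J2 (J2 x) = -x) (hJ3 : ∀ x, J3 (J3 x) = -x)
    (h123 : ∀ x, J1 x = J2 (J3 x)) (h132 : ∀ x, J1 x = -J3 (J2 x))
    (h231 : ∀ x, J2 x = J3 (J1 x)) (h213 : ∀ x, J2 x = -J1 (J3 x))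
    (h312 : ∀ x, J3 x = J1 (J2 x)) (h321 : ∀ x, J3 x = -J2 (J1 x))
    (g : V →ₗ[ℝ] V →ₗ[ℝ] ℝ)
    (hgsymm : ∀ x y, g x y = g y x)
    (hgnd : ∀ x, (∀ y, g x y = 0) → x = 0)
    (hgJ1 : ∀ x y, g (J1 x) (J1 y) = g x y)
    (hgJ2 : ∀ x y, g (J2 x) (J2 y) = -g x y)
    (hgJ3 : ∀ x y, g (J3 x) (J3 y) = -g x y)
    (ω1 ω2 ω3 : V →ₗ[ℝ] ℝ)
    :
    ∀ (e f : Module.Basis (Fin (4 * n)) ℝ V),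
      (∀ i j, g (f i) (e j) = if i = j then 1 else 0) →
      ∀ z,
        (∑ i, (ω3 (f i) * g (J2 (e i)) z - ω2 (f i) * g (J3 (e i)) z))
            = ω3 (J2 z) - ω2 (J3 z) ∧
        (∑ i, (ω1 (f i) * g (J3 (e i)) z - ω3 (f i) * g (J1 (e i)) z))
            = ω1 (J3 z) + ω3 (J1 z) ∧
        (∑ i, (ω2 (f i) * g (J1 (e i)) z - ω1 (f i) * g (J2 (e i)) z))
            = -ω2 (J1 z) - ω1 (J2 z) := by
  intro e f hdual z
  -- g(e i, w) is the i-th coordinate of w in basis f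
  have hrep : ∀ (i : Fin (4 * n)) (w : V), g (e i) w = f.repr w i := by
    intro i w
    conv_lhs => rw [← f.sum_repr w]
    rw [map_sum]
    simp only [map_smul, smul_eq_mul]
    have : ∀ j, g (e i) (f j) = if j = i then 1 else 0 := by
      intro j; rw [hgsymm, hdual]
    simp [this]
  -- trace identity
  have key : ∀ (φ : V →ₗ[ℝ] ℝ) (w : V), ∑ i, φ (f i) * g (e i) w = φ w := by
    intro φ w
    simp only [hrep]
    conv_rhs => rw [← f.sum_repr w]
    rw [map_sum]
    simp [mul_comm]
  -- symmetry of g ∘ Jα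
  have s1 : ∀ x z, g (J1 x) z = -g x (J1 z) := by
    intro x z
    have := hgJ1 x (J1 z)
    rw [hJ1 z, map_neg] at this
    linarith [this]
  have s2 : ∀ x z, g (J2 x) z = g x (J2 z) := by
    intro x z
    have := hgJ2 x (J2 z)
    rw [hJ2 z, map_neg] at this
    linarith [this]
  have s3 : ∀ x z, g (J3 x) z = g x (J3 z) := by
    intro x z
    have := hgJ3 x (J3 z)
    rw [hJ3 z, map_neg] at this
    linarith [this]
  have k1 : ∀ (φ : V →ₗ[ℝ] ℝ), ∑ i, φ (f i) * g (J1 (e i)) z = -φ (J1 z) := by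
    intro φ
    have : ∀ i, φ (f i) * g (J1 (e i)) z = -(φ (f i) * g (e i) (J1 z)) := by
      intro i; rw [s1]; ring
    rw [Finset.sum_congr rfl fun i _ => this i, Finset.sum_neg_distrib, key]
  have k2 : ∀ (φ : V →ₗ[ℝ] ℝ), ∑ i, φ (f i) * g (J2 (e i)) z = φ (J2 z) := by
    intro φ
    have : ∀ i, φ (f i) * g (J2 (e i)) z = φ (f i) * g (e i) (J2 z) := by
      intro i; rw [s2]
    rw [Finset.sum_congr rfl fun i _ => this i, key]
  have k3 : ∀ (φ : V →ₗ[ℝ] ℝ), ∑ i, φ (f i) * g (J3 (e i)) z = φ (J3 z) := by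
    intro φ
    have : ∀ i, φ (f i) * g (J3 (e i)) z = φ (f i) * g (e i) (J3 z) := by
      intro i; rw [s3]
    rw [Finset.sum_congr rfl fun i _ => this i, key]
  refine ⟨?_, ?_, ?_⟩
  · rw [Finset.sum_sub_distrib, k2, k3]
  · rw [Finset.sum_sub_distrib, k3, k1]; try ring
  · rw [Finset.sum_sub_distrib, k1, k2]; try ring
end
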